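/- arXiv:2603.08871 — 5 statements merged into one kernel-verified Lean document; each statement's English description precedes it below -/
import Mathlib

section
/- (Lemma 5.) Under the generalized Roy model, the conditional mean of the observed outcome given covariates and instrument depends on the instrument only through the propensity score: E[Y | σ(X,Z)] = E[Y | σ(X, π(X,Z))] P-almost surely. -/
open MeasureTheory ProbabilityTheory

section Aux

variable {Ω α β γ : Type*} [MeasurableSpace Ω] [StandardBorelSpace Ω] [Nonempty Ω]
  [MeasurableSpace α] [MeasurableSpace β] [MeasurableSpace γ]
  [StandardBorelSpace γ] [Nonempty γ]
  (P : Measure Ω) [IsProbabilityMeasure P]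
  (X : Ω → α) (Z : Ω → β) (W : Ω → γ)

/-- Under conditional independence of `Z` and `W` given `X`, the joint law of `((X,Z),W)` is the
composition-product of the law of `(X,Z)` with the kernel `condDistrib W X P ∘ fst`. -/
theorem measure_eq_compProd_of_condIndepFun
    (hX : Measurable X) (hZ : Measurable Z) (hW : Measurable W)
    (hCI : CondIndepFun (MeasurableSpace.comap X inferInstance) hX.comap_le Z W P) :
    P.map (fun ω => ((X ω, Z ω), W ω))
      = (P.map fun ω => (X ω, Z ω)) ⊗ₘ
        ((condDistrib W X P).comap Prod.fst measurable_fst) := by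
  set κ := condDistrib W X P with hκdef
  set T := fun ω => (X ω, Z ω) with hT
  have hTm : Measurable T := hX.prodMk hZ
  -- the key rectangle identity
  have key : ∀ (B₁ : Set α) (B₂ : Set β) (C : Set γ), MeasurableSet B₁ → MeasurableSet B₂ →
      MeasurableSet C →
      P (X ⁻¹' B₁ ∩ Z ⁻¹' B₂ ∩ W ⁻¹' C)
        = ∫⁻ ω in X ⁻¹' B₁ ∩ Z ⁻¹' B₂, κ (X ω) C ∂P := by
    intro B₁ B₂ C hB₁ hB₂ hC
    set s₁ := X ⁻¹' B₁ with hs₁def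
    set s₂ := Z ⁻¹' B₂ with hs₂def
    set s₃ := W ⁻¹' C with hs₃def
    have hs₁ : MeasurableSet s₁ := hX hB₁
    have hs₂ : MeasurableSet s₂ := hZ hB₂
    have hs₃ : MeasurableSet s₃ := hW hC
    have hs₁X : MeasurableSet[(MeasurableSpace.comap X inferInstance)] s₁ := ⟨B₁, hB₁, rfl⟩
    have hXmX : Measurable[(MeasurableSpace.comap X inferInstance)] X := Measurable.of_comap_le le_rfl
    set c : Ω → ℝ := fun ω => (κ (X ω) C).toReal with hc
    have hcm : StronglyMeasurable[(MeasurableSpace.comap X inferInstance)] c :=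
      (((Kernel.measurable_coe κ hC).comp hXmX).ennreal_toReal).stronglyMeasurable
    have hc01 : ∀ ω, 0 ≤ c ω ∧ c ω ≤ 1 := fun ω =>
      ⟨ENNReal.toReal_nonneg, by
        simpa using ENNReal.toReal_mono (by simp) (prob_le_one (μ := κ (X ω)) (s := C))⟩
    have hce : c =ᵐ[P] P⟦s₃ | (MeasurableSpace.comap X inferInstance)⟧ := condDistrib_ae_eq_condExp hX hW hC
    have hCI' := (condIndepFun_iff_condExp_inter_preimage_eq_mul hZ hW).mp hCI B₂ C hB₂ hC
    set I₁ : Ω → ℝ := s₁.indicator (fun _ => (1:ℝ)) with hI₁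
    set I₂ : Ω → ℝ := s₂.indicator (fun _ => (1:ℝ)) with hI₂
    set J : Ω → ℝ := (s₂ ∩ s₃).indicator (fun _ => (1:ℝ)) with hJ
    have hI₁m : StronglyMeasurable[(MeasurableSpace.comap X inferInstance)] I₁ := stronglyMeasurable_const.indicator hs₁X
    have hIle : ∀ (s : Set Ω) ω, ‖s.indicator (fun _ => (1:ℝ)) ω‖ ≤ 1 := by
      intro s ω; by_cases h : ω ∈ s <;> simp [Set.indicator_apply, h]
    have hbdd_int : ∀ (f : Ω → ℝ), AEStronglyMeasurable f P → (∀ ω, ‖f ω‖ ≤ 1) →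
        Integrable f P := fun f hfm hfb =>
      (integrable_const (1:ℝ)).mono' hfm (Filter.Eventually.of_forall hfb)
    have hJint : Integrable J P := (integrable_const (1:ℝ)).indicator (hs₂.inter hs₃)
    have hI₂int : Integrable I₂ P := (integrable_const (1:ℝ)).indicator hs₂
    -- LHS real computation
    have hLHS : (P (s₁ ∩ s₂ ∩ s₃)).toReal
        = ∫ ω, I₁ ω * ((P⟦s₂ | (MeasurableSpace.comap X inferInstance)⟧) ω * c ω) ∂P := by
      have h0 : (P (s₁ ∩ s₂ ∩ s₃)).toReal
          = ∫ ω, (I₁ * J) ω ∂P := by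
        rw [Set.inter_assoc]
        rw [← measureReal_def, ← integral_indicator_one (hs₁.inter (hs₂.inter hs₃))]
        congr 1
        funext ω
        simp only [Pi.mul_apply, hI₁, hJ, Set.indicator_apply, Set.mem_inter_iff]
        by_cases h1 : ω ∈ s₁ <;> by_cases h2 : ω ∈ s₂ ∩ s₃ <;>
          simp [h1, h2, Set.mem_inter_iff] at * <;> simp [h1, h2]
      have hfg_int : Integrable (I₁ * J) P := by
        refine hbdd_int _ ((hI₁m.mono hX.comap_le).aestronglyMeasurable.mul hJint.1) fun ω => ?_
        simp only [Pi.mul_apply, norm_mul]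
        calc ‖I₁ ω‖ * ‖J ω‖ ≤ 1 * 1 :=
              mul_le_mul (hIle _ _) (hIle _ _) (norm_nonneg _) zero_le_one
          _ = 1 := by ring
      have h1 : ∫ ω, (I₁ * J) ω ∂P = ∫ ω, (P[I₁ * J | (MeasurableSpace.comap X inferInstance)]) ω ∂P :=
        (integral_condExp hX.comap_le).symm
      have h2 : P[I₁ * J | (MeasurableSpace.comap X inferInstance)] =ᵐ[P] I₁ * P[J | (MeasurableSpace.comap X inferInstance)] :=
        condExp_mul_of_stronglyMeasurable_left hI₁m hfg_int hJint
      rw [h0, h1, integral_congr_ae h2]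
      refine integral_congr_ae ?_
      filter_upwards [hCI', hce] with ω h₁ h₂
      simp only [Pi.mul_apply]
      rw [h₁, ← h₂]
    -- RHS real computation
    have hcmeas : Measurable fun ω => κ (X ω) C := (Kernel.measurable_coe κ hC).comp hX
    have hRHS : (∫⁻ ω in s₁ ∩ s₂, κ (X ω) C ∂P).toReal
        = ∫ ω, I₁ ω * ((P⟦s₂ | (MeasurableSpace.comap X inferInstance)⟧) ω * c ω) ∂P := by
      have h0 : (∫⁻ ω in s₁ ∩ s₂, κ (X ω) C ∂P).toReal = ∫ ω in s₁ ∩ s₂, c ω ∂P := by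
        rw [← integral_toReal (hcmeas.aemeasurable.restrict)
          (Filter.Eventually.of_forall fun ω => measure_lt_top _ _)]
      have h1 : ∫ ω in s₁ ∩ s₂, c ω ∂P = ∫ ω, ((fun ω => I₁ ω * c ω) * I₂) ω ∂P := by
        rw [← integral_indicator (hs₁.inter hs₂)]
        refine integral_congr_ae (Filter.Eventually.of_forall fun ω => ?_)
        simp only [Pi.mul_apply, hI₁, hI₂, Set.indicator_apply, Set.mem_inter_iff]
        by_cases h1 : ω ∈ s₁ <;> by_cases h2 : ω ∈ s₂ <;> simp [h1, h2]
      have hFm : StronglyMeasurable[(MeasurableSpace.comap X inferInstance)] (fun ω => I₁ ω * c ω) := hI₁m.mul hcm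
      have hfg_int : Integrable ((fun ω => I₁ ω * c ω) * I₂) P := by
        refine hbdd_int _ (((hFm.mono hX.comap_le).aestronglyMeasurable).mul hI₂int.1) fun ω => ?_
        simp only [Pi.mul_apply, norm_mul]
        have hcω := hc01 ω
        calc ‖I₁ ω‖ * ‖c ω‖ * ‖I₂ ω‖ ≤ 1 * 1 * 1 := by
              refine mul_le_mul (mul_le_mul (hIle _ _) ?_ (norm_nonneg _) zero_le_one)
                (hIle _ _) (norm_nonneg _) (by norm_num)
              rw [Real.norm_eq_abs, abs_of_nonneg hcω.1]; exact hcω.2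
          _ = 1 := by ring
      have h2 : ∫ ω, ((fun ω => I₁ ω * c ω) * I₂) ω ∂P
          = ∫ ω, (P[(fun ω => I₁ ω * c ω) * I₂ | (MeasurableSpace.comap X inferInstance)]) ω ∂P :=
        (integral_condExp hX.comap_le).symm
      have h3 : P[(fun ω => I₁ ω * c ω) * I₂ | (MeasurableSpace.comap X inferInstance)]
          =ᵐ[P] (fun ω => I₁ ω * c ω) * P[I₂ | (MeasurableSpace.comap X inferInstance)] :=
        condExp_mul_of_stronglyMeasurable_left hFm hfg_int hI₂int
      rw [h0, h1, h2, integral_congr_ae h3]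
      refine integral_congr_ae (Filter.Eventually.of_forall fun ω => ?_)
      simp only [Pi.mul_apply]
      ring
    -- combine
    have hfin₁ : P (s₁ ∩ s₂ ∩ s₃) ≠ ⊤ := measure_ne_top _ _
    have hfin₂ : (∫⁻ ω in s₁ ∩ s₂, κ (X ω) C ∂P) ≠ ⊤ := by
      refine ne_top_of_le_ne_top (measure_ne_top P (s₁ ∩ s₂)) ?_
      calc ∫⁻ ω in s₁ ∩ s₂, κ (X ω) C ∂P ≤ ∫⁻ _ in s₁ ∩ s₂, 1 ∂P :=
            lintegral_mono fun ω => prob_le_one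
        _ = P (s₁ ∩ s₂) := by simp
    exact (ENNReal.toReal_eq_toReal_iff' hfin₁ hfin₂).mp (hLHS.trans hRHS.symm)
  -- now the measure extension argument
  have hpairm : Measurable fun ω => (T ω, W ω) := hTm.prodMk hW
  haveI : IsProbabilityMeasure (P.map fun ω => (T ω, W ω)) :=
    Measure.isProbabilityMeasure_map hpairm.aemeasurable
  haveI : IsProbabilityMeasure (P.map T) := Measure.isProbabilityMeasure_map hTm.aemeasurable
  refine ext_of_generate_finite _ generateFrom_prod.symm isPiSystem_prod ?_ ?_
  · rintro _ ⟨D, hD, C, hC, rfl⟩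
    simp only [Set.mem_setOf_eq] at hD hC
    -- inner extension over D
    have hcm2 : Measurable fun q : α × β => κ q.1 C := (Kernel.measurable_coe κ hC).comp
      measurable_fst
    have inner : ∀ (D : Set (α × β)), MeasurableSet D →
        P (T ⁻¹' D ∩ W ⁻¹' C) = ∫⁻ q in D, κ q.1 C ∂(P.map T) := by
      intro D hD
      have h₁ : ∀ (D : Set (α × β)), MeasurableSet D →
          ((P.restrict (W ⁻¹' C)).map T) D = P (T ⁻¹' D ∩ W ⁻¹' C) := by
        intro D hD
        rw [Measure.map_apply hTm hD, Measure.restrict_apply (hTm hD)]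
      have h₂ : ∀ (D : Set (α × β)), MeasurableSet D →
          ((P.map T).withDensity fun q => κ q.1 C) D = ∫⁻ q in D, κ q.1 C ∂(P.map T) := by
        intro D hD
        rw [withDensity_apply _ hD]
      have hrect : ∀ (B₁ : Set α) (B₂ : Set β), MeasurableSet B₁ → MeasurableSet B₂ →
          ((P.restrict (W ⁻¹' C)).map T) (B₁ ×ˢ B₂)
            = ((P.map T).withDensity fun q => κ q.1 C) (B₁ ×ˢ B₂) := by
        intro B₁ B₂ hB₁ hB₂
        have hpre : T ⁻¹' (B₁ ×ˢ B₂) = X ⁻¹' B₁ ∩ Z ⁻¹' B₂ := by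
          ext ω; simp [hT, Set.mem_prod]
        rw [h₁ _ (hB₁.prod hB₂), h₂ _ (hB₁.prod hB₂),
          setLIntegral_map (hB₁.prod hB₂) hcm2 hTm, hpre,
          key B₁ B₂ C hB₁ hB₂ hC]
      have hmeq : ((P.restrict (W ⁻¹' C)).map T)
          = ((P.map T).withDensity fun q => κ q.1 C) := by
        refine ext_of_generate_finite _ generateFrom_prod.symm isPiSystem_prod ?_ ?_
        · rintro _ ⟨B₁, hB₁, B₂, hB₂, rfl⟩
          exact hrect B₁ B₂ hB₁ hB₂
        · have := hrect Set.univ Set.univ MeasurableSet.univ MeasurableSet.univ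
          simpa [Set.univ_prod_univ] using this
      rw [← h₁ _ hD, ← h₂ _ hD, hmeq]
    rw [Measure.map_apply hpairm (hD.prod hC)]
    have hpre : (fun ω => (T ω, W ω)) ⁻¹' (D ×ˢ C) = T ⁻¹' D ∩ W ⁻¹' C := by
      ext ω; simp [Set.mem_prod]
    rw [hpre, inner D hD, Measure.compProd_apply_prod hD hC]
    refine lintegral_congr fun q => ?_
    rw [Kernel.comap_apply]
  · simp
end Aux

/-- Lemma 5: under the generalized Roy model,
`E[Y | σ(X,Z)] = E[Y | σ(X, π(X,Z))]` `P`-almost surely. -/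
theorem roy_condexp_outcome_through_propensity
    {Ω : Type*} [MeasurableSpace Ω] [StandardBorelSpace Ω] [Nonempty Ω]
    (P : Measure Ω) [IsProbabilityMeasure P]
    {k : ℕ} (X : Ω → (Fin k → ℝ)) (Z V Y0 Y1 : Ω → ℝ)
    (hX : Measurable X) (hZ : Measurable Z) (hV : Measurable V)
    (hY0m : Measurable Y0) (hY1m : Measurable Y1)
    (hY0int : Integrable Y0 P) (hY1int : Integrable Y1 P)
    (pi : (Fin k → ℝ) × ℝ → ℝ) (hpi : Measurable pi)
    (hpi01 : ∀ q, pi q ∈ Set.Icc (0:ℝ) 1)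
    (A : Ω → ℝ) (hA : A = fun ω => if pi (X ω, Z ω) > V ω then (1:ℝ) else 0)
    (Y : Ω → ℝ) (hY : Y = fun ω => A ω * Y1 ω + (1 - A ω) * Y0 ω)
    (hCI : CondIndepFun (MeasurableSpace.comap X inferInstance) hX.comap_le Z
      (fun ω => (Y0 ω, Y1 ω, V ω)) P)
    (hUnif : ∀ᵐ x ∂(P.map X),
      condDistrib V X P x = volume.restrict (Set.Icc (0:ℝ) 1)) :
    P[Y | MeasurableSpace.comap (fun ω => (X ω, Z ω)) inferInstance]
      =ᵐ[P]
    P[Y | MeasurableSpace.comap (fun ω => (X ω, pi (X ω, Z ω))) inferInstance] := by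
  set W : Ω → ℝ × ℝ × ℝ := fun ω => (Y0 ω, Y1 ω, V ω) with hWdef
  have hW : Measurable W := hY0m.prodMk (hY1m.prodMk hV)
  set T : Ω → (Fin k → ℝ) × ℝ := fun ω => (X ω, Z ω) with hTdef
  have hTm : Measurable T := hX.prodMk hZ
  set κ := condDistrib W X P with hκdef
  have hmT : MeasurableSpace.comap (fun ω => (X ω, Z ω)) inferInstance ≤ ‹MeasurableSpace Ω› := hTm.comap_le
  -- the outcome as a function of ((X,Z),W)
  set F : (((Fin k → ℝ) × ℝ) × (ℝ × ℝ × ℝ)) → ℝ :=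
    fun p => if p.2.2.2 < pi p.1 then p.2.2.1 else p.2.1 with hFdef
  have hFm : Measurable F := by
    refine Measurable.ite ?_ ?_ ?_
    · exact measurableSet_lt (measurable_snd.comp (measurable_snd.comp measurable_snd))
        (hpi.comp measurable_fst)
    · exact measurable_fst.comp (measurable_snd.comp measurable_snd)
    · exact measurable_fst.comp measurable_snd
  have hYeq : Y = fun ω => F (T ω, W ω) := by
    funext ω
    rw [hY, hA, hFdef]
    by_cases h : V ω < pi (X ω, Z ω)
    · simp only [gt_iff_lt, if_pos h, hWdef, hTdef]; ring
    · simp only [gt_iff_lt, if_neg h, hWdef, hTdef]; ring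
  -- integrability of Y
  have hS : MeasurableSet {ω | V ω < pi (X ω, Z ω)} :=
    measurableSet_lt hV (hpi.comp (hX.prodMk hZ))
  have hYint : Integrable Y P := by
    have h : Y = {ω | V ω < pi (X ω, Z ω)}.indicator Y1
        + ({ω | V ω < pi (X ω, Z ω)}ᶜ).indicator Y0 := by
      funext ω
      rw [hYeq]
      by_cases h : V ω < pi (X ω, Z ω)
      · simp [hFdef, hWdef, hTdef, h, Set.indicator_of_mem, Set.indicator_of_notMem, Set.mem_setOf_eq]
      · simp [hFdef, hWdef, hTdef, h, Set.indicator_of_mem, Set.indicator_of_notMem, Set.mem_setOf_eq]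
    rw [h]
    exact (hY1int.indicator hS).add (hY0int.indicator hS.compl)
  -- Step A: conditional expectation via condDistrib of W given (X,Z)
  have hstepA : P[Y | (MeasurableSpace.comap (fun ω => (X ω, Z ω)) inferInstance)] =ᵐ[P]
      fun ω => ∫ w, F (T ω, w) ∂(condDistrib W T P (T ω)) := by
    have hYint' : Integrable (fun ω => F (T ω, W ω)) P := by rw [← hYeq]; exact hYint
    have := condExp_prod_ae_eq_integral_condDistrib (μ := P) hTm hW.aemeasurable
      hFm.stronglyMeasurable hYint'
    rw [hYeq]
    exact this
  -- Step B: replace condDistrib of W given (X,Z) by the one given X, using cond. independence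
  have hswap : ∀ᵐ ω ∂P, condDistrib W T P (T ω) = κ (X ω) := by
    have hcomp := measure_eq_compProd_of_condIndepFun P X Z W hX hZ hW hCI
    have h := condDistrib_ae_eq_of_measure_eq_compProd (μ := P) T hW.aemeasurable
      (κ := κ.comap Prod.fst measurable_fst) hcomp
    have h' := ae_of_ae_map hTm.aemeasurable h
    filter_upwards [h'] with ω hω
    rw [hω, Kernel.comap_apply]
  have hstepB : P[Y | (MeasurableSpace.comap (fun ω => (X ω, Z ω)) inferInstance)] =ᵐ[P] fun ω => ∫ w, F (T ω, w) ∂(κ (X ω)) := by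
    filter_upwards [hstepA, hswap] with ω h₁ h₂
    rw [h₁, h₂]
  -- the factored function
  set h : ((Fin k → ℝ) × ℝ) → ℝ :=
    fun q => ∫ w : ℝ × ℝ × ℝ, (if w.2.2 < q.2 then w.2.1 else w.1) ∂(κ q.1) with hhdef
  have hgeq : (fun ω => ∫ w, F (T ω, w) ∂(κ (X ω)))
      = fun ω => h (X ω, pi (X ω, Z ω)) := rfl
  have hhm : StronglyMeasurable h := by
    have huncurry : StronglyMeasurable (Function.uncurry
        (fun (q : (Fin k → ℝ) × ℝ) (w : ℝ × ℝ × ℝ) =>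
          (if w.2.2 < q.2 then w.2.1 else w.1))) := by
      refine (Measurable.ite ?_ ?_ ?_).stronglyMeasurable
      · exact measurableSet_lt (measurable_snd.comp (measurable_snd.comp measurable_snd))
          (measurable_snd.comp measurable_fst)
      · exact measurable_fst.comp (measurable_snd.comp measurable_snd)
      · exact measurable_fst.comp measurable_snd
    have := huncurry.integral_kernel_prod_right (κ := κ.comap Prod.fst measurable_fst)
    simpa [Kernel.comap_apply] using this
  have h1 : P[Y | (MeasurableSpace.comap (fun ω => (X ω, Z ω)) inferInstance)] =ᵐ[P]
      (fun ω => h (X ω, pi (X ω, Z ω))) := by rw [← hgeq]; exact hstepB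
  have hm21 : (MeasurableSpace.comap (fun ω => (X ω, pi (X ω, Z ω))) inferInstance) ≤ (MeasurableSpace.comap (fun ω => (X ω, Z ω)) inferInstance) := by
    have hUc : (fun ω => (X ω, pi (X ω, Z ω)))
        = (fun q : (Fin k → ℝ) × ℝ => (q.1, pi q)) ∘ (fun ω => (X ω, Z ω)) := rfl
    rw [hUc, ← MeasurableSpace.comap_comp]
    exact MeasurableSpace.comap_mono (measurable_fst.prodMk hpi).comap_le
  have hgm2 : StronglyMeasurable[(MeasurableSpace.comap (fun ω => (X ω, pi (X ω, Z ω))) inferInstance)] (fun ω => h (X ω, pi (X ω, Z ω))) := by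
    have hUmeas : Measurable[(MeasurableSpace.comap (fun ω => (X ω, pi (X ω, Z ω))) inferInstance)] (fun ω => (X ω, pi (X ω, Z ω))) :=
      Measurable.of_comap_le le_rfl
    exact hhm.comp_measurable hUmeas
  have hgint : Integrable (fun ω => h (X ω, pi (X ω, Z ω))) P := integrable_condExp.congr h1
  have h2 : P[(fun ω => h (X ω, pi (X ω, Z ω))) | (MeasurableSpace.comap (fun ω => (X ω, pi (X ω, Z ω))) inferInstance)] =ᵐ[P] (fun ω => h (X ω, pi (X ω, Z ω))) :=
    condExp_of_aestronglyMeasurable' (hm21.trans hmT) hgm2.aestronglyMeasurable hgint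
  calc P[Y | (MeasurableSpace.comap (fun ω => (X ω, Z ω)) inferInstance)]
      =ᵐ[P] (fun ω => h (X ω, pi (X ω, Z ω))) := h1
    _ =ᵐ[P] P[(fun ω => h (X ω, pi (X ω, Z ω))) | (MeasurableSpace.comap (fun ω => (X ω, pi (X ω, Z ω))) inferInstance)] := h2.symm
    _ =ᵐ[P] P[P[Y | (MeasurableSpace.comap (fun ω => (X ω, Z ω)) inferInstance)] | (MeasurableSpace.comap (fun ω => (X ω, pi (X ω, Z ω))) inferInstance)] := condExp_congr_ae h1.symm
    _ =ᵐ[P] P[Y | (MeasurableSpace.comap (fun ω => (X ω, pi (X ω, Z ω))) inferInstance)] := condExp_condExp_of_le hm21 hmT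
end

section
/- Under the generalized Roy model, suppose e₁ : ℝ^k × ℝ → ℝ is measurable with e₁(X,V) a version of E[Y₁ | σ(X,V)], and A·Y₁ is integrable. Then the conditional mean of the treated contribution to the observed outcome is the integral of the conditional outcome mean over the selected range of unobserved heterogeneity: E[A·Y₁ | σ(X,Z)] = ∫₀^{π(X,Z)} e₁(X, v) dv P-almost surely. -/
open MeasureTheory ProbabilityTheory Set

lemma roy_condDistrib_prod_eq
    {Ω α γ δ : Type*} [MeasurableSpace Ω] [StandardBorelSpace Ω] [Nonempty Ω]
    [MeasurableSpace α] [MeasurableSpace γ] [MeasurableSpace δ]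
    [StandardBorelSpace δ] [Nonempty δ]
    (P : Measure Ω) [IsProbabilityMeasure P]
    (X : Ω → α) (Z : Ω → γ) (T : Ω → δ)
    (hX : Measurable X) (hZ : Measurable Z) (hT : Measurable T)
    (hCI : CondIndepFun (MeasurableSpace.comap X inferInstance) hX.comap_le Z T P) :
    ∀ᵐ p ∂(P.map fun ω => (X ω, Z ω)),
      condDistrib T (fun ω => (X ω, Z ω)) P p = condDistrib T X P p.1 := by
  set W : Ω → α × γ := fun ω => (X ω, Z ω) with hW_def
  have hW : Measurable W := hX.prodMk hZ
  set κT := condDistrib T X P with hκT_def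
  -- the key conditional-independence computation
  have key : ∀ (t : Set δ), MeasurableSet t → ∀ (B₁ : Set α), MeasurableSet B₁ →
      ∀ (s : Set γ), MeasurableSet s →
      ∫⁻ ω in X ⁻¹' B₁ ∩ Z ⁻¹' s, κT (X ω) t ∂P
        = P (X ⁻¹' B₁ ∩ Z ⁻¹' s ∩ T ⁻¹' t) := by
    intro t ht B₁ hB₁ s hs
    have hg_meas : Measurable fun ω => κT (X ω) t := (Kernel.measurable_coe _ ht).comp hX
    have hgR_int : Integrable (fun ω => (κT (X ω) t).toReal) P :=
      integrable_toReal_condDistrib hX.aemeasurable ht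
    have hSmeas : MeasurableSet (X ⁻¹' B₁ ∩ Z ⁻¹' s) := (hX hB₁).inter (hZ hs)
    have hf_sm : StronglyMeasurable[MeasurableSpace.comap X inferInstance]
        fun ω => (κT (X ω) t).toReal :=
      (@Measurable.ennreal_toReal _ (MeasurableSpace.comap X inferInstance) _
        (measurable_condDistrib ht)).stronglyMeasurable
    have hind_int : Integrable ((Z ⁻¹' s).indicator fun _ => (1 : ℝ)) P :=
      (integrable_const _).indicator (hZ hs)
    have hprod_eq : ((fun ω => (κT (X ω) t).toReal) * (Z ⁻¹' s).indicator fun _ => (1 : ℝ))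
        = (Z ⁻¹' s).indicator fun ω => (κT (X ω) t).toReal := by
      funext ω
      by_cases h : ω ∈ Z ⁻¹' s <;> simp [Set.indicator_apply, h]
    have hprod_int : Integrable
        ((fun ω => (κT (X ω) t).toReal) * (Z ⁻¹' s).indicator fun _ => (1 : ℝ)) P := by
      rw [hprod_eq]; exact hgR_int.indicator (hZ hs)
    have hmul := condExp_mul_of_stronglyMeasurable_left (μ := P) hf_sm hprod_int hind_int
    have hcond := condDistrib_ae_eq_condExp (μ := P) hX hT ht
    have hCImul := (condIndepFun_iff_condExp_inter_preimage_eq_mul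
      (hm' := hX.comap_le) hZ hT).mp hCI s t hs ht
    -- real-valued computation
    have hreal : ∫ ω in X ⁻¹' B₁ ∩ Z ⁻¹' s, (κT (X ω) t).toReal ∂P
        = (P (X ⁻¹' B₁ ∩ Z ⁻¹' s ∩ T ⁻¹' t)).toReal := by
      have h1 : ∫ ω in X ⁻¹' B₁ ∩ Z ⁻¹' s, (κT (X ω) t).toReal ∂P
          = ∫ ω in X ⁻¹' B₁,
              ((Z ⁻¹' s).indicator fun ω => (κT (X ω) t).toReal) ω ∂P := by
        rw [setIntegral_indicator (hZ hs)]
      rw [h1]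
      have h2 : ∫ ω in X ⁻¹' B₁,
            ((Z ⁻¹' s).indicator fun ω => (κT (X ω) t).toReal) ω ∂P
          = ∫ ω in X ⁻¹' B₁,
              (P[(fun ω => (κT (X ω) t).toReal) * (Z ⁻¹' s).indicator fun _ => (1:ℝ)
                | MeasurableSpace.comap X inferInstance]) ω ∂P := by
        rw [← hprod_eq]
        exact (setIntegral_condExp hX.comap_le hprod_int ⟨B₁, hB₁, rfl⟩).symm
      rw [h2]
      have h3 : (P[(fun ω => (κT (X ω) t).toReal) * (Z ⁻¹' s).indicator fun _ => (1:ℝ)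
            | MeasurableSpace.comap X inferInstance])
          =ᵐ[P] P[((Z ⁻¹' s) ∩ (T ⁻¹' t)).indicator fun _ => (1:ℝ)
            | MeasurableSpace.comap X inferInstance] := by
        refine hmul.trans ?_
        have : (fun ω => (κT (X ω) t).toReal) *
              (P[(Z ⁻¹' s).indicator fun _ => (1:ℝ) | MeasurableSpace.comap X inferInstance])
            =ᵐ[P] fun ω =>
              (P[(Z ⁻¹' s).indicator fun _ => (1:ℝ) | MeasurableSpace.comap X inferInstance]) ω *
              (P[(T ⁻¹' t).indicator fun _ => (1:ℝ) | MeasurableSpace.comap X inferInstance]) ω := by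
          filter_upwards [hcond] with ω hω
          simp only [Pi.mul_apply, ← measureReal_def]
          rw [hω, mul_comm]
        exact this.trans hCImul.symm
      rw [integral_congr_ae (ae_restrict_of_ae h3)]
      rw [setIntegral_condExp hX.comap_le ((integrable_const _).indicator ((hZ hs).inter (hT ht)))
        ⟨B₁, hB₁, rfl⟩]
      rw [setIntegral_indicator ((hZ hs).inter (hT ht))]
      simp [Measure.restrict_apply, ((hZ hs).inter (hT ht)), Set.inter_assoc, measureReal_def]
    -- lift to lintegral
    have hlhs : ∫ ω in X ⁻¹' B₁ ∩ Z ⁻¹' s, (κT (X ω) t).toReal ∂P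
        = (∫⁻ ω in X ⁻¹' B₁ ∩ Z ⁻¹' s, κT (X ω) t ∂P).toReal :=
      integral_toReal (hg_meas.aemeasurable.restrict)
        (Filter.Eventually.of_forall fun ω => measure_lt_top _ _)
    have hfin1 : ∫⁻ ω in X ⁻¹' B₁ ∩ Z ⁻¹' s, κT (X ω) t ∂P ≠ ⊤ := by
      refine ne_of_lt (lt_of_le_of_lt (le_trans
        (lintegral_mono fun ω => (prob_le_one : κT (X ω) t ≤ 1)) (by simp))
        (measure_lt_top P (X ⁻¹' B₁ ∩ Z ⁻¹' s)))
    have := hreal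
    rw [hlhs] at this
    exact (ENNReal.toReal_eq_toReal_iff' hfin1 (measure_ne_top P _)).mp this
  -- inner extension: all measurable B
  have inner : ∀ (t : Set δ), MeasurableSet t → ∀ (B : Set (α × γ)), MeasurableSet B →
      ∫⁻ ω in W ⁻¹' B, κT (X ω) t ∂P = P (W ⁻¹' B ∩ T ⁻¹' t) := by
    intro t ht
    have hκmeas : Measurable fun p : α × γ => κT p.1 t :=
      (Kernel.measurable_coe _ ht).comp measurable_fst
    set ν₁ : Measure (α × γ) := (P.restrict (T ⁻¹' t)).map W with hν₁
    set ν₂ : Measure (α × γ) := (P.map W).withDensity (fun p => κT p.1 t) with hν₂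
    have hν₁_apply : ∀ B : Set (α × γ), MeasurableSet B → ν₁ B = P (W ⁻¹' B ∩ T ⁻¹' t) := by
      intro B hB
      rw [hν₁, Measure.map_apply hW hB, Measure.restrict_apply (hW hB)]
    have hν₂_apply : ∀ B : Set (α × γ), MeasurableSet B →
        ν₂ B = ∫⁻ ω in W ⁻¹' B, κT (X ω) t ∂P := by
      intro B hB
      rw [hν₂, withDensity_apply _ hB, Measure.restrict_map hW hB,
        lintegral_map hκmeas hW]
    have hrect : ∀ (B₁ : Set α), MeasurableSet B₁ → ∀ (s : Set γ), MeasurableSet s →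
        ν₁ (B₁ ×ˢ s) = ν₂ (B₁ ×ˢ s) := by
      intro B₁ hB₁ s hs
      rw [hν₁_apply _ (hB₁.prod hs), hν₂_apply _ (hB₁.prod hs)]
      have hpre : W ⁻¹' (B₁ ×ˢ s) = X ⁻¹' B₁ ∩ Z ⁻¹' s := by
        ext ω; simp [hW_def, Set.mem_prod]
      rw [hpre, key t ht B₁ hB₁ s hs]
    have hν : ν₁ = ν₂ := by
      refine ext_of_generate_finite _ generateFrom_prod.symm isPiSystem_prod ?_ ?_
      · rintro u ⟨B₁, (hB₁ : MeasurableSet B₁), s, (hs : MeasurableSet s), rfl⟩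
        exact hrect B₁ hB₁ s hs
      · have := hrect univ MeasurableSet.univ univ MeasurableSet.univ
        rwa [Set.univ_prod_univ] at this
    intro B hB
    rw [← hν₂_apply B hB, ← hν, hν₁_apply B hB]
  -- conclude via uniqueness of condDistrib
  have hcomp : P.map (fun ω => (W ω, T ω)) = (P.map W) ⊗ₘ (κT.comap Prod.fst measurable_fst) := by
    haveI : IsProbabilityMeasure (P.map (fun ω => (W ω, T ω))) :=
      Measure.isProbabilityMeasure_map ((hW.prodMk hT).aemeasurable)
    refine ext_of_generate_finite _ generateFrom_prod.symm isPiSystem_prod ?_ ?_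
    · rintro u ⟨B, (hB : MeasurableSet B), t, (ht : MeasurableSet t), rfl⟩
      rw [Measure.compProd_apply_prod hB ht,
        Measure.map_apply (hW.prodMk hT) (hB.prod ht)]
      have hpre : (fun ω => (W ω, T ω)) ⁻¹' (B ×ˢ t) = W ⁻¹' B ∩ T ⁻¹' t := by
        ext ω; simp [Set.mem_prod]
      rw [hpre, setLIntegral_map hB (Kernel.measurable_coe _ ht) hW]
      simp_rw [Kernel.comap_apply]
      exact (inner t ht B hB).symm
    · haveI : IsProbabilityMeasure (P.map W) := Measure.isProbabilityMeasure_map hW.aemeasurable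
      simp [measure_univ]
  have := condDistrib_ae_eq_of_measure_eq_compProd (κ := κT.comap Prod.fst measurable_fst) W hT.aemeasurable hcomp
  filter_upwards [this] with p hp
  rw [hp, Kernel.comap_apply]
open MeasureTheory ProbabilityTheory Set

lemma roy_perc
    {Ω : Type*} [MeasurableSpace Ω] [StandardBorelSpace Ω] [Nonempty Ω]
    (P : Measure Ω) [IsProbabilityMeasure P]
    {k : ℕ} (X : Ω → (Fin k → ℝ)) (V Y0 Y1 : Ω → ℝ)
    (hX : Measurable X) (hV : Measurable V) (hY0m : Measurable Y0) (hY1m : Measurable Y1)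
    (hY1int : Integrable Y1 P)
    (e1 : (Fin k → ℝ) × ℝ → ℝ) (he1m : Measurable e1)
    (he1 : P[Y1 | MeasurableSpace.comap (fun ω => (X ω, V ω)) inferInstance]
      =ᵐ[P] fun ω => e1 (X ω, V ω)) (c : ℝ) :
    (fun ω => ∫ t : ℝ × ℝ × ℝ, (if t.2.2 < c then t.2.1 else 0)
        ∂(condDistrib (fun ω => (Y0 ω, Y1 ω, V ω)) X P (X ω)))
      =ᵐ[P] fun ω => ∫ v, (if v < c then e1 (X ω, v) else 0)
        ∂(condDistrib V X P (X ω)) := by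
  set T : Ω → ℝ × ℝ × ℝ := fun ω => (Y0 ω, Y1 ω, V ω) with hT_def
  have hT : Measurable T := hY0m.prodMk (hY1m.prodMk hV)
  have hm12 : MeasurableSpace.comap X inferInstance
      ≤ MeasurableSpace.comap (fun ω => (X ω, V ω)) inferInstance := by
    rintro s ⟨B, hB, rfl⟩
    exact ⟨B ×ˢ univ, hB.prod MeasurableSet.univ, by ext ω; simp⟩

  -- the function of (X, T)
  have hg_eq : (fun ω => if V ω < c then Y1 ω else 0) = (V ⁻¹' Iio c).indicator Y1 := by
    funext ω; classical rw [Set.indicator_apply]; simp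
  have hg_int : Integrable (fun ω => if V ω < c then Y1 ω else 0) P := by
    rw [hg_eq]; exact hY1int.indicator (hV measurableSet_Iio)
  have hfsm : StronglyMeasurable fun p : (Fin k → ℝ) × (ℝ × ℝ × ℝ) =>
      if p.2.2.2 < c then p.2.2.1 else 0 :=
    (Measurable.ite (measurableSet_lt measurable_snd.snd.snd measurable_const)
      measurable_snd.snd.fst measurable_const).stronglyMeasurable
  have left : P[(fun ω => if V ω < c then Y1 ω else 0) | MeasurableSpace.comap X inferInstance]
      =ᵐ[P] fun ω => ∫ t : ℝ × ℝ × ℝ, (if t.2.2 < c then t.2.1 else 0)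
        ∂(condDistrib T X P (X ω)) :=
    condExp_prod_ae_eq_integral_condDistrib (μ := P) hX hT.aemeasurable hfsm hg_int
  -- pull-out over m₂
  have hind_sm : StronglyMeasurable[MeasurableSpace.comap (fun ω => (X ω, V ω)) inferInstance] fun ω => if V ω < c then (1:ℝ) else 0 := by
    have hset : MeasurableSet[MeasurableSpace.comap (fun ω => (X ω, V ω)) inferInstance] (V ⁻¹' Iio c) := by
      refine ⟨(univ : Set (Fin k → ℝ)) ×ˢ Iio c, MeasurableSet.univ.prod measurableSet_Iio, ?_⟩
      ext ω; simp
    have : StronglyMeasurable[MeasurableSpace.comap (fun ω => (X ω, V ω)) inferInstance] ((V ⁻¹' Iio c).indicator fun _ => (1:ℝ)) :=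
      stronglyMeasurable_const.indicator hset
    have heq : ((V ⁻¹' Iio c).indicator fun _ => (1:ℝ)) = fun ω => if V ω < c then (1:ℝ) else 0 := by
      funext ω; classical rw [Set.indicator_apply]; simp
    rwa [heq] at this
  have hmul_eq : ((fun ω => if V ω < c then (1:ℝ) else 0) * Y1)
      = fun ω => if V ω < c then Y1 ω else 0 := by
    funext ω; by_cases h : V ω < c <;> simp [h]
  have hpull : P[(fun ω => if V ω < c then Y1 ω else 0) | MeasurableSpace.comap (fun ω => (X ω, V ω)) inferInstance]
      =ᵐ[P] fun ω => if V ω < c then e1 (X ω, V ω) else 0 := by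
    have h := condExp_mul_of_stronglyMeasurable_left (μ := P) hind_sm
      (by rw [hmul_eq]; exact hg_int) hY1int
    rw [hmul_eq] at h
    refine h.trans ?_
    filter_upwards [he1] with ω hω
    simp only [Pi.mul_apply]
    rw [hω]
    by_cases h : V ω < c <;> simp [h]
  have mid : P[(fun ω => if V ω < c then Y1 ω else 0) | MeasurableSpace.comap X inferInstance]
      =ᵐ[P] P[(fun ω => if V ω < c then e1 (X ω, V ω) else 0) | MeasurableSpace.comap X inferInstance] := by
    refine (condExp_condExp_of_le hm12 (hX.prodMk hV).comap_le).symm.trans ?_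
    exact condExp_congr_ae hpull
  -- identify the right side
  have he1int : Integrable (fun ω => e1 (X ω, V ω)) P := integrable_condExp.congr he1
  have hg2_int : Integrable (fun ω => if V ω < c then e1 (X ω, V ω) else 0) P := by
    have : (fun ω => if V ω < c then e1 (X ω, V ω) else 0)
        = (V ⁻¹' Iio c).indicator fun ω => e1 (X ω, V ω) := by
      funext ω; classical rw [Set.indicator_apply]; simp
    rw [this]; exact he1int.indicator (hV measurableSet_Iio)
  have hfsm2 : StronglyMeasurable fun p : (Fin k → ℝ) × ℝ =>
      if p.2 < c then e1 p else 0 :=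
    (Measurable.ite (measurableSet_lt measurable_snd measurable_const) he1m
      measurable_const).stronglyMeasurable
  have right : P[(fun ω => if V ω < c then e1 (X ω, V ω) else 0) | MeasurableSpace.comap X inferInstance]
      =ᵐ[P] fun ω => ∫ v, (if v < c then e1 (X ω, v) else 0)
        ∂(condDistrib V X P (X ω)) :=
    condExp_prod_ae_eq_integral_condDistrib (μ := P) hX hV.aemeasurable hfsm2 hg2_int
  exact left.symm.trans (mid.trans right)

/-- Under the generalized Roy model,
`E[A·Y₁ | σ(X,Z)] = ∫₀^{π(X,Z)} e₁(X, v) dv` `P`-almost surely. -/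
theorem roy_condexp_treated_contribution
    {Ω : Type*} [MeasurableSpace Ω] [StandardBorelSpace Ω] [Nonempty Ω]
    (P : Measure Ω) [IsProbabilityMeasure P]
    {k : ℕ} (X : Ω → (Fin k → ℝ)) (Z V Y0 Y1 : Ω → ℝ)
    (hX : Measurable X) (hZ : Measurable Z) (hV : Measurable V)
    (hY0m : Measurable Y0) (hY1m : Measurable Y1)
    (hY0int : Integrable Y0 P) (hY1int : Integrable Y1 P)
    (pi : (Fin k → ℝ) × ℝ → ℝ) (hpi : Measurable pi)
    (hpi01 : ∀ q, pi q ∈ Set.Icc (0:ℝ) 1)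
    (A : Ω → ℝ) (hA : A = fun ω => if pi (X ω, Z ω) > V ω then (1:ℝ) else 0)
    (Y : Ω → ℝ) (hY : Y = fun ω => A ω * Y1 ω + (1 - A ω) * Y0 ω)
    (hCI : CondIndepFun (MeasurableSpace.comap X inferInstance) hX.comap_le Z
      (fun ω => (Y0 ω, Y1 ω, V ω)) P)
    (hUnif : ∀ᵐ x ∂(P.map X),
      condDistrib V X P x = volume.restrict (Set.Icc (0:ℝ) 1))
    (e1 : (Fin k → ℝ) × ℝ → ℝ) (he1m : Measurable e1)
    (he1 : P[Y1 | MeasurableSpace.comap (fun ω => (X ω, V ω)) inferInstance]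
      =ᵐ[P] fun ω => e1 (X ω, V ω))
    (hAY1 : Integrable (fun ω => A ω * Y1 ω) P) :
    P[(fun ω => A ω * Y1 ω) | MeasurableSpace.comap (fun ω => (X ω, Z ω)) inferInstance]
      =ᵐ[P] fun ω => ∫ v in (0:ℝ)..(pi (X ω, Z ω)), e1 (X ω, v) := by
  classical
  set T : Ω → ℝ × ℝ × ℝ := fun ω => (Y0 ω, Y1 ω, V ω) with hT_def
  have hT : Measurable T := hY0m.prodMk (hY1m.prodMk hV)
  set W : Ω → (Fin k → ℝ) × ℝ := fun ω => (X ω, Z ω) with hW_def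
  have hW : Measurable W := hX.prodMk hZ
  have he1int : Integrable (fun ω => e1 (X ω, V ω)) P := integrable_condExp.congr he1
  -- disintegration identities
  have hdisV : P.map (fun ω => (X ω, V ω)) = P.map X ⊗ₘ condDistrib V X P := by
    rw [condDistrib_def, ← Measure.fst_map_prodMk₀ (X := X) hV.aemeasurable,
      Measure.disintegrate]
  have hdisT : P.map (fun ω => (X ω, T ω)) = P.map X ⊗ₘ condDistrib T X P := by
    rw [condDistrib_def, ← Measure.fst_map_prodMk₀ (X := X) hT.aemeasurable,
      Measure.disintegrate]
  -- V is a.s. nonnegative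
  have hV01 : P {ω | V ω < 0} = 0 := by
    have h1 : P {ω | V ω < 0}
        = P.map (fun ω => (X ω, V ω)) (Set.univ ×ˢ Set.Iio 0) := by
      rw [Measure.map_apply (hX.prodMk hV) (MeasurableSet.univ.prod measurableSet_Iio)]
      congr 1; ext ω; simp
    rw [h1, hdisV, Measure.compProd_apply_prod MeasurableSet.univ measurableSet_Iio,
      Measure.restrict_univ]
    have h2 : ∀ᵐ x ∂P.map X, condDistrib V X P x (Set.Iio 0) = 0 := by
      filter_upwards [hUnif] with x hx
      rw [hx, Measure.restrict_apply measurableSet_Iio]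
      have : Set.Iio (0:ℝ) ∩ Set.Icc 0 1 = ∅ := by
        apply Set.eq_empty_iff_forall_notMem.mpr
        rintro v ⟨h, h0, -⟩
        exact absurd h (not_lt.mpr h0)
      rw [this, measure_empty]
    rw [lintegral_congr_ae h2, lintegral_zero]
  -- a.e. facts about the conditional distribution of T
  have hmeasS : MeasurableSet {p : ((Fin k → ℝ)) × (ℝ × ℝ × ℝ) | p.2.2.2 < 0} :=
    measurableSet_lt measurable_snd.snd.snd measurable_const
  have P3 : ∀ᵐ x ∂P.map X, condDistrib T X P x {t : ℝ × ℝ × ℝ | t.2.2 < 0} = 0 := by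
    have hnull : P.map (fun ω => (X ω, T ω)) {p : ((Fin k → ℝ)) × (ℝ × ℝ × ℝ) | p.2.2.2 < 0}
        = 0 := by
      rw [Measure.map_apply (hX.prodMk hT) hmeasS]
      exact hV01
    rw [hdisT] at hnull
    have hae : ∀ᵐ p ∂(P.map X ⊗ₘ condDistrib T X P),
        ¬ ((p : ((Fin k → ℝ)) × (ℝ × ℝ × ℝ)).2.2.2 < 0) :=
      measure_eq_zero_iff_ae_notMem.mp hnull
    have := Measure.ae_ae_of_ae_compProd hae
    filter_upwards [this] with x hx
    have : condDistrib T X P x {t : ℝ × ℝ × ℝ | ¬ ¬ t.2.2 < 0} = 0 := ae_iff.mp hx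
    simpa using this
  have P2 : ∀ᵐ x ∂P.map X,
      Integrable (fun t : ℝ × ℝ × ℝ => t.2.1) (condDistrib T X P x) := by
    have hint : Integrable (fun p : ((Fin k → ℝ)) × (ℝ × ℝ × ℝ) => p.2.2.1)
        (P.map fun ω => (X ω, T ω)) := by
      rw [integrable_map_measure measurable_snd.snd.fst.aestronglyMeasurable
        (hX.prodMk hT).aemeasurable]
      exact hY1int
    exact hint.condDistrib_ae_map hT.aemeasurable
  have P4 : ∀ᵐ x ∂P.map X, IntegrableOn (fun v => e1 (x, v)) (Set.Icc 0 1) volume := by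
    have hint : Integrable e1 (P.map fun ω => (X ω, V ω)) := by
      rw [integrable_map_measure he1m.aestronglyMeasurable (hX.prodMk hV).aemeasurable]
      exact he1int
    have h := hint.condDistrib_ae_map hV.aemeasurable
    filter_upwards [h, hUnif] with x hx hu
    have : (fun v => e1 (x, v)) = fun v => e1 (x, v) := rfl
    rw [IntegrableOn, ← hu]
    exact hx
  -- per-cutoff identity, transferred to the level of x
  have hxc : ∀ c : ℝ, ∀ᵐ x ∂P.map X,
      (∫ t : ℝ × ℝ × ℝ, (if t.2.2 < c then t.2.1 else 0) ∂condDistrib T X P x)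
        = ∫ v, (if v < c then e1 (x, v) else 0) ∂condDistrib V X P x := by
    intro c
    have hωc := roy_perc P X V Y0 Y1 hX hV hY0m hY1m hY1int e1 he1m he1 c
    have hF : Measurable fun x => ∫ t : ℝ × ℝ × ℝ, (if t.2.2 < c then t.2.1 else 0)
        ∂condDistrib T X P x := by
      have hsm : StronglyMeasurable fun p : ((Fin k → ℝ)) × (ℝ × ℝ × ℝ) =>
          if p.2.2.2 < c then p.2.2.1 else 0 :=
        (Measurable.ite (measurableSet_lt measurable_snd.snd.snd measurable_const)
          measurable_snd.snd.fst measurable_const).stronglyMeasurable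
      exact (hsm.integral_kernel_prod_right' (κ := condDistrib T X P)).measurable
    have hG : Measurable fun x => ∫ v, (if v < c then e1 (x, v) else 0)
        ∂condDistrib V X P x := by
      have hsm : StronglyMeasurable fun p : ((Fin k → ℝ)) × ℝ =>
          if p.2 < c then e1 p else 0 :=
        (Measurable.ite (measurableSet_lt measurable_snd measurable_const) he1m
          measurable_const).stronglyMeasurable
      exact (hsm.integral_kernel_prod_right' (κ := condDistrib V X P)).measurable
    exact (ae_map_iff hX.aemeasurable (measurableSet_eq_fun hF hG)).mpr hωc
  -- rewrite the uniform integral as an interval integral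
  have huni : ∀ c : ℝ, 0 ≤ c → c ≤ 1 → ∀ᵐ x ∂P.map X,
      (∫ v, (if v < c then e1 (x, v) else 0) ∂condDistrib V X P x)
        = ∫ v in (0:ℝ)..c, e1 (x, v) := by
    intro c hc0 hc1
    filter_upwards [hUnif] with x hx
    rw [hx]
    have h1 : (fun v => if v < c then e1 (x, v) else 0)
        = (Set.Iio c).indicator (fun v => e1 (x, v)) := by
      funext v; rw [Set.indicator_apply]; simp
    rw [h1, integral_indicator measurableSet_Iio,
      Measure.restrict_restrict measurableSet_Iio]
    have h2 : Set.Iio c ∩ Set.Icc 0 1 = Set.Ico 0 c := by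
      ext v
      simp only [Set.mem_inter_iff, Set.mem_Iio, Set.mem_Icc, Set.mem_Ico]
      constructor
      · rintro ⟨h, h0, _⟩; exact ⟨h0, h⟩
      · rintro ⟨h0, h⟩; exact ⟨h, h0, h.le.trans hc1⟩
    rw [h2, integral_Ico_eq_integral_Ioo, ← integral_Ioc_eq_integral_Ioo,
      ← intervalIntegral.integral_of_le hc0]
  -- per-rational identity, all rationals at once
  have hq_all : ∀ᵐ x ∂P.map X, ∀ q : ℚ, 0 < (q:ℝ) → (q:ℝ) ≤ 1 →
      (∫ t : ℝ × ℝ × ℝ, (if t.2.2 < (q:ℝ) then t.2.1 else 0) ∂condDistrib T X P x)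
        = ∫ v in (0:ℝ)..(q:ℝ), e1 (x, v) := by
    rw [MeasureTheory.ae_all_iff]
    intro q
    by_cases hq : 0 < (q:ℝ) ∧ (q:ℝ) ≤ 1
    · filter_upwards [hxc q, huni q hq.1.le hq.2] with x h1 h2 _ _
      rw [h1, h2]
    · filter_upwards with x h1 h2
      exact absurd ⟨h1, h2⟩ hq
  -- the main pointwise identification
  have lemBx : ∀ᵐ x ∂P.map X, ∀ c : ℝ, 0 ≤ c → c ≤ 1 →
      (∫ t : ℝ × ℝ × ℝ, (if t.2.2 < c then t.2.1 else 0) ∂condDistrib T X P x)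
        = ∫ v in (0:ℝ)..c, e1 (x, v) := by
    filter_upwards [hq_all, P2, P3, P4] with x hq hInt hnull hIntOn
    intro c hc0 hc1
    rcases eq_or_lt_of_le hc0 with hc | hcpos
    · -- c = 0
      subst hc
      have hzero : (fun t : ℝ × ℝ × ℝ => if t.2.2 < (0:ℝ) then t.2.1 else 0)
          =ᵐ[condDistrib T X P x] 0 := by
        have hae : ∀ᵐ t ∂condDistrib T X P x, t ∉ {t : ℝ × ℝ × ℝ | t.2.2 < 0} :=
          measure_eq_zero_iff_ae_notMem.mp hnull
        filter_upwards [hae] with t ht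
        have ht' : ¬ (t.2.2 < (0:ℝ)) := ht
        show (if t.2.2 < (0:ℝ) then t.2.1 else 0) = 0
        rw [if_neg ht']
      rw [integral_congr_ae hzero]
      simp
    · -- 0 < c
      have hseq : ∀ n : ℕ, ∃ q : ℚ, max (c - 1/(n+1)) (c/2) < (q:ℝ) ∧ (q:ℝ) < c := by
        intro n
        refine exists_rat_btwn (max_lt ?_ ?_)
        · have : (0:ℝ) < 1/(n+1) := by positivity
          linarith
        · linarith
      choose q hq1 hq2 using hseq
      have hqpos : ∀ n, 0 < (q n : ℝ) := fun n =>
        lt_trans (by linarith : (0:ℝ) < c/2) (lt_of_le_of_lt (le_max_right _ _) (hq1 n))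
      have hqle1 : ∀ n, (q n : ℝ) ≤ 1 := fun n => (hq2 n).le.trans hc1
      have hlow : Filter.Tendsto (fun n : ℕ => c - 1/(n+1 : ℝ)) Filter.atTop (nhds c) := by
        have := tendsto_one_div_add_atTop_nhds_zero_nat (𝕜 := ℝ)
        have h2 := Filter.Tendsto.sub (tendsto_const_nhds (x := c) (f := Filter.atTop)) this
        simpa using h2
      have htend : Filter.Tendsto (fun n => (q n : ℝ)) Filter.atTop (nhds c) := by
        refine tendsto_of_tendsto_of_tendsto_of_le_of_le hlow tendsto_const_nhds
          (fun n => ((le_max_left _ _).trans (hq1 n).le)) (fun n => (hq2 n).le)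
      -- LHS converges
      have hLHS : Filter.Tendsto
          (fun n => ∫ t : ℝ × ℝ × ℝ, (if t.2.2 < (q n : ℝ) then t.2.1 else 0)
            ∂condDistrib T X P x) Filter.atTop
          (nhds (∫ t : ℝ × ℝ × ℝ, (if t.2.2 < c then t.2.1 else 0)
            ∂condDistrib T X P x)) := by
        refine tendsto_integral_of_dominated_convergence (fun t => ‖t.2.1‖) ?_ hInt.norm ?_ ?_
        · intro n
          exact ((Measurable.ite (measurableSet_lt measurable_snd.snd measurable_const)
            measurable_snd.fst measurable_const)).aestronglyMeasurable
        · intro n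
          filter_upwards with t
          by_cases h : t.2.2 < (q n : ℝ) <;> simp [h]
        · filter_upwards with t
          by_cases h : t.2.2 < c
          · have hev : (fun n => if t.2.2 < (q n : ℝ) then t.2.1 else 0)
                =ᶠ[Filter.atTop] fun _ => t.2.1 := by
              filter_upwards [htend.eventually (eventually_gt_nhds h)] with n hn
              simp [hn]
            rw [if_pos h]
            exact Filter.Tendsto.congr' hev.symm tendsto_const_nhds
          · have hev : ∀ n, (if t.2.2 < (q n : ℝ) then t.2.1 else 0) = 0 := fun n =>
              if_neg (fun hlt => h (hlt.trans (hq2 n)))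
            rw [if_neg h]
            simp only [hev]
            exact tendsto_const_nhds
      -- RHS converges
      have hrw : ∀ b : ℝ, 0 ≤ b → ∫ v in (0:ℝ)..b, e1 (x, v)
          = ∫ v, (Set.Ioc (0:ℝ) b).indicator (fun v => e1 (x, v)) v ∂volume := by
        intro b hb0
        rw [intervalIntegral.integral_of_le hb0, integral_indicator measurableSet_Ioc]
      have hxmeas : Measurable fun v => e1 (x, v) :=
        he1m.comp (measurable_const.prodMk measurable_id)
      have hRHS : Filter.Tendsto (fun n => ∫ v in (0:ℝ)..(q n : ℝ), e1 (x, v))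
          Filter.atTop (nhds (∫ v in (0:ℝ)..c, e1 (x, v))) := by
        have htarget : ∫ v in (0:ℝ)..c, e1 (x, v)
            = ∫ v, (Set.Ioo (0:ℝ) c).indicator (fun v => e1 (x, v)) v ∂volume := by
          rw [intervalIntegral.integral_of_le hc0, integral_Ioc_eq_integral_Ioo,
            ← integral_indicator measurableSet_Ioo]
        rw [htarget]
        have hfun : ∀ n, ∫ v in (0:ℝ)..(q n : ℝ), e1 (x, v)
            = ∫ v, (Set.Ioc (0:ℝ) (q n : ℝ)).indicator (fun v => e1 (x, v)) v ∂volume :=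
          fun n => hrw (q n) (hqpos n).le
        refine Filter.Tendsto.congr (fun n => (hfun n).symm) ?_
        refine tendsto_integral_of_dominated_convergence
          ((Set.Icc (0:ℝ) 1).indicator fun v => ‖e1 (x, v)‖) ?_ ?_ ?_ ?_
        · intro n
          exact (hxmeas.indicator measurableSet_Ioc).aestronglyMeasurable
        · exact (integrable_indicator_iff measurableSet_Icc).mpr hIntOn.norm
        · intro n
          filter_upwards with v
          by_cases h : v ∈ Set.Ioc (0:ℝ) (q n : ℝ)
          · rw [Set.indicator_of_mem h]
            rcases Set.mem_Ioc.mp h with ⟨hv1, hv2⟩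
            have hv : v ∈ Set.Icc (0:ℝ) 1 := Set.mem_Icc.mpr ⟨hv1.le, hv2.trans (hqle1 n)⟩
            rw [Set.indicator_of_mem hv]
          · rw [Set.indicator_of_notMem h]
            simp only [norm_zero]
            exact Set.indicator_apply_nonneg fun _ => norm_nonneg _
        · have hne : ∀ᵐ v : ℝ ∂volume, v ≠ c := by
            have h0 : volume ({c} : Set ℝ) = 0 := measure_singleton c
            filter_upwards [measure_eq_zero_iff_ae_notMem.mp h0] with v hv
            simpa using hv
          filter_upwards [hne] with v hv
          by_cases h : v ∈ Set.Ioo (0:ℝ) c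
          · rcases Set.mem_Ioo.mp h with ⟨hv1, hv2⟩
            have hev : (fun n => (Set.Ioc (0:ℝ) (q n : ℝ)).indicator (fun v => e1 (x, v)) v)
                =ᶠ[Filter.atTop] fun _ => e1 (x, v) := by
              filter_upwards [htend.eventually (eventually_gt_nhds hv2)] with n hn
              exact Set.indicator_of_mem (Set.mem_Ioc.mpr ⟨hv1, hn.le⟩) _
            rw [Set.indicator_of_mem h]
            exact Filter.Tendsto.congr' hev.symm tendsto_const_nhds
          · have hnm : ∀ n, v ∉ Set.Ioc (0:ℝ) (q n : ℝ) := by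
              intro n hmem
              apply h
              refine ⟨hmem.1, lt_of_le_of_ne ?_ hv⟩
              exact hmem.2.trans (hq2 n).le
            have hev : ∀ n, (Set.Ioc (0:ℝ) (q n : ℝ)).indicator (fun v => e1 (x, v)) v = 0 :=
              fun n => Set.indicator_of_notMem (hnm n) _
            rw [Set.indicator_of_notMem h]
            simp only [hev]
            exact tendsto_const_nhds
      have heqn : ∀ n, (∫ t : ℝ × ℝ × ℝ, (if t.2.2 < (q n : ℝ) then t.2.1 else 0)
          ∂condDistrib T X P x) = ∫ v in (0:ℝ)..(q n : ℝ), e1 (x, v) :=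
        fun n => hq (q n) (hqpos n) (hqle1 n)
      refine tendsto_nhds_unique hLHS ?_
      refine Filter.Tendsto.congr (fun n => (heqn n).symm) hRHS
  have lemB : ∀ᵐ ω ∂P, ∀ c : ℝ, 0 ≤ c → c ≤ 1 →
      (∫ t : ℝ × ℝ × ℝ, (if t.2.2 < c then t.2.1 else 0) ∂condDistrib T X P (X ω))
        = ∫ v in (0:ℝ)..c, e1 (X ω, v) :=
    ae_of_ae_map hX.aemeasurable lemBx
  -- assembly
  set f₀ : ((Fin k → ℝ) × ℝ) × (ℝ × ℝ × ℝ) → ℝ :=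
    fun p => if p.2.2.2 < pi p.1 then p.2.2.1 else 0 with hf₀_def
  have hf₀m : Measurable f₀ :=
    Measurable.ite (measurableSet_lt measurable_snd.snd.snd (hpi.comp measurable_fst))
      measurable_snd.snd.fst measurable_const
  have hAYeq : (fun ω => A ω * Y1 ω) = fun ω => f₀ (W ω, T ω) := by
    funext ω
    simp only [hA, hf₀_def, hW_def, hT_def, gt_iff_lt, ite_mul, one_mul, zero_mul]
  have h0int : Integrable (fun ω => f₀ (W ω, T ω)) P := by rw [← hAYeq]; exact hAY1
  have step1 : P[(fun ω => A ω * Y1 ω) | MeasurableSpace.comap W inferInstance]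
      =ᵐ[P] fun ω => ∫ t, f₀ (W ω, t) ∂condDistrib T W P (W ω) := by
    rw [hAYeq]
    exact condExp_prod_ae_eq_integral_condDistrib (μ := P) hW hT.aemeasurable
      hf₀m.stronglyMeasurable h0int
  have hker : ∀ᵐ ω ∂P, condDistrib T W P (W ω) = condDistrib T X P ((W ω).1) :=
    ae_of_ae_map hW.aemeasurable
      (roy_condDistrib_prod_eq P X Z T hX hZ hT hCI)
  have step2 : (fun ω => ∫ t, f₀ (W ω, t) ∂condDistrib T W P (W ω))
      =ᵐ[P] fun ω => ∫ t, f₀ (W ω, t) ∂condDistrib T X P (X ω) := by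
    filter_upwards [hker] with ω h
    rw [h]
  have step3 : (fun ω => ∫ t, f₀ (W ω, t) ∂condDistrib T X P (X ω))
      =ᵐ[P] fun ω => ∫ v in (0:ℝ)..(pi (X ω, Z ω)), e1 (X ω, v) := by
    filter_upwards [lemB] with ω h
    exact h (pi (X ω, Z ω)) (hpi01 _).1 (hpi01 _).2
  exact step1.trans (step2.trans step3)
end

section
/- (Equation (4).) Under the generalized Roy model with the linear outcome model, the conditional mean of the observed outcome given covariates and instrument is the quadratic polynomial in the propensity score: P-almost surely, E[Y | σ(X,Z)] = α₀ + β₀ᵀX + (α₁ − α₀ − 0.5(ζ₁ − ζ₀))·π(X,Z) + (β₁ − β₀)ᵀX·π(X,Z) + 0.5(ζ₁ − ζ₀)·π(X,Z)²; that is, m(x,p) = r(x,p)ᵀγ with r(x,p) = (1, x, p, xp, p²) and γ = (α₀, β₀, α₁−α₀−0.5(ζ₁−ζ₀), β₁−β₀, 0.5(ζ₁−ζ₀)). -/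
open MeasureTheory ProbabilityTheory Filter
open scoped ENNReal NNReal

lemma roy_aux_setIntegral_eq_on_generateFrom {Ω : Type*} [mΩ : MeasurableSpace Ω]
    (P : Measure Ω) [IsFiniteMeasure P] {C : Set (Set Ω)}
    (hpi : IsPiSystem C) (hmeas : ∀ s ∈ C, MeasurableSet s)
    {f g : Ω → ℝ} (hf : Integrable f P) (hg : Integrable g P)
    (h0 : ∫ ω, f ω ∂P = ∫ ω, g ω ∂P)
    (h : ∀ s ∈ C, ∫ ω in s, f ω ∂P = ∫ ω in s, g ω ∂P) :
    ∀ s, MeasurableSet[MeasurableSpace.generateFrom C] s →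
      ∫ ω in s, f ω ∂P = ∫ ω in s, g ω ∂P := by
  have hle : MeasurableSpace.generateFrom C ≤ mΩ := MeasurableSpace.generateFrom_le hmeas
  intro s hs
  refine MeasurableSpace.induction_on_inter (m := MeasurableSpace.generateFrom C)
    (C := fun t _ => ∫ ω in t, f ω ∂P = ∫ ω in t, g ω ∂P) rfl hpi (by simp) h ?_ ?_ _ hs
  · intro t ht heq
    have ht' : MeasurableSet t := hle _ ht
    have h1 := integral_add_compl ht' hf
    have h2 := integral_add_compl ht' hg
    linarith
  · intro u hdisj hmeasu hu
    have hm' : ∀ i, MeasurableSet (u i) := fun i => hle _ (hmeasu i)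
    rw [integral_iUnion hm' hdisj hf.integrableOn, integral_iUnion hm' hdisj hg.integrableOn]
    exact tsum_congr hu

lemma roy_aux_measure_prod_ext {α β : Type*} [MeasurableSpace α] [MeasurableSpace β]
    {μ ν : Measure (α × β)} [IsFiniteMeasure μ] [IsFiniteMeasure ν]
    (h : ∀ s t, MeasurableSet s → MeasurableSet t → μ (s ×ˢ t) = ν (s ×ˢ t)) : μ = ν := by
  refine ext_of_generate_finite _ generateFrom_prod.symm isPiSystem_prod ?_ ?_
  · rintro _ ⟨s, hs, t, ht, rfl⟩; exact h s t hs ht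
  · have := h Set.univ Set.univ MeasurableSet.univ MeasurableSet.univ
    simpa [Set.univ_prod_univ] using this

lemma roy_aux_integral_mul_comp_eq {Ω γ : Type*} [MeasurableSpace Ω] [MeasurableSpace γ]
    {P : Measure Ω} {U : Ω → γ} (hU : Measurable U)
    {b c : Ω → ℝ} (hb : Measurable b) (hc : Measurable c)
    (hb0 : 0 ≤ᵐ[P] b) (hc0 : 0 ≤ᵐ[P] c)
    (hmap : (P.withDensity fun ω => ((b ω).toNNReal : ℝ≥0∞)).map U
          = (P.withDensity fun ω => ((c ω).toNNReal : ℝ≥0∞)).map U)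
    {ψ : γ → ℝ} (hψ : Measurable ψ) :
    ∫ ω, b ω * ψ (U ω) ∂P = ∫ ω, c ω * ψ (U ω) ∂P := by
  have key : ∀ (b : Ω → ℝ), Measurable b → 0 ≤ᵐ[P] b →
      ∫ y, ψ y ∂((P.withDensity fun ω => ((b ω).toNNReal : ℝ≥0∞)).map U)
        = ∫ ω, b ω * ψ (U ω) ∂P := by
    intro b hb hb0
    rw [integral_map hU.aemeasurable hψ.stronglyMeasurable.aestronglyMeasurable,
      integral_withDensity_eq_integral_smul₀ hb.real_toNNReal.aemeasurable]
    refine integral_congr_ae ?_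
    filter_upwards [hb0] with ω h
    simp [NNReal.smul_def, Real.coe_toNNReal _ h]
  rw [← key b hb hb0, ← key c hc hc0, hmap]


lemma roy_aux_withDensity_map_eq
    {Ω : Type*} [MeasurableSpace Ω] [StandardBorelSpace Ω] [Nonempty Ω]
    (P : Measure Ω) [IsProbabilityMeasure P]
    {𝕏 : Type*} [MeasurableSpace 𝕏] (X : Ω → 𝕏) (Z : Ω → ℝ) (W : Ω → ℝ × ℝ × ℝ)
    (hX : Measurable X) (hZ : Measurable Z) (hW : Measurable W)
    (hCI : CondIndepFun (MeasurableSpace.comap X inferInstance) hX.comap_le Z W P)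
    {Bz : Set ℝ} (hBz : MeasurableSet Bz) :
    (P.withDensity fun ω =>
        ((Set.indicator (Z ⁻¹' Bz) (fun _ => (1:ℝ)) ω).toNNReal : ℝ≥0∞)).map
        (fun ω => (X ω, W ω))
      = (P.withDensity fun ω =>
        (((P⟦Z ⁻¹' Bz | MeasurableSpace.comap X inferInstance⟧) ω).toNNReal : ℝ≥0∞)).map
        (fun ω => (X ω, W ω)) := by
  have hmX : MeasurableSpace.comap X inferInstance ≤ ‹MeasurableSpace Ω› := hX.comap_le
  set b : Ω → ℝ := Set.indicator (Z ⁻¹' Bz) (fun _ => (1:ℝ)) with hbdef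
  set c : Ω → ℝ := P⟦Z ⁻¹' Bz | MeasurableSpace.comap X inferInstance⟧ with hcdef
  have hbm : Measurable b := measurable_const.indicator (hZ hBz)
  have hcsm : StronglyMeasurable[MeasurableSpace.comap X inferInstance] c := stronglyMeasurable_condExp
  have hcm : Measurable c := (hcsm.mono hmX).measurable
  have hb0 : ∀ ω, 0 ≤ b ω := fun ω => Set.indicator_nonneg (fun _ _ => zero_le_one) ω
  have hb1 : ∀ ω, b ω ≤ 1 := by
    intro ω
    by_cases h : ω ∈ Z ⁻¹' Bz <;> simp [hbdef, Set.indicator_apply, h]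
  have hbint : Integrable b P := (integrable_const (1:ℝ)).indicator (hZ hBz)
  have hc0 : 0 ≤ᵐ[P] c := condExp_nonneg (Eventually.of_forall hb0)
  have hc1 : c ≤ᵐ[P] fun _ => (1:ℝ) := by
    have h := condExp_mono (m := MeasurableSpace.comap X inferInstance) (μ := P) hbint (integrable_const (1:ℝ))
      (Eventually.of_forall hb1)
    rwa [condExp_const hmX (1:ℝ)] at h
  have hcint : Integrable c P := integrable_condExp
  have hU' : Measurable fun ω => (X ω, W ω) := hX.prodMk hW
  -- finiteness of the two measures
  have hfin : ∀ (q : Ω → ℝ), Measurable q → (∀ᵐ ω ∂P, q ω ≤ 1) →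
      IsFiniteMeasure ((P.withDensity fun ω => ((q ω).toNNReal : ℝ≥0∞)).map
        (fun ω => (X ω, W ω))) := by
    intro q hq hq1
    constructor
    rw [Measure.map_apply hU' MeasurableSet.univ, Set.preimage_univ,
      withDensity_apply _ MeasurableSet.univ, Measure.restrict_univ]
    calc ∫⁻ ω, ((q ω).toNNReal : ℝ≥0∞) ∂P ≤ ∫⁻ _, 1 ∂P := by
          refine lintegral_mono_ae ?_
          filter_upwards [hq1] with ω h
          simpa using ENNReal.ofReal_le_one.2 h
      _ < ∞ := by simp
  haveI h1 := hfin b hbm (Eventually.of_forall hb1)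
  haveI h2 := hfin c hcm hc1
  refine roy_aux_measure_prod_ext ?_
  intro BX BW hBX hBW
  have hSmeas : MeasurableSet (X ⁻¹' BX ∩ W ⁻¹' BW) := (hX hBX).inter (hW hBW)
  have hpre : (fun ω => (X ω, W ω)) ⁻¹' (BX ×ˢ BW) = X ⁻¹' BX ∩ W ⁻¹' BW :=
    Set.mk_preimage_prod X W
  -- reduce to real set integrals
  have hval : ∀ (q : Ω → ℝ), Measurable q → 0 ≤ᵐ[P] q → Integrable q P →
      ((P.withDensity fun ω => ((q ω).toNNReal : ℝ≥0∞)).map (fun ω => (X ω, W ω)))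
        (BX ×ˢ BW)
        = ENNReal.ofReal (∫ ω in X ⁻¹' BX ∩ W ⁻¹' BW, q ω ∂P) := by
    intro q hq hq0 hqint
    rw [Measure.map_apply hU' (hBX.prod hBW), hpre, withDensity_apply _ hSmeas]
    exact (ofReal_integral_eq_lintegral_ofReal hqint.restrict (ae_restrict_of_ae hq0)).symm
  rw [hval b hbm (Eventually.of_forall hb0) hbint, hval c hcm hc0 hcint]
  congr 1
  -- the conditional independence computation
  set d : Ω → ℝ := P⟦W ⁻¹' BW | MeasurableSpace.comap X inferInstance⟧ with hddef
  have hmul : P⟦Z ⁻¹' Bz ∩ W ⁻¹' BW | MeasurableSpace.comap X inferInstance⟧ =ᵐ[P] fun ω => c ω * d ω :=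
    (condIndepFun_iff_condExp_inter_preimage_eq_mul (hm' := hmX) hZ hW).mp hCI Bz BW hBz hBW
  have hXBXmX : MeasurableSet[MeasurableSpace.comap X inferInstance] (X ⁻¹' BX) := ⟨BX, hBX, rfl⟩
  have hindint : Integrable (Set.indicator (W ⁻¹' BW) fun _ => (1:ℝ)) P :=
    (integrable_const (1:ℝ)).indicator (hW hBW)
  -- LHS
  have hLHS : ∫ ω in X ⁻¹' BX ∩ W ⁻¹' BW, b ω ∂P = ∫ ω in X ⁻¹' BX, c ω * d ω ∂P := by
    have h1 : Set.indicator (X ⁻¹' BX ∩ W ⁻¹' BW) b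
        = Set.indicator (X ⁻¹' BX)
          (Set.indicator (Z ⁻¹' Bz ∩ W ⁻¹' BW) fun _ => (1:ℝ)) := by
      funext ω
      by_cases h1 : ω ∈ X ⁻¹' BX <;> by_cases h2 : ω ∈ W ⁻¹' BW <;>
        by_cases h3 : ω ∈ Z ⁻¹' Bz <;>
        simp [Set.indicator_apply, h1, h2, h3, hbdef]
    rw [← integral_indicator hSmeas, h1, integral_indicator (hX hBX),
      setIntegral_condExp hmX ((integrable_const (1:ℝ)).indicator ((hZ hBz).inter (hW hBW)))
        hXBXmX |>.symm]
    exact integral_congr_ae (ae_restrict_of_ae hmul)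
  -- RHS
  have hRHS : ∫ ω in X ⁻¹' BX ∩ W ⁻¹' BW, c ω ∂P = ∫ ω in X ⁻¹' BX, c ω * d ω ∂P := by
    set φ : Ω → ℝ := fun ω => Set.indicator (X ⁻¹' BX) (fun _ => (1:ℝ)) ω * c ω with hφdef
    have hφsm : StronglyMeasurable[MeasurableSpace.comap X inferInstance] φ :=
      (stronglyMeasurable_const.indicator hXBXmX).mul stronglyMeasurable_condExp
    have h1 : Set.indicator (X ⁻¹' BX ∩ W ⁻¹' BW) c
        = φ * Set.indicator (W ⁻¹' BW) fun _ => (1:ℝ) := by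
      funext ω
      by_cases h1 : ω ∈ X ⁻¹' BX <;> by_cases h2 : ω ∈ W ⁻¹' BW <;>
        simp [Set.indicator_apply, h1, h2, hφdef]
    have hφint : Integrable (φ * Set.indicator (W ⁻¹' BW) fun _ => (1:ℝ)) P := by
      refine hindint.bdd_mul (c := 1) ((hφsm.mono hmX).aestronglyMeasurable) ?_
      filter_upwards [hc0, hc1] with ω hcl hcu
      by_cases h : ω ∈ X ⁻¹' BX
      · have hφω : φ ω = c ω := by simp [hφdef, Set.indicator_apply, h]
        rw [hφω, Real.norm_eq_abs, abs_le]
        exact ⟨by simp only [Pi.zero_apply] at hcl; linarith, hcu⟩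
      · have hφω : φ ω = 0 := by simp [hφdef, Set.indicator_apply, h]
        simp [hφω]
    have hpull := condExp_mul_of_stronglyMeasurable_left hφsm hφint hindint
    have h2 : ∫ ω in X ⁻¹' BX ∩ W ⁻¹' BW, c ω ∂P
        = ∫ ω, (φ * Set.indicator (W ⁻¹' BW) fun _ => (1:ℝ)) ω ∂P := by
      rw [← integral_indicator hSmeas, h1]
    rw [h2, ← integral_condExp hmX]
    have h3 : ∫ ω, (P[φ * Set.indicator (W ⁻¹' BW) fun _ => (1:ℝ)|MeasurableSpace.comap X inferInstance]) ω ∂P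
        = ∫ ω, φ ω * d ω ∂P := integral_congr_ae hpull
    rw [h3]
    have h4 : (fun ω => φ ω * d ω)
        = Set.indicator (X ⁻¹' BX) (fun ω => c ω * d ω) := by
      funext ω
      by_cases h : ω ∈ X ⁻¹' BX <;> simp [hφdef, Set.indicator_apply, h]
    rw [h4, integral_indicator (hX hBX)]
  rw [hLHS, hRHS]

lemma roy_aux_condExp_transfer
    {Ω : Type*} [MeasurableSpace Ω] [StandardBorelSpace Ω] [Nonempty Ω]
    (P : Measure Ω) [IsProbabilityMeasure P]
    {𝕏 : Type*} [MeasurableSpace 𝕏] (X : Ω → 𝕏) (Z V Y0 Y1 : Ω → ℝ)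
    (hX : Measurable X) (hZ : Measurable Z) (hV : Measurable V)
    (hY0m : Measurable Y0) (hY1m : Measurable Y1)
    (hCI : CondIndepFun (MeasurableSpace.comap X inferInstance) hX.comap_le Z
      (fun ω => (Y0 ω, Y1 ω, V ω)) P)
    (e : ℝ × ℝ × ℝ → ℝ) (hem : Measurable e)
    (heint : Integrable (fun ω => e (Y0 ω, Y1 ω, V ω)) P)
    (E : 𝕏 × ℝ → ℝ) (hEm : Measurable E)
    (hEint : Integrable (fun ω => E (X ω, V ω)) P)
    (hcond : P[(fun ω => e (Y0 ω, Y1 ω, V ω)) |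
        MeasurableSpace.comap (fun ω => (X ω, V ω)) inferInstance]
      =ᵐ[P] fun ω => E (X ω, V ω)) :
    P[(fun ω => e (Y0 ω, Y1 ω, V ω)) |
        MeasurableSpace.comap (fun ω => ((X ω, Z ω), V ω)) inferInstance]
      =ᵐ[P] fun ω => E (X ω, V ω) := by
  have hW : Measurable (fun ω => (Y0 ω, Y1 ω, V ω)) := hY0m.prodMk (hY1m.prodMk hV)
  have hU : Measurable (fun ω => ((X ω, Z ω), V ω)) := (hX.prodMk hZ).prodMk hV
  have hXV : Measurable (fun ω => (X ω, V ω)) := hX.prodMk hV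
  have hm2 : MeasurableSpace.comap (fun ω => ((X ω, Z ω), V ω)) inferInstance
      ≤ ‹MeasurableSpace Ω› := hU.comap_le
  have hmXV : MeasurableSpace.comap (fun ω => (X ω, V ω)) inferInstance
      ≤ ‹MeasurableSpace Ω› := hXV.comap_le
  have hXleXV : MeasurableSpace.comap X inferInstance
      ≤ MeasurableSpace.comap (fun ω => (X ω, V ω)) inferInstance := by
    have hXeq : X = (fun p : 𝕏 × ℝ => p.1) ∘ (fun ω => (X ω, V ω)) := rfl
    rw [hXeq, ← MeasurableSpace.comap_comp]
    exact MeasurableSpace.comap_mono measurable_fst.comap_le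
  -- the π-system of triple rectangles
  set S1 : Set (Set (𝕏 × ℝ)) :=
    Set.image2 (· ×ˢ ·) {s : Set 𝕏 | MeasurableSet s} {t : Set ℝ | MeasurableSet t} with hS1def
  set S : Set (Set ((𝕏 × ℝ) × ℝ)) :=
    Set.image2 (· ×ˢ ·) S1 {t : Set ℝ | MeasurableSet t} with hSdef
  have hspan1 : IsCountablySpanning S1 := by
    refine ⟨fun _ : ℕ => Set.univ, fun _ => ?_, Set.iUnion_const Set.univ⟩
    rw [← Set.univ_prod_univ]
    exact Set.mem_image2_of_mem (by simp) (by simp)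
  have hgen : MeasurableSpace.generateFrom S
      = (inferInstance : MeasurableSpace ((𝕏 × ℝ) × ℝ)) :=
    generateFrom_eq_prod generateFrom_prod MeasurableSpace.generateFrom_measurableSet hspan1
      isCountablySpanning_measurableSet
  have hcomap : MeasurableSpace.comap (fun ω => ((X ω, Z ω), V ω)) inferInstance
      = MeasurableSpace.generateFrom
        (Set.preimage (fun ω => ((X ω, Z ω), V ω)) '' S) := by
    rw [← hgen, MeasurableSpace.comap_generateFrom]
  have hpiS : IsPiSystem S := isPiSystem_prod.prod MeasurableSpace.isPiSystem_measurableSet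
  have hpiC : IsPiSystem (Set.preimage (fun ω => ((X ω, Z ω), V ω)) '' S) := by
    rintro _ ⟨s, hs, rfl⟩ _ ⟨t, ht, rfl⟩ hne
    rw [← Set.preimage_inter] at hne ⊢
    refine ⟨s ∩ t, hpiS s hs t ht ?_, rfl⟩
    rcases hne with ⟨ω, hω⟩
    exact ⟨_, hω⟩
  have hSmeas : ∀ t ∈ S, MeasurableSet t := by
    rintro _ ⟨s1, hs1, Bv, hBv, rfl⟩
    obtain ⟨Bx, hBx, Bz, hBz, rfl⟩ := hs1
    simp only [Set.mem_setOf_eq] at hBx hBz hBv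
    exact (hBx.prod hBz).prod hBv
  have hmeasC : ∀ s ∈ Set.preimage (fun ω => ((X ω, Z ω), V ω)) '' S, MeasurableSet s := by
    rintro _ ⟨t, ht, rfl⟩
    exact hU (hSmeas t ht)
  -- whole-space integral equality
  have h0 : ∫ ω, e (Y0 ω, Y1 ω, V ω) ∂P = ∫ ω, E (X ω, V ω) ∂P := by
    rw [← integral_condExp hmXV (f := fun ω => e (Y0 ω, Y1 ω, V ω))]
    exact integral_congr_ae hcond
  -- basic case : triple rectangles
  have hbasic : ∀ s ∈ Set.preimage (fun ω => ((X ω, Z ω), V ω)) '' S,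
      ∫ ω in s, e (Y0 ω, Y1 ω, V ω) ∂P = ∫ ω in s, E (X ω, V ω) ∂P := by
    rintro _ ⟨t, ht, rfl⟩
    obtain ⟨s1, hs1, Bv, hBv, rfl⟩ := ht
    obtain ⟨Bx, hBx, Bz, hBz, rfl⟩ := hs1
    simp only [Set.mem_setOf_eq] at hBx hBz hBv
    set b : Ω → ℝ := Set.indicator (Z ⁻¹' Bz) (fun _ => (1:ℝ)) with hbdef
    set c : Ω → ℝ := P⟦Z ⁻¹' Bz | MeasurableSpace.comap X inferInstance⟧ with hcdef
    have hbm : Measurable b := measurable_const.indicator (hZ hBz)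
    have hcsm : StronglyMeasurable[MeasurableSpace.comap X inferInstance] c :=
      stronglyMeasurable_condExp
    have hcm : Measurable c := (hcsm.mono hX.comap_le).measurable
    have hb0 : ∀ ω, 0 ≤ b ω := fun ω => Set.indicator_nonneg (fun _ _ => zero_le_one) ω
    have hb1 : ∀ ω, b ω ≤ 1 := by
      intro ω; by_cases h : ω ∈ Z ⁻¹' Bz <;> simp [hbdef, Set.indicator_apply, h]
    have hbint : Integrable b P := (integrable_const (1:ℝ)).indicator (hZ hBz)
    have hc0 : 0 ≤ᵐ[P] c := condExp_nonneg (Eventually.of_forall hb0)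
    have hc1 : c ≤ᵐ[P] fun _ => (1:ℝ) := by
      have h := condExp_mono (m := MeasurableSpace.comap X inferInstance) (μ := P) hbint
        (integrable_const (1:ℝ)) (Eventually.of_forall hb1)
      rwa [condExp_const hX.comap_le (1:ℝ)] at h
    have hmap := roy_aux_withDensity_map_eq P X Z (fun ω => (Y0 ω, Y1 ω, V ω))
      hX hZ hW hCI hBz
    set ψ₁ : 𝕏 × (ℝ × ℝ × ℝ) → ℝ := fun p =>
      Set.indicator Bx (fun _ => (1:ℝ)) p.1 * Set.indicator Bv (fun _ => (1:ℝ)) p.2.2.2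
        * e p.2 with hψ₁def
    set ψ₂ : 𝕏 × (ℝ × ℝ × ℝ) → ℝ := fun p =>
      Set.indicator Bx (fun _ => (1:ℝ)) p.1 * Set.indicator Bv (fun _ => (1:ℝ)) p.2.2.2
        * E (p.1, p.2.2.2) with hψ₂def
    have hψ₁m : Measurable ψ₁ :=
      (((measurable_const.indicator hBx).comp measurable_fst).mul
        ((measurable_const.indicator hBv).comp (measurable_snd.snd.snd))).mul
        (hem.comp measurable_snd)
    have hψ₂m : Measurable ψ₂ :=
      (((measurable_const.indicator hBx).comp measurable_fst).mul
        ((measurable_const.indicator hBv).comp (measurable_snd.snd.snd))).mul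
        (hEm.comp (measurable_fst.prodMk measurable_snd.snd.snd))
    have hRmeas : MeasurableSet ((fun ω => ((X ω, Z ω), V ω)) ⁻¹' ((Bx ×ˢ Bz) ×ˢ Bv)) :=
      hU ((hBx.prod hBz).prod hBv)
    -- step 1 : left set integral as a b-weighted integral
    have hstep1 : ∫ ω in (fun ω => ((X ω, Z ω), V ω)) ⁻¹' ((Bx ×ˢ Bz) ×ˢ Bv),
          e (Y0 ω, Y1 ω, V ω) ∂P
        = ∫ ω, b ω * ψ₁ (X ω, (Y0 ω, Y1 ω, V ω)) ∂P := by
      rw [← integral_indicator hRmeas]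
      refine integral_congr_ae (Eventually.of_forall fun ω => ?_)
      by_cases h1 : X ω ∈ Bx <;> by_cases h2 : Z ω ∈ Bz <;> by_cases h3 : V ω ∈ Bv <;>
        simp [Set.indicator_apply, Set.mem_prod, h1, h2, h3, hψ₁def, hbdef]
    have hstep4 : ∫ ω in (fun ω => ((X ω, Z ω), V ω)) ⁻¹' ((Bx ×ˢ Bz) ×ˢ Bv),
          E (X ω, V ω) ∂P
        = ∫ ω, b ω * ψ₂ (X ω, (Y0 ω, Y1 ω, V ω)) ∂P := by
      rw [← integral_indicator hRmeas]
      refine integral_congr_ae (Eventually.of_forall fun ω => ?_)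
      by_cases h1 : X ω ∈ Bx <;> by_cases h2 : Z ω ∈ Bz <;> by_cases h3 : V ω ∈ Bv <;>
        simp [Set.indicator_apply, Set.mem_prod, h1, h2, h3, hψ₂def, hbdef]
    -- step 2 : replace b by c using conditional independence
    have hstep2 : ∫ ω, b ω * ψ₁ (X ω, (Y0 ω, Y1 ω, V ω)) ∂P
        = ∫ ω, c ω * ψ₁ (X ω, (Y0 ω, Y1 ω, V ω)) ∂P :=
      roy_aux_integral_mul_comp_eq (hX.prodMk hW) hbm hcm (Eventually.of_forall hb0) hc0
        hmap hψ₁m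
    have hstep2' : ∫ ω, b ω * ψ₂ (X ω, (Y0 ω, Y1 ω, V ω)) ∂P
        = ∫ ω, c ω * ψ₂ (X ω, (Y0 ω, Y1 ω, V ω)) ∂P :=
      roy_aux_integral_mul_comp_eq (hX.prodMk hW) hbm hcm (Eventually.of_forall hb0) hc0
        hmap hψ₂m
    -- step 3 : use the conditional expectation hypothesis
    have hstep3 : ∫ ω, c ω * ψ₁ (X ω, (Y0 ω, Y1 ω, V ω)) ∂P
        = ∫ ω, c ω * ψ₂ (X ω, (Y0 ω, Y1 ω, V ω)) ∂P := by
      set φ : Ω → ℝ := fun ω => c ω * Set.indicator Bx (fun _ => (1:ℝ)) (X ω)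
        * Set.indicator Bv (fun _ => (1:ℝ)) (V ω) with hφdef
      have hXBx : MeasurableSet[MeasurableSpace.comap (fun ω => (X ω, V ω)) inferInstance]
          (X ⁻¹' Bx) := by
        refine ⟨Bx ×ˢ Set.univ, hBx.prod MeasurableSet.univ, ?_⟩
        ext ω; simp
      have hVBv : MeasurableSet[MeasurableSpace.comap (fun ω => (X ω, V ω)) inferInstance]
          (V ⁻¹' Bv) := by
        refine ⟨Set.univ ×ˢ Bv, MeasurableSet.univ.prod hBv, ?_⟩
        ext ω; simp
      have hφsm : StronglyMeasurable[MeasurableSpace.comap (fun ω => (X ω, V ω))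
          inferInstance] φ := by
        have hind1 : StronglyMeasurable[MeasurableSpace.comap (fun ω => (X ω, V ω))
            inferInstance] (fun ω => Set.indicator Bx (fun _ => (1:ℝ)) (X ω)) := by
          have : (fun ω => Set.indicator Bx (fun _ => (1:ℝ)) (X ω))
              = Set.indicator (X ⁻¹' Bx) (fun _ => (1:ℝ)) := by
            funext ω; by_cases h : X ω ∈ Bx <;> simp [Set.indicator_apply, h]
          rw [this]
          exact stronglyMeasurable_const.indicator hXBx
        have hind2 : StronglyMeasurable[MeasurableSpace.comap (fun ω => (X ω, V ω))
            inferInstance] (fun ω => Set.indicator Bv (fun _ => (1:ℝ)) (V ω)) := by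
          have : (fun ω => Set.indicator Bv (fun _ => (1:ℝ)) (V ω))
              = Set.indicator (V ⁻¹' Bv) (fun _ => (1:ℝ)) := by
            funext ω; by_cases h : V ω ∈ Bv <;> simp [Set.indicator_apply, h]
          rw [this]
          exact stronglyMeasurable_const.indicator hVBv
        exact ((hcsm.mono hXleXV).mul hind1).mul hind2
      have hφbd : ∀ᵐ ω ∂P, ‖φ ω‖ ≤ 1 := by
        filter_upwards [hc0, hc1] with ω hcl hcu
        simp only [Pi.zero_apply] at hcl
        have h1 : |Set.indicator Bx (fun _ => (1:ℝ)) (X ω)| ≤ 1 := by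
          by_cases h : X ω ∈ Bx <;> simp [Set.indicator_apply, h]
        have h2 : |Set.indicator Bv (fun _ => (1:ℝ)) (V ω)| ≤ 1 := by
          by_cases h : V ω ∈ Bv <;> simp [Set.indicator_apply, h]
        have h3 : |c ω| ≤ 1 := by rw [abs_le]; exact ⟨by linarith, hcu⟩
        rw [hφdef, Real.norm_eq_abs, abs_mul, abs_mul]
        have hs1 := mul_le_mul h3 h1 (abs_nonneg _) zero_le_one
        have hs2 := mul_le_mul hs1 h2 (abs_nonneg _) (by norm_num : (0:ℝ) ≤ 1 * 1)
        simpa using hs2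
      have hφint : Integrable (φ * fun ω => e (Y0 ω, Y1 ω, V ω)) P :=
        heint.bdd_mul ((hφsm.mono hmXV).aestronglyMeasurable) hφbd
      have hpull := condExp_mul_of_stronglyMeasurable_left hφsm hφint heint
      have heq1 : ∫ ω, c ω * ψ₁ (X ω, (Y0 ω, Y1 ω, V ω)) ∂P
          = ∫ ω, (φ * fun ω => e (Y0 ω, Y1 ω, V ω)) ω ∂P := by
        refine integral_congr_ae (Eventually.of_forall fun ω => ?_)
        simp only [hψ₁def, hφdef, Pi.mul_apply]
        ring
      rw [heq1, ← integral_condExp hmXV]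
      have heq2 : ∫ ω, (P[φ * fun ω => e (Y0 ω, Y1 ω, V ω) |
            MeasurableSpace.comap (fun ω => (X ω, V ω)) inferInstance]) ω ∂P
          = ∫ ω, φ ω * E (X ω, V ω) ∂P := by
        refine integral_congr_ae (hpull.trans ?_)
        filter_upwards [hcond] with ω hω
        simp only [Pi.mul_apply, hω]
      rw [heq2]
      refine integral_congr_ae (Eventually.of_forall fun ω => ?_)
      simp only [hψ₂def, hφdef]
      ring
    rw [hstep1, hstep2, hstep3, ← hstep2', ← hstep4]
  -- put everything together
  have hgen_eq := roy_aux_setIntegral_eq_on_generateFrom P hpiC hmeasC heint hEint h0 hbasic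
  haveI : SigmaFinite (P.trim hm2) := by infer_instance
  refine (ae_eq_condExp_of_forall_setIntegral_eq hm2 heint
    (fun s _ _ => hEint.integrableOn) ?_ ?_).symm
  · intro s hs _
    rw [hcomap] at hs
    exact (hgen_eq s hs).symm
  · have hmeas2 : Measurable[MeasurableSpace.comap (fun ω => ((X ω, Z ω), V ω)) inferInstance]
        fun ω => E (X ω, V ω) := by
      have h1 : Measurable[MeasurableSpace.comap (fun ω => ((X ω, Z ω), V ω)) inferInstance]
          (fun ω => ((X ω, Z ω), V ω)) := Measurable.of_comap_le le_rfl
      exact (hEm.comp ((measurable_fst.comp measurable_fst).prodMk measurable_snd)).comp h1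
    exact hmeas2.stronglyMeasurable.aestronglyMeasurable

lemma roy_aux_condDistrib_unif
    {Ω : Type*} [MeasurableSpace Ω] [StandardBorelSpace Ω] [Nonempty Ω]
    (P : Measure Ω) [IsProbabilityMeasure P]
    {𝕏 : Type*} [MeasurableSpace 𝕏] (X : Ω → 𝕏) (Z V Y0 Y1 : Ω → ℝ)
    (hX : Measurable X) (hZ : Measurable Z) (hV : Measurable V)
    (hY0m : Measurable Y0) (hY1m : Measurable Y1)
    (hCI : CondIndepFun (MeasurableSpace.comap X inferInstance) hX.comap_le Z
      (fun ω => (Y0 ω, Y1 ω, V ω)) P)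
    (hUnif : ∀ᵐ x ∂(P.map X), condDistrib V X P x = volume.restrict (Set.Icc (0:ℝ) 1)) :
    ∀ᵐ ω ∂P, condDistrib V (fun ω => (X ω, Z ω)) P (X ω, Z ω)
      = volume.restrict (Set.Icc (0:ℝ) 1) := by
  have hW : Measurable (fun ω => (Y0 ω, Y1 ω, V ω)) := hY0m.prodMk (hY1m.prodMk hV)
  have hT : Measurable (fun ω => (X ω, Z ω)) := hX.prodMk hZ
  haveI hlamP : IsProbabilityMeasure (volume.restrict (Set.Icc (0:ℝ) 1)) := by
    constructor
    rw [Measure.restrict_apply_univ, Real.volume_Icc]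
    norm_num
  haveI : IsProbabilityMeasure (P.map (fun ω => (X ω, Z ω))) :=
    Measure.isProbabilityMeasure_map hT.aemeasurable
  -- conditional expectation of V-indicators given X is constant
  have hVx : ∀ {Bv : Set ℝ}, MeasurableSet Bv →
      P⟦V ⁻¹' Bv | MeasurableSpace.comap X inferInstance⟧
        =ᵐ[P] fun _ => (volume.restrict (Set.Icc (0:ℝ) 1) Bv).toReal := by
    intro Bv hBv
    have h1 := condDistrib_ae_eq_condExp (μ := P) hX hV hBv
    have h2 : ∀ᵐ ω ∂P, condDistrib V X P (X ω) = volume.restrict (Set.Icc (0:ℝ) 1) :=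
      ae_of_ae_map hX.aemeasurable hUnif
    refine (h1.symm.trans ?_)
    filter_upwards [h2] with ω hω
    rw [hω, measureReal_def]
  -- rectangle identity
  have hrect : ∀ (Bx : Set 𝕏) (Bz Bv : Set ℝ), MeasurableSet Bx → MeasurableSet Bz →
      MeasurableSet Bv →
      P (X ⁻¹' Bx ∩ (Z ⁻¹' Bz ∩ V ⁻¹' Bv))
        = volume.restrict (Set.Icc (0:ℝ) 1) Bv * P (X ⁻¹' Bx ∩ Z ⁻¹' Bz) := by
    intro Bx Bz Bv hBx hBz hBv
    have hWpre : (fun ω => (Y0 ω, Y1 ω, V ω)) ⁻¹' (Set.univ ×ˢ Set.univ ×ˢ Bv)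
        = V ⁻¹' Bv := by
      ext ω; simp
    have hmul := (condIndepFun_iff_condExp_inter_preimage_eq_mul
      (hm' := hX.comap_le) hZ hW).mp hCI Bz (Set.univ ×ˢ Set.univ ×ˢ Bv) hBz
      (MeasurableSet.univ.prod (MeasurableSet.univ.prod hBv))
    rw [hWpre] at hmul
    have hXBx : MeasurableSet[MeasurableSpace.comap X inferInstance] (X ⁻¹' Bx) :=
      ⟨Bx, hBx, rfl⟩
    have hsm : MeasurableSet (Z ⁻¹' Bz ∩ V ⁻¹' Bv) := (hZ hBz).inter (hV hBv)
    have hindint : Integrable (Set.indicator (Z ⁻¹' Bz ∩ V ⁻¹' Bv) fun _ => (1:ℝ)) P :=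
      (integrable_const (1:ℝ)).indicator hsm
    -- real-valued computation
    have hsetint : ∀ (s : Set Ω), MeasurableSet s →
        ∫ ω in X ⁻¹' Bx, Set.indicator s (fun _ => (1:ℝ)) ω ∂P
          = (P (X ⁻¹' Bx ∩ s)).toReal := by
      intro s hs
      rw [setIntegral_indicator hs]
      simp [Measure.restrict_apply ((hX hBx).inter hs), measureReal_def]
    have hreal : (P (X ⁻¹' Bx ∩ (Z ⁻¹' Bz ∩ V ⁻¹' Bv))).toReal
        = (volume.restrict (Set.Icc (0:ℝ) 1) Bv).toReal
          * (P (X ⁻¹' Bx ∩ Z ⁻¹' Bz)).toReal := by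
      rw [← hsetint _ hsm,
        ← setIntegral_condExp hX.comap_le hindint hXBx]
      have hce : ∫ ω in X ⁻¹' Bx,
            (P⟦Z ⁻¹' Bz ∩ V ⁻¹' Bv | MeasurableSpace.comap X inferInstance⟧) ω ∂P
          = ∫ ω in X ⁻¹' Bx,
            (P⟦Z ⁻¹' Bz | MeasurableSpace.comap X inferInstance⟧) ω
              * (volume.restrict (Set.Icc (0:ℝ) 1) Bv).toReal ∂P := by
        refine integral_congr_ae (ae_restrict_of_ae ?_)
        filter_upwards [hmul, hVx hBv] with ω h1 h2
        rw [h1, h2, mul_comm]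
      rw [hce, integral_mul_const,
        setIntegral_condExp hX.comap_le ((integrable_const (1:ℝ)).indicator (hZ hBz)) hXBx,
        hsetint _ (hZ hBz), mul_comm]
    have hfin1 : P (X ⁻¹' Bx ∩ (Z ⁻¹' Bz ∩ V ⁻¹' Bv)) ≠ ⊤ := measure_ne_top _ _
    have hfin2 : volume.restrict (Set.Icc (0:ℝ) 1) Bv * P (X ⁻¹' Bx ∩ Z ⁻¹' Bz) ≠ ⊤ :=
      ENNReal.mul_ne_top (measure_ne_top _ _) (measure_ne_top _ _)
    rw [← ENNReal.toReal_eq_toReal_iff' hfin1 hfin2]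
    rw [hreal, ENNReal.toReal_mul]
  -- product structure of the law of ((X,Z),V)
  have hprod : P.map (fun ω => ((X ω, Z ω), V ω))
      = (P.map (fun ω => (X ω, Z ω))).prod (volume.restrict (Set.Icc (0:ℝ) 1)) := by
    refine (Measure.prod_eq ?_).symm
    intro C Bv hC hBv
    -- fix Bv : use measure extension on rectangles in C
    have hmeq : (P.restrict (V ⁻¹' Bv)).map (fun ω => (X ω, Z ω))
        = volume.restrict (Set.Icc (0:ℝ) 1) Bv • P.map (fun ω => (X ω, Z ω)) := by
      haveI : IsFiniteMeasure ((P.restrict (V ⁻¹' Bv)).map (fun ω => (X ω, Z ω))) := by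
        constructor
        rw [Measure.map_apply hT MeasurableSet.univ]
        exact lt_of_le_of_lt (measure_mono (Set.subset_univ _)) (by
          rw [Measure.restrict_apply_univ]; exact measure_lt_top P _)
      haveI : IsFiniteMeasure
          (volume.restrict (Set.Icc (0:ℝ) 1) Bv • P.map (fun ω => (X ω, Z ω))) := by
        constructor
        rw [Measure.smul_apply, smul_eq_mul]
        exact ENNReal.mul_lt_top (measure_lt_top _ _) (measure_lt_top _ _)
      refine ext_of_generate_finite _ generateFrom_prod.symm isPiSystem_prod ?_ ?_
      · rintro _ ⟨Bx, hBx, Bz, hBz, rfl⟩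
        simp only [Set.mem_setOf_eq] at hBx hBz
        rw [Measure.map_apply hT (hBx.prod hBz), Set.mk_preimage_prod,
          Measure.restrict_apply ((hX hBx).inter (hZ hBz)), Measure.smul_apply,
          Measure.map_apply hT (hBx.prod hBz), Set.mk_preimage_prod, smul_eq_mul]
        have hseteq : (X ⁻¹' Bx ∩ Z ⁻¹' Bz) ∩ V ⁻¹' Bv
            = X ⁻¹' Bx ∩ (Z ⁻¹' Bz ∩ V ⁻¹' Bv) := by
          ext ω; simp only [Set.mem_inter_iff, Set.mem_preimage]; tauto
        rw [hseteq]
        exact hrect Bx Bz Bv hBx hBz hBv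
      · rw [Measure.map_apply hT MeasurableSet.univ, Set.preimage_univ,
          Measure.restrict_apply MeasurableSet.univ, Set.univ_inter, Measure.smul_apply,
          Measure.map_apply hT MeasurableSet.univ, Set.preimage_univ, smul_eq_mul,
          measure_univ, mul_one]
        have h := hrect Set.univ Set.univ Bv MeasurableSet.univ MeasurableSet.univ hBv
        simpa using h
    rw [Measure.map_apply ((hT).prodMk hV) (hC.prod hBv), Set.mk_preimage_prod]
    have h1 : P ((fun ω => (X ω, Z ω)) ⁻¹' C ∩ V ⁻¹' Bv)
        = ((P.restrict (V ⁻¹' Bv)).map (fun ω => (X ω, Z ω))) C := by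
      rw [Measure.map_apply hT hC, Measure.restrict_apply (hT hC)]
    rw [h1, hmeq, Measure.smul_apply, smul_eq_mul, mul_comm]
  -- conclude via the a.e. uniqueness of condDistrib
  have hae := condDistrib_ae_eq_of_measure_eq_compProd_of_measurable (μ := P) hT hV
    (κ := Kernel.const _ (volume.restrict (Set.Icc (0:ℝ) 1)))
    (by rw [Measure.compProd_const]; exact hprod)
  have hae' := ae_of_ae_map hT.aemeasurable hae
  filter_upwards [hae'] with ω hω
  rw [hω, Kernel.const_apply]


lemma roy_aux_integral_piecewise (p a0 a1 z0 z1 : ℝ) (hp0 : 0 ≤ p) (hp1 : p ≤ 1) :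
    ∫ v, (if p > v then a1 + z1 * v else a0 + z0 * v)
        ∂(volume.restrict (Set.Icc (0:ℝ) 1))
      = a1 * p + z1 * (p ^ 2 / 2) + (a0 * (1 - p) + z0 * ((1 - p ^ 2) / 2)) := by
  have hsplit : Set.Icc (0:ℝ) 1 = Set.Ico 0 p ∪ Set.Icc p 1 := by
    ext x
    simp only [Set.mem_Icc, Set.mem_union, Set.mem_Ico]
    constructor
    · rintro ⟨h1, h2⟩
      rcases lt_or_ge x p with h | h
      · exact Or.inl ⟨h1, h⟩
      · exact Or.inr ⟨h, h2⟩
    · rintro (⟨h1, h2⟩ | ⟨h1, h2⟩)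
      · exact ⟨h1, le_trans (le_of_lt h2) hp1⟩
      · exact ⟨le_trans hp0 h1, h2⟩
  have hcont1 : Continuous fun v : ℝ => a1 + z1 * v := by fun_prop
  have hcont0 : Continuous fun v : ℝ => a0 + z0 * v := by fun_prop
  have heq1 : Set.EqOn (fun v => if p > v then a1 + z1 * v else a0 + z0 * v)
      (fun v : ℝ => a1 + z1 * v) (Set.Ico 0 p) := by
    intro v hv
    simp only [Set.mem_Ico] at hv
    simp [hv.2]
  have heq0 : Set.EqOn (fun v => if p > v then a1 + z1 * v else a0 + z0 * v)
      (fun v : ℝ => a0 + z0 * v) (Set.Icc p 1) := by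
    intro v hv
    simp only [Set.mem_Icc] at hv
    have : ¬ (p > v) := not_lt.mpr hv.1
    simp [this]
  have hint1 : IntegrableOn (fun v => if p > v then a1 + z1 * v else a0 + z0 * v)
      (Set.Ico 0 p) volume :=
    (integrableOn_congr_fun heq1 measurableSet_Ico).mpr ((hcont1.continuousOn.integrableOn_Icc).mono_set Set.Ico_subset_Icc_self)
  have hint0 : IntegrableOn (fun v => if p > v then a1 + z1 * v else a0 + z0 * v)
      (Set.Icc p 1) volume :=
    (integrableOn_congr_fun heq0 measurableSet_Icc).mpr (hcont0.continuousOn.integrableOn_Icc)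
  have hdisj : Disjoint (Set.Ico (0:ℝ) p) (Set.Icc p 1) := by
    refine Set.disjoint_left.mpr ?_
    rintro x ⟨_, h2⟩ ⟨h3, _⟩
    exact absurd h3 (not_le.mpr h2)
  show ∫ v in Set.Icc (0:ℝ) 1, (if p > v then a1 + z1 * v else a0 + z0 * v) ∂volume = _
  rw [hsplit, setIntegral_union hdisj measurableSet_Icc hint1 hint0,
    setIntegral_congr_fun measurableSet_Ico heq1,
    setIntegral_congr_fun measurableSet_Icc heq0,
    setIntegral_congr_set Ico_ae_eq_Ioc, setIntegral_congr_set Ioc_ae_eq_Icc.symm,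
    ← intervalIntegral.integral_of_le hp0, ← intervalIntegral.integral_of_le hp1]
  have hii : ∀ (a b c d : ℝ), ∫ v in a..b, (c + d * v)
      = c * (b - a) + d * ((b ^ 2 - a ^ 2) / 2) := by
    intro a b c d
    have hmi : IntervalIntegrable (fun v => d * v) volume a b :=
      (continuous_const.mul continuous_id').intervalIntegrable a b
    rw [intervalIntegral.integral_add intervalIntegrable_const hmi,
      intervalIntegral.integral_const, intervalIntegral.integral_const_mul, integral_id]
    simp [smul_eq_mul]
    ring
  rw [hii, hii]
  ring

/-- Equation (4): under the generalized Roy model with the linear outcome model, the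
conditional mean of the observed outcome is a quadratic polynomial in the propensity score. -/
theorem roy_observed_mean_quadratic
    {Ω : Type*} [MeasurableSpace Ω] [StandardBorelSpace Ω] [Nonempty Ω]
    (P : Measure Ω) [IsProbabilityMeasure P]
    {k : ℕ} (X : Ω → (Fin k → ℝ)) (Z V Y0 Y1 : Ω → ℝ)
    (hX : Measurable X) (hZ : Measurable Z) (hV : Measurable V)
    (hY0m : Measurable Y0) (hY1m : Measurable Y1)
    (hY0int : Integrable Y0 P) (hY1int : Integrable Y1 P)
    (pi : (Fin k → ℝ) × ℝ → ℝ) (hpi : Measurable pi)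
    (hpi01 : ∀ q, pi q ∈ Set.Icc (0:ℝ) 1)
    (A : Ω → ℝ) (hA : A = fun ω => if pi (X ω, Z ω) > V ω then (1:ℝ) else 0)
    (Y : Ω → ℝ) (hY : Y = fun ω => A ω * Y1 ω + (1 - A ω) * Y0 ω)
    (hCI : CondIndepFun (MeasurableSpace.comap X inferInstance) hX.comap_le Z
      (fun ω => (Y0 ω, Y1 ω, V ω)) P)
    (hUnif : ∀ᵐ x ∂(P.map X),
      condDistrib V X P x = volume.restrict (Set.Icc (0:ℝ) 1))
    (α0 α1 ζ0 ζ1 : ℝ) (β0 β1 : Fin k → ℝ)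
    (he0 : P[Y0 | MeasurableSpace.comap (fun ω => (X ω, V ω)) inferInstance]
      =ᵐ[P] fun ω => α0 - 0.5 * ζ0 + (∑ i, β0 i * X ω i) + ζ0 * V ω)
    (he1 : P[Y1 | MeasurableSpace.comap (fun ω => (X ω, V ω)) inferInstance]
      =ᵐ[P] fun ω => α1 - 0.5 * ζ1 + (∑ i, β1 i * X ω i) + ζ1 * V ω) :
    P[Y | MeasurableSpace.comap (fun ω => (X ω, Z ω)) inferInstance]
      =ᵐ[P] fun ω =>
        α0 + (∑ i, β0 i * X ω i)
          + (α1 - α0 - 0.5 * (ζ1 - ζ0)) * pi (X ω, Z ω)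
          + (∑ i, (β1 i - β0 i) * X ω i) * pi (X ω, Z ω)
          + 0.5 * (ζ1 - ζ0) * (pi (X ω, Z ω)) ^ 2 := by
  have hT : Measurable (fun ω => (X ω, Z ω)) := hX.prodMk hZ
  have hW : Measurable (fun ω => (Y0 ω, Y1 ω, V ω)) := hY0m.prodMk (hY1m.prodMk hV)
  have hU : Measurable (fun ω => ((X ω, Z ω), V ω)) := hT.prodMk hV
  have hm2 : MeasurableSpace.comap (fun ω => ((X ω, Z ω), V ω)) inferInstance
      ≤ ‹MeasurableSpace Ω› := hU.comap_le
  have hTm2 : MeasurableSpace.comap (fun ω => (X ω, Z ω)) inferInstance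
      ≤ MeasurableSpace.comap (fun ω => ((X ω, Z ω), V ω)) inferInstance := by
    have heq : (fun ω => (X ω, Z ω))
        = (fun p : ((Fin k → ℝ) × ℝ) × ℝ => p.1) ∘ (fun ω => ((X ω, Z ω), V ω)) := rfl
    rw [heq, ← MeasurableSpace.comap_comp]
    exact MeasurableSpace.comap_mono measurable_fst.comap_le
  -- measurability of the linear conditional-mean functions
  have hE1m : Measurable (fun p : (Fin k → ℝ) × ℝ =>
      α1 - 0.5 * ζ1 + (∑ i, β1 i * p.1 i) + ζ1 * p.2) := by
    refine Measurable.add (Measurable.add measurable_const ?_) (measurable_const.mul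
      measurable_snd)
    exact Finset.measurable_sum _ fun i _ =>
      measurable_const.mul ((measurable_pi_apply i).comp measurable_fst)
  have hE0m : Measurable (fun p : (Fin k → ℝ) × ℝ =>
      α0 - 0.5 * ζ0 + (∑ i, β0 i * p.1 i) + ζ0 * p.2) := by
    refine Measurable.add (Measurable.add measurable_const ?_) (measurable_const.mul
      measurable_snd)
    exact Finset.measurable_sum _ fun i _ =>
      measurable_const.mul ((measurable_pi_apply i).comp measurable_fst)
  have hE1int : Integrable (fun ω => α1 - 0.5 * ζ1 + (∑ i, β1 i * X ω i) + ζ1 * V ω) P :=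
    integrable_condExp.congr he1
  have hE0int : Integrable (fun ω => α0 - 0.5 * ζ0 + (∑ i, β0 i * X ω i) + ζ0 * V ω) P :=
    integrable_condExp.congr he0
  -- transfer the conditional means to the σ-algebra generated by (X, Z, V)
  have h1 : P[Y1 | MeasurableSpace.comap (fun ω => ((X ω, Z ω), V ω)) inferInstance]
      =ᵐ[P] fun ω => α1 - 0.5 * ζ1 + (∑ i, β1 i * X ω i) + ζ1 * V ω := by
    have := roy_aux_condExp_transfer P X Z V Y0 Y1 hX hZ hV hY0m hY1m hCI
      (fun w => w.2.1) (measurable_fst.comp measurable_snd) hY1int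
      (fun p => α1 - 0.5 * ζ1 + (∑ i, β1 i * p.1 i) + ζ1 * p.2) hE1m hE1int he1
    exact this
  have h0 : P[Y0 | MeasurableSpace.comap (fun ω => ((X ω, Z ω), V ω)) inferInstance]
      =ᵐ[P] fun ω => α0 - 0.5 * ζ0 + (∑ i, β0 i * X ω i) + ζ0 * V ω := by
    have := roy_aux_condExp_transfer P X Z V Y0 Y1 hX hZ hV hY0m hY1m hCI
      (fun w => w.1) measurable_fst hY0int
      (fun p => α0 - 0.5 * ζ0 + (∑ i, β0 i * p.1 i) + ζ0 * p.2) hE0m hE0int he0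
    exact this
  -- the treatment indicator
  have hgm : Measurable (fun p : ((Fin k → ℝ) × ℝ) × ℝ =>
      if pi p.1 > p.2 then (1:ℝ) else 0) := by
    refine Measurable.ite ?_ measurable_const measurable_const
    exact measurableSet_lt measurable_snd (hpi.comp measurable_fst)
  have hAm : Measurable A := by rw [hA]; exact hgm.comp hU
  have hAsm : StronglyMeasurable[MeasurableSpace.comap
      (fun ω => ((X ω, Z ω), V ω)) inferInstance] A := by
    rw [hA]
    exact (hgm.comp (Measurable.of_comap_le le_rfl)).stronglyMeasurable
  have hAbd : ∀ ω, ‖A ω‖ ≤ 1 := by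
    intro ω; rw [hA]
    by_cases hc : pi (X ω, Z ω) > V ω <;> simp [hc]
  have hA1bd : ∀ ω, ‖1 - A ω‖ ≤ 1 := by
    intro ω; rw [hA]
    by_cases hc : pi (X ω, Z ω) > V ω <;> simp [hc]
  have hAYint : Integrable (fun ω => A ω * Y1 ω) P :=
    hY1int.bdd_mul hAm.aestronglyMeasurable (Eventually.of_forall hAbd)
  have hA0int : Integrable (fun ω => (1 - A ω) * Y0 ω) P :=
    hY0int.bdd_mul ((measurable_const.sub hAm).aestronglyMeasurable)
      (Eventually.of_forall hA1bd)
  -- the conditional mean of Y given (X, Z, V)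
  have hYm2 : P[Y | MeasurableSpace.comap (fun ω => ((X ω, Z ω), V ω)) inferInstance]
      =ᵐ[P] fun ω => A ω * (α1 - 0.5 * ζ1 + (∑ i, β1 i * X ω i) + ζ1 * V ω)
        + (1 - A ω) * (α0 - 0.5 * ζ0 + (∑ i, β0 i * X ω i) + ζ0 * V ω) := by
    rw [hY]
    have hadd := condExp_add (μ := P)
      (m := MeasurableSpace.comap (fun ω => ((X ω, Z ω), V ω)) inferInstance)
      hAYint hA0int
    have hmul1 := condExp_mul_of_stronglyMeasurable_left hAsm hAYint hY1int
    have hmul0 := condExp_mul_of_stronglyMeasurable_left (stronglyMeasurable_const.sub hAsm)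
      hA0int hY0int
    refine hadd.trans ?_
    have := hmul1.add hmul0
    refine this.trans ?_
    filter_upwards [h1, h0] with ω hω1 hω0
    simp only [Pi.add_apply, Pi.mul_apply, Pi.sub_apply, Pi.one_apply, hω1, hω0]
  -- the piecewise linear function of ((X,Z),V)
  set g : ((Fin k → ℝ) × ℝ) × ℝ → ℝ := fun q =>
    if pi q.1 > q.2 then α1 - 0.5 * ζ1 + (∑ i, β1 i * q.1.1 i) + ζ1 * q.2
    else α0 - 0.5 * ζ0 + (∑ i, β0 i * q.1.1 i) + ζ0 * q.2 with hgdef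
  have hGpoint : ∀ ω, g ((X ω, Z ω), V ω)
      = A ω * (α1 - 0.5 * ζ1 + (∑ i, β1 i * X ω i) + ζ1 * V ω)
        + (1 - A ω) * (α0 - 0.5 * ζ0 + (∑ i, β0 i * X ω i) + ζ0 * V ω) := by
    intro ω; rw [hA]
    by_cases hc : pi (X ω, Z ω) > V ω <;> simp [hgdef, hc]
  have hGint : Integrable (fun ω => g ((X ω, Z ω), V ω)) P := by
    refine Integrable.congr ?_ (Eventually.of_forall fun ω => (hGpoint ω).symm)
    exact (hE1int.bdd_mul hAm.aestronglyMeasurable (Eventually.of_forall hAbd)).add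
      (hE0int.bdd_mul ((measurable_const.sub hAm).aestronglyMeasurable)
        (Eventually.of_forall hA1bd))
  have hgmeas : Measurable g := by
    refine Measurable.ite ?_ ?_ ?_
    · exact measurableSet_lt measurable_snd (hpi.comp measurable_fst)
    · exact hE1m.comp ((measurable_fst.fst).prodMk measurable_snd)
    · exact hE0m.comp ((measurable_fst.fst).prodMk measurable_snd)
  -- the conditional distribution of V given (X, Z) is uniform
  have hunif' := roy_aux_condDistrib_unif P X Z V Y0 Y1 hX hZ hV hY0m hY1m hCI hUnif
  -- assemble
  have htower := (condExp_condExp_of_le (μ := P) (f := Y) hTm2 hm2).symm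
  have hYG : P[Y | MeasurableSpace.comap (fun ω => ((X ω, Z ω), V ω)) inferInstance]
      =ᵐ[P] fun ω => g ((X ω, Z ω), V ω) :=
    hYm2.trans (Eventually.of_forall fun ω => (hGpoint ω).symm)
  have hcd := condExp_prod_ae_eq_integral_condDistrib (μ := P) hT hV.aemeasurable
    hgmeas.stronglyMeasurable hGint
  refine htower.trans ((condExp_congr_ae hYG).trans (hcd.trans ?_))
  filter_upwards [hunif'] with ω hω
  rw [hω]
  have hcalc : ∫ v, g ((X ω, Z ω), v) ∂(volume.restrict (Set.Icc (0:ℝ) 1))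
      = (α1 - 0.5 * ζ1 + (∑ i, β1 i * X ω i)) * pi (X ω, Z ω)
          + ζ1 * (pi (X ω, Z ω) ^ 2 / 2)
        + ((α0 - 0.5 * ζ0 + (∑ i, β0 i * X ω i)) * (1 - pi (X ω, Z ω))
          + ζ0 * ((1 - pi (X ω, Z ω) ^ 2) / 2)) :=
    roy_aux_integral_piecewise (pi (X ω, Z ω))
      (α0 - 0.5 * ζ0 + (∑ i, β0 i * X ω i)) (α1 - 0.5 * ζ1 + (∑ i, β1 i * X ω i))
      ζ0 ζ1 (hpi01 _).1 (hpi01 _).2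
  rw [hcalc]
  have hsum : (∑ i, (β1 i - β0 i) * X ω i)
      = (∑ i, β1 i * X ω i) - (∑ i, β0 i * X ω i) := by
    rw [← Finset.sum_sub_distrib]
    exact Finset.sum_congr rfl fun i _ => sub_mul _ _ _
  rw [hsum]
  ring
end

section
/- (Equation (6), average treatment effect on the treated.) Under the generalized Roy model with the linear outcome model, assuming (Y₁ − Y₀)·A and X·π(X,Z) are integrable, E[(Y₁ − Y₀)·A] = E[(α₁ − α₀ − 0.5(ζ₁ − ζ₀))·π(X,Z) + (β₁ − β₀)ᵀX·π(X,Z) + 0.5(ζ₁ − ζ₀)·π(X,Z)²]. Consequently, if P(A = 1) > 0, the average treatment effect on the treated is E[Y₁ − Y₀ | A = 1] = P(A = 1)⁻¹ · E[(α₁ − α₀ − 0.5(ζ₁ − ζ₀))·π(X,Z) + (β₁ − β₀)ᵀX·π(X,Z) + 0.5(ζ₁ − ζ₀)·π(X,Z)²], where E[· | A = 1] denotes expectation conditional on the event {A = 1}. -/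
open MeasureTheory ProbabilityTheory Set

namespace RoyAux

/-- rational lower rays -/
def C1 : Set (Set ℝ) := Set.range fun q : ℚ => Iio (q : ℝ)

lemma C1_gen : (inferInstance : MeasurableSpace ℝ) = MeasurableSpace.generateFrom C1 := by
  rw [BorelSpace.measurable_eq (α := ℝ), Real.borel_eq_generateFrom_Iio_rat,
    Set.iUnion_singleton_eq_range]
  rfl

lemma C1_pi : IsPiSystem C1 := by
  rintro _ ⟨q, rfl⟩ _ ⟨r, rfl⟩ -
  exact ⟨min q r, by rw [Set.Iio_inter_Iio]; push_cast; rfl⟩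

lemma C1_span : IsCountablySpanning C1 := by
  refine ⟨fun n => Iio ((n : ℚ) : ℝ), fun n => ⟨n, rfl⟩, ?_⟩
  ext x
  simp only [Set.mem_iUnion, Set.mem_Iio, Set.mem_univ, iff_true]
  obtain ⟨n, hn⟩ := exists_nat_gt x
  exact ⟨n, by exact_mod_cast hn⟩

/-- rational boxes in ℝ × ℝ -/
def C2 : Set (Set (ℝ × ℝ)) := Set.image2 (· ×ˢ ·) C1 C1

lemma C2_gen : (inferInstance : MeasurableSpace (ℝ × ℝ)) = MeasurableSpace.generateFrom C2 :=
  (generateFrom_eq_prod C1_gen.symm C1_gen.symm C1_span C1_span).symm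

lemma C2_pi : IsPiSystem C2 := C1_pi.prod C1_pi

lemma C2_span : IsCountablySpanning C2 := C1_span.prod C1_span

/-- rational boxes in ℝ × ℝ × ℝ -/
def C3 : Set (Set (ℝ × ℝ × ℝ)) := Set.image2 (· ×ˢ ·) C1 C2

lemma C3_gen : (inferInstance : MeasurableSpace (ℝ × ℝ × ℝ)) = MeasurableSpace.generateFrom C3 :=
  (generateFrom_eq_prod C1_gen.symm C2_gen.symm C1_span C2_span).symm

lemma C3_pi : IsPiSystem C3 := C1_pi.prod C2_pi

lemma C3_span : IsCountablySpanning C3 := C1_span.prod C2_span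

/-- rational boxes in ℝ × (ℝ × ℝ × ℝ) -/
def CZT : Set (Set (ℝ × ℝ × ℝ × ℝ)) := Set.image2 (· ×ˢ ·) C1 C3

lemma CZT_gen : (inferInstance : MeasurableSpace (ℝ × ℝ × ℝ × ℝ))
    = MeasurableSpace.generateFrom CZT :=
  (generateFrom_eq_prod C1_gen.symm C3_gen.symm C1_span C3_span).symm

lemma CZT_pi : IsPiSystem CZT := C1_pi.prod C3_pi

/-- extensionality for probability measures agreeing on a generating π-system -/
lemma meas_ext {α : Type*} [MeasurableSpace α] {C : Set (Set α)}
    (hgen : (inferInstance : MeasurableSpace α) = MeasurableSpace.generateFrom C)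
    (hpi : IsPiSystem C) (μ ν : Measure α) [IsProbabilityMeasure μ] [IsProbabilityMeasure ν]
    (h : ∀ s ∈ C, μ s = ν s) : μ = ν :=
  MeasureTheory.ext_of_generate_finite C hgen hpi h (by simp)

/-- explicit uniform integral computation -/
lemma unif_int (a z p : ℝ) (h0 : 0 ≤ p) (h1 : p ≤ 1) :
    ∫ v in Icc (0:ℝ) 1, (a + z * v) * (if v < p then 1 else 0) = a * p + z * (p ^ 2 / 2) := by
  have h2 : (fun v => (a + z * v) * (if v < p then 1 else 0))
      = (Iio p).indicator (fun v => a + z * v) := by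
    funext v; by_cases h : v < p <;> simp [Set.indicator, h]
  rw [h2, integral_indicator measurableSet_Iio, Measure.restrict_restrict measurableSet_Iio]
  have h3 : Iio p ∩ Icc (0:ℝ) 1 = Ico 0 p := by
    ext v
    simp only [Set.mem_inter_iff, Set.mem_Iio, Set.mem_Icc, Set.mem_Ico]
    constructor
    · rintro ⟨h4, h5, h6⟩; exact ⟨h5, h4⟩
    · rintro ⟨h4, h5⟩; exact ⟨h5, h4, le_trans h5.le h1⟩
  rw [h3, setIntegral_congr_set Ico_ae_eq_Ioc, ← intervalIntegral.integral_of_le h0,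
    intervalIntegral.integral_add intervalIntegrable_const
      (intervalIntegral.intervalIntegrable_id.const_mul z),
    intervalIntegral.integral_const, intervalIntegral.integral_const_mul,
    integral_id, smul_eq_mul]
  ring

/-- a variance-zero criterion -/
lemma ae_eq_const_of_integrals {α : Type*} [MeasurableSpace α] (μ : Measure α)
    [IsProbabilityMeasure μ] {g : α → ℝ} (c : ℝ) (hg : Integrable g μ)
    (hg2 : Integrable (fun x => g x ^ 2) μ)
    (h1 : ∫ x, g x ∂μ = c) (h2 : ∫ x, g x ^ 2 ∂μ = c ^ 2) :
    ∀ᵐ x ∂μ, g x = c := by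
  have hint : Integrable (fun x => (g x - c) ^ 2) μ := by
    have : (fun x => (g x - c) ^ 2) = fun x => g x ^ 2 - (2 * c) * g x + c ^ 2 := by
      funext x; ring
    rw [this]
    exact (hg2.sub (hg.const_mul (2 * c))).add (integrable_const _)
  have hz : ∫ x, (g x - c) ^ 2 ∂μ = 0 := by
    have heq : (fun x => (g x - c) ^ 2) = fun x => (g x ^ 2 - (2 * c) * g x) + c ^ 2 := by
      funext x; ring
    have hInt1 : Integrable (fun x => g x ^ 2 - (2 * c) * g x) μ :=
      hg2.sub (hg.const_mul (2 * c))
    rw [heq, integral_add hInt1 (integrable_const _),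
      integral_sub hg2 (hg.const_mul (2 * c)), integral_const_mul, h1, h2, integral_const]
    simp
    ring
  have h0 := (integral_eq_zero_iff_of_nonneg (fun x => sq_nonneg (g x - c)) hint).mp hz
  filter_upwards [h0] with x hx
  have : (g x - c) ^ 2 = 0 := hx
  nlinarith [sq_nonneg (g x - c)]

/-- limit extension from rationals to reals for the indicator integral -/
lemma key_limit {α : Type*} [MeasurableSpace α] (μ : Measure α) [IsProbabilityMeasure μ]
    {D V : α → ℝ} (hDi : Integrable D μ) (hV : Measurable V) {c z p : ℝ}
    (hp : 0 < p) (hp1 : p ≤ 1)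
    (hq : ∀ q : ℚ, 0 < (q : ℝ) → (q : ℝ) < p →
      ∫ x, D x * (if V x < (q : ℝ) then 1 else 0) ∂μ = c * (q : ℝ) + z * ((q : ℝ) ^ 2 / 2)) :
    ∫ x, D x * (if V x < p then 1 else 0) ∂μ = c * p + z * (p ^ 2 / 2) := by
  -- choose rationals qn ∈ (0, p) tending to p
  have hsel : ∀ n : ℕ, ∃ q : ℚ, max (p - 1 / (n + 1)) (p / 2) < (q : ℝ) ∧ (q : ℝ) < p := by
    intro n
    apply exists_rat_btwn
    apply max_lt
    · have : (0:ℝ) < 1 / (n + 1) := by positivity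
      linarith
    · linarith
  choose q hq1 hq2 using hsel
  have hqpos : ∀ n, 0 < ((q n : ℝ)) := fun n =>
    lt_of_le_of_lt (le_max_of_le_right (by linarith)) (hq1 n)
  have hqtend : Filter.Tendsto (fun n => ((q n : ℝ))) Filter.atTop (nhds p) := by
    have hlow : Filter.Tendsto (fun n : ℕ => p - 1 / (n + 1 : ℝ)) Filter.atTop (nhds p) := by
      have := tendsto_one_div_add_atTop_nhds_zero_nat (𝕜 := ℝ)
      have h2 := Filter.Tendsto.const_sub p this
      simpa using h2
    refine tendsto_of_tendsto_of_tendsto_of_le_of_le hlow tendsto_const_nhds ?_ ?_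
    · intro n; exact (le_max_left _ _).trans (hq1 n).le
    · intro n; exact (hq2 n).le
  -- dominated convergence
  have hmeas : ∀ n : ℕ, AEStronglyMeasurable (fun x => D x * (if V x < (q n : ℝ) then 1 else 0)) μ := by
    intro n
    refine hDi.1.mul ?_
    exact (Measurable.ite (hV measurableSet_Iio) measurable_const
      measurable_const).aestronglyMeasurable
  have hbound : ∀ n : ℕ, ∀ᵐ x ∂μ, ‖D x * (if V x < (q n : ℝ) then 1 else 0)‖ ≤ |D x| := by
    intro n
    filter_upwards with x
    rw [norm_mul]
    by_cases h : V x < (q n : ℝ) <;> simp [h, abs_nonneg]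
  have htendsto : ∀ᵐ x ∂μ, Filter.Tendsto (fun n => D x * (if V x < (q n : ℝ) then 1 else 0))
      Filter.atTop (nhds (D x * (if V x < p then 1 else 0))) := by
    filter_upwards with x
    by_cases h : V x < p
    · have hev : ∀ᶠ n in Filter.atTop, V x < ((q n : ℝ)) :=
        hqtend.eventually (eventually_gt_nhds h)
      rw [if_pos h]
      refine Filter.Tendsto.congr' ?_ tendsto_const_nhds
      filter_upwards [hev] with n hn
      rw [if_pos hn]
    · have : ∀ n, ¬ (V x < (q n : ℝ)) := fun n => fun hc => h (hc.trans (hq2 n))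
      simp only [if_neg h, if_neg (this _), mul_zero]
      exact tendsto_const_nhds
  have hDC := tendsto_integral_of_dominated_convergence (fun x => |D x|) hmeas
    hDi.abs hbound htendsto
  have hvals : Filter.Tendsto (fun n => ∫ x, D x * (if V x < (q n : ℝ) then 1 else 0) ∂μ)
      Filter.atTop (nhds (c * p + z * (p ^ 2 / 2))) := by
    have heq : (fun n => ∫ x, D x * (if V x < (q n : ℝ) then 1 else 0) ∂μ)
        = fun n => c * (q n : ℝ) + z * ((q n : ℝ) ^ 2 / 2) := by
      funext n; exact hq (q n) (hqpos n) (hq2 n)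
    rw [heq]
    have hcont : Continuous (fun t : ℝ => c * t + z * (t ^ 2 / 2)) := by continuity
    exact (hcont.tendsto p).comp hqtend
  exact tendsto_nhds_unique hDC hvals

end RoyAux

/-- Equation (6): under the generalized Roy model with the linear outcome model,
`E[(Y₁ − Y₀)·A] = E[c·π + bᵀX·π + s·π²]` with `c = α₁ − α₀ − 0.5(ζ₁ − ζ₀)`, `b = β₁ − β₀`,
`s = 0.5(ζ₁ − ζ₀)`; and if `P(A=1) > 0` the ATT is `P(A=1)⁻¹` times that expectation. -/
theorem roy_att_linear
    {Ω : Type*} [MeasurableSpace Ω] [StandardBorelSpace Ω] [Nonempty Ω]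
    (P : Measure Ω) [IsProbabilityMeasure P]
    {k : ℕ} (X : Ω → (Fin k → ℝ)) (Z V Y0 Y1 : Ω → ℝ)
    (hX : Measurable X) (hZ : Measurable Z) (hV : Measurable V)
    (hY0m : Measurable Y0) (hY1m : Measurable Y1)
    (hY0int : Integrable Y0 P) (hY1int : Integrable Y1 P)
    (pi : (Fin k → ℝ) × ℝ → ℝ) (hpi : Measurable pi)
    (hpi01 : ∀ q, pi q ∈ Set.Icc (0:ℝ) 1)
    (A : Ω → ℝ) (hA : A = fun ω => if pi (X ω, Z ω) > V ω then (1:ℝ) else 0)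
    (Y : Ω → ℝ) (hY : Y = fun ω => A ω * Y1 ω + (1 - A ω) * Y0 ω)
    (hCI : CondIndepFun (MeasurableSpace.comap X inferInstance) hX.comap_le Z
      (fun ω => (Y0 ω, Y1 ω, V ω)) P)
    (hUnif : ∀ᵐ x ∂(P.map X),
      condDistrib V X P x = volume.restrict (Set.Icc (0:ℝ) 1))
    (α0 α1 ζ0 ζ1 : ℝ) (β0 β1 : Fin k → ℝ)
    (he0 : P[Y0 | MeasurableSpace.comap (fun ω => (X ω, V ω)) inferInstance]
      =ᵐ[P] fun ω => α0 - 0.5 * ζ0 + (∑ i, β0 i * X ω i) + ζ0 * V ω)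
    (he1 : P[Y1 | MeasurableSpace.comap (fun ω => (X ω, V ω)) inferInstance]
      =ᵐ[P] fun ω => α1 - 0.5 * ζ1 + (∑ i, β1 i * X ω i) + ζ1 * V ω)
    (hint : Integrable (fun ω => (Y1 ω - Y0 ω) * A ω) P)
    (hXpi : ∀ i, Integrable (fun ω => X ω i * pi (X ω, Z ω)) P) :
    (∫ ω, (Y1 ω - Y0 ω) * A ω ∂P
        = ∫ ω, ((α1 - α0 - 0.5 * (ζ1 - ζ0)) * pi (X ω, Z ω)
            + (∑ i, (β1 i - β0 i) * X ω i) * pi (X ω, Z ω)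
            + 0.5 * (ζ1 - ζ0) * (pi (X ω, Z ω)) ^ 2) ∂P)
    ∧ (0 < P {ω | A ω = 1} →
        ∫ ω, (Y1 ω - Y0 ω) ∂(P[|{ω | A ω = 1}])
          = (P {ω | A ω = 1}).toReal⁻¹
              * ∫ ω, ((α1 - α0 - 0.5 * (ζ1 - ζ0)) * pi (X ω, Z ω)
                  + (∑ i, (β1 i - β0 i) * X ω i) * pi (X ω, Z ω)
                  + 0.5 * (ζ1 - ζ0) * (pi (X ω, Z ω)) ^ 2) ∂P) := by
  classical
  subst hA
  simp only [] at hint ⊢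
  have hpi0 : ∀ q, 0 ≤ pi q := fun q => (hpi01 q).1
  have hpi1 : ∀ q, pi q ≤ 1 := fun q => (hpi01 q).2
  -- notation
  have hle : MeasurableSpace.comap X inferInstance ≤ (inferInstance : MeasurableSpace Ω) :=
    hX.comap_le
  set T : Ω → ℝ × ℝ × ℝ := fun ω => (Y0 ω, Y1 ω, V ω) with hTdef
  set g : Ω → ℝ := fun ω => (α1 - α0 - 0.5 * (ζ1 - ζ0)) * pi (X ω, Z ω)
      + (∑ i, (β1 i - β0 i) * X ω i) * pi (X ω, Z ω)
      + 0.5 * (ζ1 - ζ0) * (pi (X ω, Z ω)) ^ 2 with hgdef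
  set R : Ω → ℝ := fun ω => (α1 - α0 - 0.5 * (ζ1 - ζ0))
      + (∑ i, (β1 i - β0 i) * X ω i) + (ζ1 - ζ0) * V ω with hRdef
  have hT_meas : Measurable T := hY0m.prodMk (hY1m.prodMk hV)
  have hW_meas : Measurable fun ω => (X ω, Z ω) := hX.prodMk hZ
  have hπW : Measurable fun ω => pi (X ω, Z ω) := hpi.comp hW_meas
  have hD_int : Integrable (fun ω => Y1 ω - Y0 ω) P := hY1int.sub hY0int
  have hD_meas : Measurable fun ω => Y1 ω - Y0 ω := hY1m.sub hY0m
  have hA_meas : Measurable fun ω => if pi (X ω, Z ω) > V ω then (1:ℝ) else 0 :=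
    Measurable.ite (measurableSet_lt hV hπW) measurable_const measurable_const
  have hXV_meas : Measurable fun ω => (X ω, V ω) := hX.prodMk hV
  have hmXV_le : (MeasurableSpace.comap (fun ω => (X ω, V ω)) inferInstance) ≤ (inferInstance : MeasurableSpace Ω) := hXV_meas.comap_le
  have hmX_le_mXV : (MeasurableSpace.comap X inferInstance) ≤ (MeasurableSpace.comap (fun ω => (X ω, V ω)) inferInstance) := by
    rintro s ⟨t, ht, rfl⟩
    exact ⟨Prod.fst ⁻¹' t, measurable_fst ht, rfl⟩
  have hXsum_meas : Measurable fun ω => ∑ i, (β1 i - β0 i) * X ω i :=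
    Finset.univ.measurable_sum fun i _ =>
      ((measurable_pi_apply i).comp hX).const_mul _
  have hR_meas : Measurable R := by
    rw [hRdef]
    exact (measurable_const.add hXsum_meas).add (hV.const_mul _)
  -- conditional expectation of Y1 - Y0 given (X, V)
  have hR_cond : P[fun ω => Y1 ω - Y0 ω | (MeasurableSpace.comap (fun ω => (X ω, V ω)) inferInstance)] =ᵐ[P] R := by
    refine (condExp_sub hY1int hY0int _).trans ?_
    filter_upwards [he0, he1] with ω h0 h1
    have hsum : ∑ i, (β1 i - β0 i) * X ω i
        = (∑ i, β1 i * X ω i) - ∑ i, β0 i * X ω i := by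
      rw [← Finset.sum_sub_distrib]
      exact Finset.sum_congr rfl fun i _ => by ring
    simp only [Pi.sub_apply, h0, h1, hRdef]
    rw [hsum]; ring
  have hR_int : Integrable R P := integrable_condExp.congr hR_cond
  haveI uni_prob : IsProbabilityMeasure (volume.restrict (Icc (0:ℝ) 1)) :=
    ⟨by simp [Real.volume_Icc]⟩
  -- (K1) X is a.s. constant under the conditional kernel
  have hXconst : ∀ᵐ ω ∂P, ∀ᵐ η ∂((condExpKernel P (MeasurableSpace.comap X inferInstance)) ω), X η = X ω := by
    have hae : ∀ i : Fin k, ∀ᵐ ω ∂P, ∀ᵐ η ∂((condExpKernel P (MeasurableSpace.comap X inferInstance)) ω), X η i = X ω i := by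
      intro i
      set G : Ω → ℝ := fun ω => Real.arctan (X ω i) with hGdef
      have hG_meas : Measurable G :=
        Real.measurable_arctan.comp ((measurable_pi_apply i).comp hX)
      have hGmX : Measurable[(MeasurableSpace.comap X inferInstance)] G := by
        refine Real.measurable_arctan.comp ((measurable_pi_apply i).comp ?_)
        exact Measurable.of_comap_le le_rfl
      have hGb : ∀ ω, ‖G ω‖ ≤ Real.pi / 2 := fun ω => by
        rw [Real.norm_eq_abs, hGdef]
        exact abs_le.mpr ⟨(Real.neg_pi_div_two_lt_arctan _).le,
          (Real.arctan_lt_pi_div_two _).le⟩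
      have hG_int : Integrable G P :=
        (integrable_const (Real.pi / 2)).mono' hG_meas.aestronglyMeasurable
          (Filter.Eventually.of_forall hGb)
      have hG2_int : Integrable (fun ω => G ω ^ 2) P := by
        refine (integrable_const ((Real.pi / 2) ^ 2)).mono'
          (hG_meas.pow_const 2).aestronglyMeasurable
          (Filter.Eventually.of_forall fun ω => ?_)
        rw [Real.norm_eq_abs, abs_pow]
        refine pow_le_pow_left₀ (abs_nonneg _) ?_ 2
        rw [← Real.norm_eq_abs]; exact hGb ω
      have e1 : P[G|(MeasurableSpace.comap X inferInstance)] =ᵐ[P] fun ω => ∫ η, G η ∂((condExpKernel P (MeasurableSpace.comap X inferInstance)) ω) :=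
        condExp_ae_eq_integral_condExpKernel hle hG_int
      have e1' : P[G|(MeasurableSpace.comap X inferInstance)] = G :=
        condExp_of_stronglyMeasurable hle hGmX.stronglyMeasurable hG_int
      have e2 : P[fun ω => G ω ^ 2|(MeasurableSpace.comap X inferInstance)] =ᵐ[P] fun ω => ∫ η, G η ^ 2 ∂((condExpKernel P (MeasurableSpace.comap X inferInstance)) ω) :=
        condExp_ae_eq_integral_condExpKernel hle hG2_int
      have e2' : P[fun ω => G ω ^ 2|(MeasurableSpace.comap X inferInstance)] = fun ω => G ω ^ 2 :=
        condExp_of_stronglyMeasurable hle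
          ((hGmX.pow_const 2).stronglyMeasurable) hG2_int
      have k1 := hG_int.condExpKernel_ae (m := (MeasurableSpace.comap X inferInstance))
      have k2 := hG2_int.condExpKernel_ae (m := (MeasurableSpace.comap X inferInstance))
      filter_upwards [e1, e2, k1, k2] with ω h1 h2 hk1 hk2
      haveI : IsProbabilityMeasure ((condExpKernel P (MeasurableSpace.comap X inferInstance)) ω) :=
        inferInstance
      have hInt1 : ∫ η, G η ∂((condExpKernel P (MeasurableSpace.comap X inferInstance)) ω) = G ω := by
        rw [← h1, e1']
      have hInt2 : ∫ η, G η ^ 2 ∂((condExpKernel P (MeasurableSpace.comap X inferInstance)) ω) = G ω ^ 2 := by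
        rw [← h2, e2']
      have hconst := RoyAux.ae_eq_const_of_integrals ((condExpKernel P (MeasurableSpace.comap X inferInstance)) ω) (G ω) hk1 hk2 hInt1 hInt2
      filter_upwards [hconst] with η hη
      exact Real.arctan_injective hη
    have hall := ae_all_iff.mpr hae
    filter_upwards [hall] with ω hω
    have h2 : ∀ᵐ η ∂((condExpKernel P (MeasurableSpace.comap X inferInstance)) ω), ∀ i, X η i = X ω i := ae_all_iff.mpr hω
    filter_upwards [h2] with η hη
    exact funext hη
  -- (K2) the conditional law of V is uniform
  have hVuni : ∀ᵐ ω ∂P, ((condExpKernel P (MeasurableSpace.comap X inferInstance)) ω).map V = volume.restrict (Icc (0:ℝ) 1) := by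
    have hDistrib : ∀ᵐ ω ∂P, condDistrib V X P (X ω) = volume.restrict (Icc (0:ℝ) 1) :=
      ae_of_ae_map hX.aemeasurable hUnif
    have hq : ∀ q : ℚ, ∀ᵐ ω ∂P,
        (condExpKernel P (MeasurableSpace.comap X inferInstance)) ω (V ⁻¹' Iio (q:ℝ)) = volume.restrict (Icc (0:ℝ) 1) (Iio (q:ℝ)) := by
      intro q
      have h1 := condExpKernel_ae_eq_condExp (μ := P) hle
        (hV (measurableSet_Iio (a := (q:ℝ))))
      have h2 := condDistrib_ae_eq_condExp (μ := P) hX hV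
        (measurableSet_Iio (a := (q:ℝ)))
      have h12 : (fun ω => ((condExpKernel P (MeasurableSpace.comap X inferInstance)) ω (V ⁻¹' Iio (q:ℝ))).toReal)
          =ᵐ[P] fun ω => (condDistrib V X P (X ω) (Iio (q:ℝ))).toReal :=
        h1.trans h2.symm
      filter_upwards [h12, hDistrib] with ω e12 e3
      have : ((condExpKernel P (MeasurableSpace.comap X inferInstance)) ω (V ⁻¹' Iio (q:ℝ))).toReal
          = (volume.restrict (Icc (0:ℝ) 1) (Iio (q:ℝ))).toReal := by
        rw [e12, e3]
      exact (ENNReal.toReal_eq_toReal_iff' (measure_ne_top _ _) (measure_ne_top _ _)).mp this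
    filter_upwards [ae_all_iff.mpr hq] with ω hω
    haveI : IsProbabilityMeasure ((condExpKernel P (MeasurableSpace.comap X inferInstance)) ω) := inferInstance
    haveI : IsProbabilityMeasure (((condExpKernel P (MeasurableSpace.comap X inferInstance)) ω).map V) := Measure.isProbabilityMeasure_map hV.aemeasurable
    refine RoyAux.meas_ext RoyAux.C1_gen RoyAux.C1_pi _ _ ?_
    rintro _ ⟨q, rfl⟩
    rw [Measure.map_apply hV measurableSet_Iio]
    exact hω q
  -- (K3) conditional independence gives product structure
  have hIndep : ∀ᵐ ω ∂P, ((condExpKernel P (MeasurableSpace.comap X inferInstance)) ω).map (fun η => (Z η, T η))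
      = (((condExpKernel P (MeasurableSpace.comap X inferInstance)) ω).map Z).prod (((condExpKernel P (MeasurableSpace.comap X inferInstance)) ω).map T) := by
    have hbase : ∀ q r1 r2 r3 : ℚ, ∀ᵐ ω ∂P,
        (condExpKernel P (MeasurableSpace.comap X inferInstance)) ω (Z ⁻¹' Iio (q:ℝ) ∩ T ⁻¹' (Iio (r1:ℝ) ×ˢ Iio (r2:ℝ) ×ˢ Iio (r3:ℝ)))
          = (condExpKernel P (MeasurableSpace.comap X inferInstance)) ω (Z ⁻¹' Iio (q:ℝ))
            * (condExpKernel P (MeasurableSpace.comap X inferInstance)) ω (T ⁻¹' (Iio (r1:ℝ) ×ˢ Iio (r2:ℝ) ×ˢ Iio (r3:ℝ))) := by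
      intro q r1 r2 r3
      have h := hCI (Z ⁻¹' Iio (q:ℝ))
        (T ⁻¹' (Iio (r1:ℝ) ×ˢ Iio (r2:ℝ) ×ˢ Iio (r3:ℝ)))
        ⟨Iio (q:ℝ), measurableSet_Iio, rfl⟩
        ⟨Iio (r1:ℝ) ×ˢ Iio (r2:ℝ) ×ˢ Iio (r3:ℝ),
          (measurableSet_Iio.prod (measurableSet_Iio.prod measurableSet_Iio)), rfl⟩
      exact ae_of_ae_trim hX.comap_le h
    have h4 := ae_all_iff.mpr fun q => ae_all_iff.mpr fun r1 =>
      ae_all_iff.mpr fun r2 => ae_all_iff.mpr fun r3 => hbase q r1 r2 r3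
    filter_upwards [h4] with ω hω
    haveI : IsProbabilityMeasure ((condExpKernel P (MeasurableSpace.comap X inferInstance)) ω) := inferInstance
    haveI : IsProbabilityMeasure (((condExpKernel P (MeasurableSpace.comap X inferInstance)) ω).map Z) := Measure.isProbabilityMeasure_map hZ.aemeasurable
    haveI : IsProbabilityMeasure (((condExpKernel P (MeasurableSpace.comap X inferInstance)) ω).map T) :=
      Measure.isProbabilityMeasure_map hT_meas.aemeasurable
    haveI : IsProbabilityMeasure (((condExpKernel P (MeasurableSpace.comap X inferInstance)) ω).map (fun η => (Z η, T η))) :=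
      Measure.isProbabilityMeasure_map (hZ.prodMk hT_meas).aemeasurable
    refine RoyAux.meas_ext RoyAux.CZT_gen RoyAux.CZT_pi _ _ ?_
    rintro _ ⟨_, ⟨q, rfl⟩, _, ⟨_, ⟨r1, rfl⟩, _, ⟨_, ⟨r2, rfl⟩, _, ⟨r3, rfl⟩, rfl⟩, rfl⟩, rfl⟩
    have hbox : MeasurableSet (Iio (r1:ℝ) ×ˢ Iio (r2:ℝ) ×ˢ Iio (r3:ℝ)) :=
      measurableSet_Iio.prod (measurableSet_Iio.prod measurableSet_Iio)
    rw [Measure.map_apply (hZ.prodMk hT_meas) (measurableSet_Iio.prod hbox),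
      Set.mk_preimage_prod, Measure.prod_prod,
      Measure.map_apply hZ measurableSet_Iio, Measure.map_apply hT_meas hbox]
    exact hω q r1 r2 r3
  -- (K4),(K6) integrability under the kernel
  have hDκ := hD_int.condExpKernel_ae (m := (MeasurableSpace.comap X inferInstance))
  have hRκ := hR_int.condExpKernel_ae (m := (MeasurableSpace.comap X inferInstance))
  -- (K5) conditional moment identity
  have hK5 : ∀ᵐ ω ∂P, ∀ q : ℚ,
      ∫ η, (if V η < (q:ℝ) then (1:ℝ) else 0) * (Y1 η - Y0 η) ∂((condExpKernel P (MeasurableSpace.comap X inferInstance)) ω)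
        = ∫ η, (if V η < (q:ℝ) then (1:ℝ) else 0) * R η ∂((condExpKernel P (MeasurableSpace.comap X inferInstance)) ω) := by
    refine ae_all_iff.mpr fun q => ?_
    set e : Ω → ℝ := fun ω => if V ω < (q:ℝ) then 1 else 0 with hedef
    have he_meas : Measurable e :=
      Measurable.ite (hV measurableSet_Iio) measurable_const measurable_const
    have hVmXV : Measurable[(MeasurableSpace.comap (fun ω => (X ω, V ω)) inferInstance)] V := by
      have hU : Measurable[(MeasurableSpace.comap (fun ω => (X ω, V ω)) inferInstance)] fun ω => (X ω, V ω) := Measurable.of_comap_le le_rfl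
      exact measurable_snd.comp hU
    have he_mXV : StronglyMeasurable[(MeasurableSpace.comap (fun ω => (X ω, V ω)) inferInstance)] e :=
      (Measurable.ite (hVmXV measurableSet_Iio) measurable_const
        measurable_const).stronglyMeasurable
    have hebd : ∀ᵐ ω ∂P, ‖e ω‖ ≤ 1 := Filter.Eventually.of_forall ( fun ω => by
      rw [hedef]; by_cases h : V ω < (q:ℝ) <;> simp [h])
    have heD_int : Integrable (e * fun ω => Y1 ω - Y0 ω) P :=
      hD_int.bdd_mul he_meas.aestronglyMeasurable hebd
    have heR_int : Integrable (e * R) P :=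
      hR_int.bdd_mul he_meas.aestronglyMeasurable hebd
    have p1 : P[e * fun ω => Y1 ω - Y0 ω|(MeasurableSpace.comap (fun ω => (X ω, V ω)) inferInstance)] =ᵐ[P] e * P[fun ω => Y1 ω - Y0 ω|(MeasurableSpace.comap (fun ω => (X ω, V ω)) inferInstance)] :=
      condExp_mul_of_stronglyMeasurable_left he_mXV heD_int hD_int
    have p2 : e * P[fun ω => Y1 ω - Y0 ω|(MeasurableSpace.comap (fun ω => (X ω, V ω)) inferInstance)] =ᵐ[P] e * R :=
      hR_cond.mono fun ω h => by simp only [Pi.mul_apply, h]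
    have p3 : P[e * fun ω => Y1 ω - Y0 ω|(MeasurableSpace.comap X inferInstance)] =ᵐ[P] P[e * R|(MeasurableSpace.comap X inferInstance)] :=
      (condExp_condExp_of_le hmX_le_mXV hmXV_le).symm.trans
        (condExp_congr_ae (p1.trans p2))
    have q1 := condExp_ae_eq_integral_condExpKernel hle heD_int
    have q2 := condExp_ae_eq_integral_condExpKernel hle heR_int
    filter_upwards [p3, q1, q2] with ω h3 h1 h2
    have : ∫ η, (e * fun ω => Y1 ω - Y0 ω) η ∂((condExpKernel P (MeasurableSpace.comap X inferInstance)) ω) = ∫ η, (e * R) η ∂((condExpKernel P (MeasurableSpace.comap X inferInstance)) ω) := by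
      rw [← h1, ← h2]; exact h3
    exact this
  -- Main identity: conditional expectations agree
  have key : P[(fun ω => (Y1 ω - Y0 ω) * (if pi (X ω, Z ω) > V ω then (1:ℝ) else 0))|(MeasurableSpace.comap X inferInstance)]
      =ᵐ[P] P[g|(MeasurableSpace.comap X inferInstance)] := by
    have hg_int : Integrable g P := by
      rw [hgdef]
      have t1 : Integrable (fun ω => (α1 - α0 - 0.5 * (ζ1 - ζ0)) * pi (X ω, Z ω)) P := by
        refine (integrable_const (|α1 - α0 - 0.5 * (ζ1 - ζ0)|)).mono'
          (hπW.const_mul _).aestronglyMeasurable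
          (Filter.Eventually.of_forall fun ω => ?_)
        rw [Real.norm_eq_abs, abs_mul]
        have := abs_le.mpr ⟨by linarith [hpi0 (X ω, Z ω)], hpi1 (X ω, Z ω)⟩
        calc |α1 - α0 - 0.5 * (ζ1 - ζ0)| * |pi (X ω, Z ω)|
            ≤ |α1 - α0 - 0.5 * (ζ1 - ζ0)| * 1 := by
              refine mul_le_mul_of_nonneg_left ?_ (abs_nonneg _)
              exact this
          _ = |α1 - α0 - 0.5 * (ζ1 - ζ0)| := mul_one _
      have t2 : Integrable (fun ω => (∑ i, (β1 i - β0 i) * X ω i) * pi (X ω, Z ω)) P := by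
        have : (fun ω => (∑ i, (β1 i - β0 i) * X ω i) * pi (X ω, Z ω))
            = fun ω => ∑ i, (β1 i - β0 i) * (X ω i * pi (X ω, Z ω)) := by
          funext ω
          rw [Finset.sum_mul]
          exact Finset.sum_congr rfl fun i _ => by ring
        rw [this]
        exact integrable_finset_sum _ fun i _ => (hXpi i).const_mul _
      have t3 : Integrable (fun ω => 0.5 * (ζ1 - ζ0) * pi (X ω, Z ω) ^ 2) P := by
        refine (integrable_const (|0.5 * (ζ1 - ζ0)|)).mono'
          ((hπW.pow_const 2).const_mul _).aestronglyMeasurable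
          (Filter.Eventually.of_forall fun ω => ?_)
        rw [Real.norm_eq_abs, abs_mul, abs_pow]
        have h01 : |pi (X ω, Z ω)| ≤ 1 := abs_le.mpr
          ⟨by linarith [hpi0 (X ω, Z ω)], hpi1 (X ω, Z ω)⟩
        calc |0.5 * (ζ1 - ζ0)| * |pi (X ω, Z ω)| ^ 2
            ≤ |0.5 * (ζ1 - ζ0)| * 1 := by
              refine mul_le_mul_of_nonneg_left ?_ (abs_nonneg _)
              calc |pi (X ω, Z ω)| ^ 2 ≤ 1 ^ 2 := pow_le_pow_left₀ (abs_nonneg _) h01 2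
                _ = 1 := one_pow 2
          _ = |0.5 * (ζ1 - ζ0)| := mul_one _
      exact (t1.add t2).add t3
    have r1 := condExp_ae_eq_integral_condExpKernel hle hint
    have r2 := condExp_ae_eq_integral_condExpKernel hle hg_int
    refine r1.trans (Filter.EventuallyEq.trans ?_ r2.symm)
    filter_upwards [hXconst, hVuni, hIndep, hDκ, hK5, hRκ] with ω hXc hVu hInd hDk hK5ω hRk
    haveI : IsProbabilityMeasure ((condExpKernel P (MeasurableSpace.comap X inferInstance)) ω) := inferInstance
    haveI : IsProbabilityMeasure (((condExpKernel P (MeasurableSpace.comap X inferInstance)) ω).map Z) := Measure.isProbabilityMeasure_map hZ.aemeasurable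
    haveI : IsProbabilityMeasure (((condExpKernel P (MeasurableSpace.comap X inferInstance)) ω).map T) :=
      Measure.isProbabilityMeasure_map hT_meas.aemeasurable
    set x₀ := X ω with hx₀
    set c'' : ℝ := (α1 - α0 - 0.5 * (ζ1 - ζ0)) + ∑ i, (β1 i - β0 i) * x₀ i with hc''
    -- (C1) the key one-dimensional conditional moment
    have hc1 : ∀ p : ℝ, 0 ≤ p → p ≤ 1 →
        ∫ η, (Y1 η - Y0 η) * (if V η < p then 1 else 0) ∂((condExpKernel P (MeasurableSpace.comap X inferInstance)) ω)
          = c'' * p + (ζ1 - ζ0) * (p ^ 2 / 2) := by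
      intro p hp0 hp1
      rcases eq_or_lt_of_le hp0 with h0 | h0
      · -- p = 0
        have hV0 : ∀ᵐ η ∂((condExpKernel P (MeasurableSpace.comap X inferInstance)) ω), ¬ (V η < p) := by
          have hmap : ((condExpKernel P (MeasurableSpace.comap X inferInstance)) ω) (V ⁻¹' Iio p) = 0 := by
            have h := congrArg (fun m : Measure ℝ => m (Iio p)) hVu
            rw [Measure.map_apply hV measurableSet_Iio] at h
            rw [h, Measure.restrict_apply measurableSet_Iio]
            have : Iio p ∩ Icc (0:ℝ) 1 = ∅ := by
              refine Set.eq_empty_iff_forall_notMem.mpr ?_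
              rintro v ⟨hv, hv0, -⟩
              rw [← h0] at hv
              exact absurd hv (not_lt.mpr hv0)
            rw [this]
            simp
          have := measure_eq_zero_iff_ae_notMem.mp hmap
          filter_upwards [this] with η hη
          exact hη
        have hzero : ∫ η, (Y1 η - Y0 η) * (if V η < p then 1 else 0) ∂((condExpKernel P (MeasurableSpace.comap X inferInstance)) ω) = 0 := by
          have hcg : ∫ η, (Y1 η - Y0 η) * (if V η < p then 1 else 0)
                ∂((condExpKernel P (MeasurableSpace.comap X inferInstance)) ω)
              = ∫ _η, (0:ℝ) ∂((condExpKernel P (MeasurableSpace.comap X inferInstance)) ω) := by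
            refine integral_congr_ae ?_
            filter_upwards [hV0] with η hη
            simp [hη]
          rw [hcg, integral_zero]
        rw [hzero, ← h0]
        ring
      · refine RoyAux.key_limit ((condExpKernel P (MeasurableSpace.comap X inferInstance)) ω) hDk hV h0 hp1 fun q hq0 hqp => ?_
        have hq1 : (q:ℝ) ≤ 1 := (hqp.trans_le hp1).le
        have e1 : ∫ η, (Y1 η - Y0 η) * (if V η < (q:ℝ) then 1 else 0) ∂((condExpKernel P (MeasurableSpace.comap X inferInstance)) ω)
            = ∫ η, (if V η < (q:ℝ) then (1:ℝ) else 0) * R η ∂((condExpKernel P (MeasurableSpace.comap X inferInstance)) ω) := by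
          have hcomm : (fun η => (Y1 η - Y0 η) * (if V η < (q:ℝ) then (1:ℝ) else 0))
              = fun η => (if V η < (q:ℝ) then (1:ℝ) else 0) * (Y1 η - Y0 η) := by
            funext η; ring
          rw [hcomm]
          exact hK5ω q
        have e2 : ∫ η, (if V η < (q:ℝ) then (1:ℝ) else 0) * R η ∂((condExpKernel P (MeasurableSpace.comap X inferInstance)) ω)
            = ∫ η, (c'' + (ζ1 - ζ0) * V η) * (if V η < (q:ℝ) then (1:ℝ) else 0) ∂((condExpKernel P (MeasurableSpace.comap X inferInstance)) ω) := by
          refine integral_congr_ae ?_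
          filter_upwards [hXc] with η hη
          rw [hRdef]
          simp only [hη]
          rw [hc'']
          ring
        have hφmeas : Measurable fun v : ℝ => (c'' + (ζ1 - ζ0) * v) * (if v < (q:ℝ) then (1:ℝ) else 0) := by
          refine Measurable.mul ?_ ?_
          · exact measurable_const.add (measurable_id.const_mul _)
          · exact Measurable.ite measurableSet_Iio measurable_const measurable_const
        have e3 : ∫ η, (c'' + (ζ1 - ζ0) * V η) * (if V η < (q:ℝ) then (1:ℝ) else 0) ∂((condExpKernel P (MeasurableSpace.comap X inferInstance)) ω)
            = ∫ v in Icc (0:ℝ) 1, (c'' + (ζ1 - ζ0) * v) * (if v < (q:ℝ) then (1:ℝ) else 0) := by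
          rw [← hVu, integral_map hV.aemeasurable hφmeas.aestronglyMeasurable]
        rw [e1, e2, e3]
        exact RoyAux.unif_int c'' (ζ1 - ζ0) (q:ℝ) hq0.le hq1
    -- (C2) main computation
    set F : ℝ × (ℝ × ℝ × ℝ) → ℝ := fun zt =>
      (zt.2.2.1 - zt.2.1) * (if zt.2.2.2 < pi (x₀, zt.1) then (1:ℝ) else 0) with hFdef
    have hF : Measurable F := by
      refine Measurable.mul ?_ ?_
      · exact (measurable_snd.snd.fst).sub (measurable_snd.fst)
      · refine Measurable.ite ?_ measurable_const measurable_const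
        exact measurableSet_lt measurable_snd.snd.snd
          (hpi.comp (measurable_const.prodMk measurable_fst))
    have m1 : ∫ η, (Y1 η - Y0 η) * (if pi (X η, Z η) > V η then (1:ℝ) else 0) ∂((condExpKernel P (MeasurableSpace.comap X inferInstance)) ω)
        = ∫ η, F (Z η, T η) ∂((condExpKernel P (MeasurableSpace.comap X inferInstance)) ω) := by
      refine integral_congr_ae ?_
      filter_upwards [hXc] with η hη
      rw [hFdef, hTdef]
      simp only [hη, gt_iff_lt]
    have m2 : ∫ η, F (Z η, T η) ∂((condExpKernel P (MeasurableSpace.comap X inferInstance)) ω)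
        = ∫ zt, F zt ∂(((condExpKernel P (MeasurableSpace.comap X inferInstance)) ω).map (fun η => (Z η, T η))) :=
      (integral_map (hZ.prodMk hT_meas).aemeasurable hF.aestronglyMeasurable).symm
    have hFint : Integrable F ((((condExpKernel P (MeasurableSpace.comap X inferInstance)) ω).map Z).prod (((condExpKernel P (MeasurableSpace.comap X inferInstance)) ω).map T)) := by
      have habs : Integrable (fun t : ℝ × ℝ × ℝ => |t.2.1 - t.1|) (((condExpKernel P (MeasurableSpace.comap X inferInstance)) ω).map T) := by
        rw [integrable_map_measure (g := fun t : ℝ × ℝ × ℝ => |t.2.1 - t.1|)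
          ((measurable_snd.fst.sub measurable_fst).abs).aestronglyMeasurable
          hT_meas.aemeasurable]
        exact hDk.abs
      have hsnd : Integrable (fun zt : ℝ × (ℝ × ℝ × ℝ) => |zt.2.2.1 - zt.2.1|)
          ((((condExpKernel P (MeasurableSpace.comap X inferInstance)) ω).map Z).prod (((condExpKernel P (MeasurableSpace.comap X inferInstance)) ω).map T)) := by
        have hmap : ((((condExpKernel P (MeasurableSpace.comap X inferInstance)) ω).map Z).prod (((condExpKernel P (MeasurableSpace.comap X inferInstance)) ω).map T)).map Prod.snd = ((condExpKernel P (MeasurableSpace.comap X inferInstance)) ω).map T := by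
          rw [Measure.map_snd_prod, measure_univ, one_smul]
        rw [← hmap] at habs
        exact habs.comp_measurable measurable_snd
      refine hsnd.mono' hF.aestronglyMeasurable (Filter.Eventually.of_forall fun zt => ?_)
      rw [hFdef]
      simp only [Real.norm_eq_abs, abs_mul]
      by_cases h : zt.2.2.2 < pi (x₀, zt.1)
      · simp [h]
      · simp [h, abs_nonneg]
    have m3 : ∫ zt, F zt ∂((((condExpKernel P (MeasurableSpace.comap X inferInstance)) ω).map Z).prod (((condExpKernel P (MeasurableSpace.comap X inferInstance)) ω).map T))
        = ∫ z, (∫ t, F (z, t) ∂(((condExpKernel P (MeasurableSpace.comap X inferInstance)) ω).map T)) ∂(((condExpKernel P (MeasurableSpace.comap X inferInstance)) ω).map Z) := integral_prod F hFint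
    have m5 : ∀ z : ℝ, ∫ t, F (z, t) ∂(((condExpKernel P (MeasurableSpace.comap X inferInstance)) ω).map T)
        = c'' * pi (x₀, z) + (ζ1 - ζ0) * (pi (x₀, z) ^ 2 / 2) := by
      intro z
      have hred : (fun t : ℝ × ℝ × ℝ => F (z, t))
          = fun t => (t.2.1 - t.1) * (if t.2.2 < pi (x₀, z) then (1:ℝ) else 0) := rfl
      have hFz : Measurable fun t : ℝ × ℝ × ℝ =>
          (t.2.1 - t.1) * (if t.2.2 < pi (x₀, z) then (1:ℝ) else 0) := by
        refine Measurable.mul ?_ ?_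
        · exact measurable_snd.fst.sub measurable_fst
        · exact Measurable.ite (measurableSet_lt measurable_snd.snd measurable_const)
            measurable_const measurable_const
      rw [hred, integral_map hT_meas.aemeasurable hFz.aestronglyMeasurable]
      exact hc1 (pi (x₀, z)) (hpi0 _) (hpi1 _)
    have m6 : ∫ z, (∫ t, F (z, t) ∂(((condExpKernel P (MeasurableSpace.comap X inferInstance)) ω).map T)) ∂(((condExpKernel P (MeasurableSpace.comap X inferInstance)) ω).map Z)
        = ∫ z, (c'' * pi (x₀, z) + (ζ1 - ζ0) * (pi (x₀, z) ^ 2 / 2)) ∂(((condExpKernel P (MeasurableSpace.comap X inferInstance)) ω).map Z) :=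
      integral_congr_ae (Filter.Eventually.of_forall m5)
    have hgz_meas : Measurable fun z : ℝ =>
        c'' * pi (x₀, z) + (ζ1 - ζ0) * (pi (x₀, z) ^ 2 / 2) := by
      have hp : Measurable fun z : ℝ => pi (x₀, z) :=
        hpi.comp (measurable_const.prodMk measurable_id)
      exact (hp.const_mul _).add (((hp.pow_const 2).div_const 2).const_mul _)
    have m7 : ∫ z, (c'' * pi (x₀, z) + (ζ1 - ζ0) * (pi (x₀, z) ^ 2 / 2)) ∂(((condExpKernel P (MeasurableSpace.comap X inferInstance)) ω).map Z)
        = ∫ η, (c'' * pi (x₀, Z η) + (ζ1 - ζ0) * (pi (x₀, Z η) ^ 2 / 2)) ∂((condExpKernel P (MeasurableSpace.comap X inferInstance)) ω) :=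
      integral_map hZ.aemeasurable hgz_meas.aestronglyMeasurable
    have m8 : ∫ η, (c'' * pi (x₀, Z η) + (ζ1 - ζ0) * (pi (x₀, Z η) ^ 2 / 2)) ∂((condExpKernel P (MeasurableSpace.comap X inferInstance)) ω)
        = ∫ η, g η ∂((condExpKernel P (MeasurableSpace.comap X inferInstance)) ω) := by
      refine integral_congr_ae ?_
      filter_upwards [hXc] with η hη
      rw [hgdef]
      simp only [hη]
      rw [hc'']
      ring
    rw [m1, m2, hInd, m3, m6, m7, m8]
  -- conclude conjunct 1
  have main : ∫ ω, (Y1 ω - Y0 ω) * (if pi (X ω, Z ω) > V ω then (1:ℝ) else 0) ∂P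
      = ∫ ω, g ω ∂P := by
    calc ∫ ω, (Y1 ω - Y0 ω) * (if pi (X ω, Z ω) > V ω then (1:ℝ) else 0) ∂P
        = ∫ ω, (P[(fun ω => (Y1 ω - Y0 ω) * (if pi (X ω, Z ω) > V ω then (1:ℝ) else 0))|(MeasurableSpace.comap X inferInstance)]) ω ∂P :=
          (integral_condExp hle).symm
      _ = ∫ ω, (P[g|(MeasurableSpace.comap X inferInstance)]) ω ∂P := integral_congr_ae key
      _ = ∫ ω, g ω ∂P := integral_condExp hle
  refine ⟨main, fun hpos => ?_⟩
  -- conjunct 2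
  set S : Set Ω := {ω | (if pi (X ω, Z ω) > V ω then (1:ℝ) else 0) = 1} with hSdef
  have hS_meas : MeasurableSet S := hA_meas (measurableSet_singleton 1)
  have h1 : ∫ ω in S, (Y1 ω - Y0 ω) ∂P
      = ∫ ω, (Y1 ω - Y0 ω) * (if pi (X ω, Z ω) > V ω then (1:ℝ) else 0) ∂P := by
    rw [← integral_indicator hS_meas]
    refine integral_congr_ae (Filter.Eventually.of_forall fun ω => ?_)
    by_cases hω : pi (X ω, Z ω) > V ω
    · have hmem : ω ∈ S := by simp [hSdef, hω]
      simp [Set.indicator_of_mem hmem, hω]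
    · have hmem : ω ∉ S := by simp [hSdef, hω]
      simp [Set.indicator_of_notMem hmem, hω]
  have hcond : P[|S] = (P S)⁻¹ • P.restrict S := rfl
  rw [hcond, integral_smul_measure, ENNReal.toReal_inv, smul_eq_mul]
  congr 1
  rw [h1, main]
end

section
/- (General-model average treatment effect on the treated, Supplementary Equation (3).) Under the generalized Roy model with the general polynomial outcome model of order S, assuming all displayed quantities are integrable, E[(Y₁ − Y₀)·A] = E[(α₁ − α₀ − Σ_{s=1}^S (ζ_{1s} − ζ_{0s})/(s+1))·π + (β₁ − β₀ − Σ_{s=1}^S (ξ_{1s} − ξ_{0s})/(s+1))ᵀX·π + Σ_{s=1}^S ((ζ_{1s} − ζ_{0s}) + (ξ_{1s} − ξ_{0s})ᵀX)·π^{s+1}/(s+1)], where π = π(X,Z). Consequently, if P(A=1) > 0, then E[Y₁ − Y₀ | A = 1] = P(A=1)⁻¹ times this expectation, i.e. the ATT equals P(A=1)⁻¹E[r_ATT(X,Z)]ᵀγ. -/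
open MeasureTheory ProbabilityTheory
open scoped NNReal ENNReal


lemma roy_aux_integral (K : ℝ) (c : ℕ → ℝ) (S : ℕ) (p : ℝ) :
    (∫ v in (0:ℝ)..p, (K + ∑ s ∈ Finset.Icc 1 S, c s * (v ^ s - 1/((s:ℝ)+1))))
      = K * p + ∑ s ∈ Finset.Icc 1 S, c s * (p^(s+1)/((s:ℝ)+1) - p/((s:ℝ)+1)) := by
  have hint : ∀ s : ℕ, IntervalIntegrable (fun v:ℝ => c s * (v ^ s - 1/((s:ℝ)+1))) volume 0 p :=
    fun s => (continuous_const.mul ((continuous_pow s).sub continuous_const)).intervalIntegrable _ _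
  have hg : IntervalIntegrable
      (fun v:ℝ => ∑ s ∈ Finset.Icc 1 S, c s * (v ^ s - 1/((s:ℝ)+1))) volume 0 p :=
    Continuous.intervalIntegrable
      (continuous_finset_sum _ fun s _ =>
        continuous_const.mul ((continuous_pow s).sub continuous_const)) _ _
  rw [intervalIntegral.integral_add intervalIntegrable_const hg,
    intervalIntegral.integral_const, intervalIntegral.integral_finset_sum (fun s _ => hint s)]
  have : ∀ s ∈ Finset.Icc 1 S, (∫ v in (0:ℝ)..p, c s * (v ^ s - 1/((s:ℝ)+1)))
      = c s * (p^(s+1)/((s:ℝ)+1) - p/((s:ℝ)+1)) := by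
    intro s _
    rw [intervalIntegral.integral_const_mul,
      intervalIntegral.integral_sub ((continuous_pow s).intervalIntegrable _ _) intervalIntegrable_const,
      integral_pow, intervalIntegral.integral_const]
    simp only [sub_zero, zero_pow, smul_eq_mul]
    ring_nf
  rw [Finset.sum_congr rfl this]
  simp [mul_comm]

lemma roy_alg (k S : ℕ) (x : Fin k → ℝ) (p a : ℝ) (bd : Fin k → ℝ) (zd : ℕ → ℝ)
    (xd : ℕ → Fin k → ℝ) :
    (a + ∑ i, bd i * x i) * p
      + ∑ s ∈ Finset.Icc 1 S, ((zd s + ∑ i, xd s i * x i) * (p^(s+1)/((s:ℝ)+1) - p/((s:ℝ)+1)))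
    = (a - ∑ s ∈ Finset.Icc 1 S, zd s/((s:ℝ)+1)) * p
      + (∑ i, (bd i - ∑ s ∈ Finset.Icc 1 S, xd s i/((s:ℝ)+1)) * x i) * p
      + ∑ s ∈ Finset.Icc 1 S, (zd s + ∑ i, xd s i * x i) * p^(s+1)/((s:ℝ)+1) := by
  have h1 : ∑ i, (bd i - ∑ s ∈ Finset.Icc 1 S, xd s i/((s:ℝ)+1)) * x i
      = (∑ i, bd i * x i) - ∑ s ∈ Finset.Icc 1 S, (∑ i, xd s i * x i) / ((s:ℝ)+1) := by
    have : ∀ i : Fin k, (bd i - ∑ s ∈ Finset.Icc 1 S, xd s i/((s:ℝ)+1)) * x i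
        = bd i * x i - ∑ s ∈ Finset.Icc 1 S, (xd s i * x i) / ((s:ℝ)+1) := by
      intro i
      rw [sub_mul, Finset.sum_mul]
      congr 1
      exact Finset.sum_congr rfl fun s _ => by ring
    rw [Finset.sum_congr rfl fun i _ => this i, Finset.sum_sub_distrib]
    congr 1
    rw [Finset.sum_comm]
    exact Finset.sum_congr rfl fun s _ => (Finset.sum_div _ _ _).symm
  have h2 : ∑ s ∈ Finset.Icc 1 S, ((zd s + ∑ i, xd s i * x i) * (p^(s+1)/((s:ℝ)+1) - p/((s:ℝ)+1)))
      = (∑ s ∈ Finset.Icc 1 S, (zd s + ∑ i, xd s i * x i) * p^(s+1)/((s:ℝ)+1))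
        - (∑ s ∈ Finset.Icc 1 S, zd s/((s:ℝ)+1)) * p
        - (∑ s ∈ Finset.Icc 1 S, (∑ i, xd s i * x i) / ((s:ℝ)+1)) * p := by
    rw [Finset.sum_mul, Finset.sum_mul, ← Finset.sum_sub_distrib, ← Finset.sum_sub_distrib]
    exact Finset.sum_congr rfl fun s _ => by ring
  rw [h1, h2]; ring

/-- Supplementary Equation (3): under the generalized Roy model with the general polynomial
outcome model of order `S`, `E[(Y₁ − Y₀)·A] = E[r_ATT(X,Z)ᵀγ]`, and if `P(A=1) > 0` the ATT
equals `P(A=1)⁻¹` times that expectation. -/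
theorem roy_att_general {S : ℕ} (hS : 1 ≤ S)
    {Ω : Type*} [MeasurableSpace Ω] [StandardBorelSpace Ω] [Nonempty Ω]
    (P : Measure Ω) [IsProbabilityMeasure P]
    {k : ℕ} (X : Ω → (Fin k → ℝ)) (Z V Y0 Y1 : Ω → ℝ)
    (hX : Measurable X) (hZ : Measurable Z) (hV : Measurable V)
    (hY0m : Measurable Y0) (hY1m : Measurable Y1)
    (hY0int : Integrable Y0 P) (hY1int : Integrable Y1 P)
    (pi : (Fin k → ℝ) × ℝ → ℝ) (hpi : Measurable pi)
    (hpi01 : ∀ q, pi q ∈ Set.Icc (0:ℝ) 1)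
    (A : Ω → ℝ) (hA : A = fun ω => if pi (X ω, Z ω) > V ω then (1:ℝ) else 0)
    (Y : Ω → ℝ) (hY : Y = fun ω => A ω * Y1 ω + (1 - A ω) * Y0 ω)
    (hCI : CondIndepFun (MeasurableSpace.comap X inferInstance) hX.comap_le Z
      (fun ω => (Y0 ω, Y1 ω, V ω)) P)
    (hUnif : ∀ᵐ x ∂(P.map X),
      condDistrib V X P x = volume.restrict (Set.Icc (0:ℝ) 1))
    (α0 α1 : ℝ) (β0 β1 : Fin k → ℝ) (ζ0 ζ1 : ℕ → ℝ) (ξ0 ξ1 : ℕ → Fin k → ℝ)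
    (he0 : P[Y0 | MeasurableSpace.comap (fun ω => (X ω, V ω)) inferInstance]
      =ᵐ[P] fun ω => α0 + (∑ i, β0 i * X ω i)
        + ∑ s ∈ Finset.Icc 1 S, (ζ0 s + ∑ i, ξ0 s i * X ω i) * (V ω ^ s - 1 / ((s : ℝ) + 1)))
    (he1 : P[Y1 | MeasurableSpace.comap (fun ω => (X ω, V ω)) inferInstance]
      =ᵐ[P] fun ω => α1 + (∑ i, β1 i * X ω i)
        + ∑ s ∈ Finset.Icc 1 S, (ζ1 s + ∑ i, ξ1 s i * X ω i) * (V ω ^ s - 1 / ((s : ℝ) + 1)))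
    (hint : Integrable (fun ω => (Y1 ω - Y0 ω) * A ω) P)
    (hXpi : ∀ i, Integrable (fun ω => X ω i * pi (X ω, Z ω)) P)
    (hXpis : ∀ i, ∀ s ∈ Finset.Icc 1 S,
      Integrable (fun ω => X ω i * (pi (X ω, Z ω)) ^ (s + 1)) P) :
    (∫ ω, (Y1 ω - Y0 ω) * A ω ∂P
        = ∫ ω, ((α1 - α0 - ∑ s ∈ Finset.Icc 1 S, (ζ1 s - ζ0 s) / ((s : ℝ) + 1))
              * pi (X ω, Z ω)
            + (∑ i, (β1 i - β0 i
                - ∑ s ∈ Finset.Icc 1 S, (ξ1 s i - ξ0 s i) / ((s : ℝ) + 1)) * X ω i)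
              * pi (X ω, Z ω)
            + ∑ s ∈ Finset.Icc 1 S,
                ((ζ1 s - ζ0 s) + ∑ i, (ξ1 s i - ξ0 s i) * X ω i)
                  * (pi (X ω, Z ω)) ^ (s + 1) / ((s : ℝ) + 1)) ∂P)
    ∧ (0 < P {ω | A ω = 1} →
        ∫ ω, (Y1 ω - Y0 ω) ∂(P[|{ω | A ω = 1}])
          = (P {ω | A ω = 1}).toReal⁻¹
              * ∫ ω, ((α1 - α0 - ∑ s ∈ Finset.Icc 1 S, (ζ1 s - ζ0 s) / ((s : ℝ) + 1))
                    * pi (X ω, Z ω)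
                  + (∑ i, (β1 i - β0 i
                      - ∑ s ∈ Finset.Icc 1 S, (ξ1 s i - ξ0 s i) / ((s : ℝ) + 1)) * X ω i)
                    * pi (X ω, Z ω)
                  + ∑ s ∈ Finset.Icc 1 S,
                      ((ζ1 s - ζ0 s) + ∑ i, (ξ1 s i - ξ0 s i) * X ω i)
                        * (pi (X ω, Z ω)) ^ (s + 1) / ((s : ℝ) + 1)) ∂P) := by
  -- basic abbreviations
  set XZ : Ω → (Fin k → ℝ) × ℝ := fun ω => (X ω, Z ω) with hXZdef
  set XV : Ω → (Fin k → ℝ) × ℝ := fun ω => (X ω, V ω) with hXVdef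
  set W : Ω → ℝ × ℝ × ℝ := fun ω => (Y0 ω, Y1 ω, V ω) with hWdef
  set XW : Ω → (Fin k → ℝ) × (ℝ × ℝ × ℝ) := fun ω => (X ω, W ω) with hXWdef
  set XZV : Ω → ((Fin k → ℝ) × ℝ) × ℝ := fun ω => (XZ ω, V ω) with hXZVdef
  have hW : Measurable W := hY0m.prodMk (hY1m.prodMk hV)
  have hXZ : Measurable XZ := hX.prodMk hZ
  have hXVm : Measurable XV := hX.prodMk hV
  have hXW : Measurable XW := hX.prodMk hW
  have hXZV : Measurable XZV := hXZ.prodMk hV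
  have hmX : MeasurableSpace.comap X inferInstance ≤ ‹MeasurableSpace Ω› := hX.comap_le
  have hmXV : MeasurableSpace.comap XV inferInstance ≤ ‹MeasurableSpace Ω› := hXVm.comap_le
  have hXmX : Measurable[MeasurableSpace.comap X inferInstance] X := measurable_iff_comap_le.mpr le_rfl
  have hXVmXV : Measurable[MeasurableSpace.comap XV inferInstance] XV := measurable_iff_comap_le.mpr le_rfl
  have hXmXV : Measurable[MeasurableSpace.comap XV inferInstance] X := measurable_fst.comp hXVmXV
  have hVmXV : Measurable[MeasurableSpace.comap XV inferInstance] V := measurable_snd.comp hXVmXV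
  -- the conditional treatment-effect function
  set d : (Fin k → ℝ) × ℝ → ℝ := fun q =>
    (α1 - α0 + ∑ i, (β1 i - β0 i) * q.1 i)
      + ∑ s ∈ Finset.Icc 1 S, ((ζ1 s - ζ0 s) + ∑ i, (ξ1 s i - ξ0 s i) * q.1 i)
          * (q.2 ^ s - 1 / ((s:ℝ)+1)) with hddef
  have hd : Measurable d := by
    apply Measurable.add
    · exact (measurable_const.add (Finset.measurable_sum _ fun i _ =>
        measurable_const.mul ((measurable_pi_apply i).comp measurable_fst)))
    · exact Finset.measurable_sum _ fun s _ =>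
        (measurable_const.add (Finset.measurable_sum _ fun i _ =>
          measurable_const.mul ((measurable_pi_apply i).comp measurable_fst))).mul
          ((measurable_snd.pow_const s).sub measurable_const)
  set D : Ω → ℝ := fun ω => d (XV ω) with hDdef
  set R : Ω → ℝ := fun ω => (Y1 ω - Y0 ω) - D ω with hRdef
  have hUint : Integrable (fun ω => Y1 ω - Y0 ω) P := hY1int.sub hY0int
  have hDae : P[fun ω => Y1 ω - Y0 ω|MeasurableSpace.comap XV inferInstance] =ᵐ[P] D := by
    refine (condExp_sub hY1int hY0int _).trans ?_
    refine (he1.sub he0).trans (Filter.Eventually.of_forall fun ω => ?_)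
    show _ - _ = D ω
    simp only [hDdef, hddef]
    have h1 : ∑ i, (β1 i - β0 i) * X ω i
        = (∑ i, β1 i * X ω i) - ∑ i, β0 i * X ω i := by
      rw [← Finset.sum_sub_distrib]
      exact Finset.sum_congr rfl fun i _ => sub_mul _ _ _
    have h2 : ∑ s ∈ Finset.Icc 1 S,
          ((ζ1 s - ζ0 s) + ∑ i, (ξ1 s i - ξ0 s i) * X ω i) * (V ω ^ s - 1 / ((s:ℝ)+1))
        = (∑ s ∈ Finset.Icc 1 S, (ζ1 s + ∑ i, ξ1 s i * X ω i) * (V ω ^ s - 1 / ((s:ℝ)+1)))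
          - ∑ s ∈ Finset.Icc 1 S, (ζ0 s + ∑ i, ξ0 s i * X ω i) * (V ω ^ s - 1 / ((s:ℝ)+1)) := by
      rw [← Finset.sum_sub_distrib]
      refine Finset.sum_congr rfl fun s _ => ?_
      have h3 : ∑ i, (ξ1 s i - ξ0 s i) * X ω i
          = (∑ i, ξ1 s i * X ω i) - ∑ i, ξ0 s i * X ω i := by
        rw [← Finset.sum_sub_distrib]
        exact Finset.sum_congr rfl fun i _ => sub_mul _ _ _
      rw [h3]; ring
    rw [h1, h2]; ring
  have hDm : Measurable D := hd.comp hXVm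
  have hDsm : StronglyMeasurable[MeasurableSpace.comap XV inferInstance] D := (hd.comp hXVmXV).stronglyMeasurable
  have hDint : Integrable D P := integrable_condExp.congr hDae
  have hRint : Integrable R P := hUint.sub hDint
  have hRcond : P[R|MeasurableSpace.comap XV inferInstance] =ᵐ[P] 0 := by
    have h1 := condExp_sub (μ := P) (m := MeasurableSpace.comap XV inferInstance) hUint hDint
    have h2 : P[D|MeasurableSpace.comap XV inferInstance] = D := condExp_of_stronglyMeasurable hmXV hDsm hDint
    refine h1.trans ?_
    rw [h2]
    filter_upwards [hDae] with ω hω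
    simp [hω]
  have hint0 : ∫ ω, R ω ∂P = 0 := by
    rw [← integral_condExp hmXV]
    rw [integral_congr_ae hRcond]
    simp
  -- conditional probability of Z-events given X
  set c : Set ℝ → (Fin k → ℝ) → ℝ := fun B x => ((condDistrib Z X P) x B).toReal with hcdef
  have hc_meas : ∀ B : Set ℝ, MeasurableSet B → Measurable (c B) := fun B hB =>
    (Kernel.measurable_coe _ hB).ennreal_toReal
  have hc01 : ∀ B x, c B x ∈ Set.Icc (0:ℝ) 1 := by
    intro B x
    constructor
    · exact ENNReal.toReal_nonneg
    · refine ENNReal.toReal_le_of_le_ofReal zero_le_one ?_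
      simpa using prob_le_one
  -- MEGA-CRUX : conditional independence at the level of integrable functions of (X, W)
  have crux : ∀ B : Set ℝ, MeasurableSet B → ∀ f : (Fin k → ℝ) × (ℝ × ℝ × ℝ) → ℝ, Measurable f →
      ∫ ω in Z ⁻¹' B, f (XW ω) ∂P = ∫ ω, f (XW ω) * c B (X ω) ∂P := by
    intro B hB f hf
    have hZB : MeasurableSet (Z ⁻¹' B) := hZ hB
    have hcB : Measurable (c B) := hc_meas B hB
    have hcBX : Measurable fun ω => c B (X ω) := hcB.comp hX
    have hcBnn : ∀ ω : Ω, 0 ≤ c B (X ω) := fun ω => (hc01 B (X ω)).1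
    have hcBle : ∀ ω : Ω, c B (X ω) ≤ 1 := fun ω => (hc01 B (X ω)).2
    have hcBnorm : ∀ ω : Ω, ‖c B (X ω)‖ ≤ 1 := fun ω => by
      rw [Real.norm_eq_abs, abs_of_nonneg (hcBnn ω)]; exact hcBle ω
    have hcf_int : Integrable (fun ω => c B (X ω)) P :=
      (integrable_const (1:ℝ)).mono' hcBX.aestronglyMeasurable
        (Filter.Eventually.of_forall hcBnorm)
    -- key set-level identity
    have hKEY : ∀ u : Set (ℝ × ℝ × ℝ), MeasurableSet u → ∀ s : Set (Fin k → ℝ), MeasurableSet s →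
        ∫ ω in X ⁻¹' s ∩ W ⁻¹' u, (Z ⁻¹' B).indicator (fun _ => (1:ℝ)) ω ∂P
          = ∫ ω in X ⁻¹' s ∩ W ⁻¹' u, c B (X ω) ∂P := by
      intro u hu s hs
      have hWu : MeasurableSet (W ⁻¹' u) := hW hu
      have hXs : MeasurableSet (X ⁻¹' s) := hX hs
      have hCImul := (condIndepFun_iff_condExp_inter_preimage_eq_mul (μ := P) hZ hW).1 hCI B u hB hu
      have hc_eq := condDistrib_ae_eq_condExp (μ := P) hX hZ hB
      have hWind_int : Integrable ((W ⁻¹' u).indicator (fun _ => (1:ℝ))) P :=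
        (integrable_const 1).indicator hWu
      have hZWind_int : Integrable ((Z ⁻¹' B ∩ W ⁻¹' u).indicator (fun _ => (1:ℝ))) P :=
        (integrable_const 1).indicator (hZB.inter hWu)
      have hmulint : Integrable
          ((fun ω => c B (X ω)) * (W ⁻¹' u).indicator (fun _ => (1:ℝ))) P :=
        hWind_int.bdd_mul hcBX.aestronglyMeasurable (Filter.Eventually.of_forall hcBnorm)
      have hsmX : MeasurableSet[MeasurableSpace.comap X inferInstance] (X ⁻¹' s) := ⟨s, hs, rfl⟩
      have hcsm : StronglyMeasurable[MeasurableSpace.comap X inferInstance]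
          (fun ω => c B (X ω)) := (hcB.comp hXmX).stronglyMeasurable
      have hae1 : P[(Z ⁻¹' B ∩ W ⁻¹' u).indicator (fun _ => (1:ℝ))|MeasurableSpace.comap X inferInstance]
          =ᵐ[P] fun ω => c B (X ω) *
            (P[(W ⁻¹' u).indicator (fun _ => (1:ℝ))|MeasurableSpace.comap X inferInstance]) ω := by
        refine hCImul.trans ?_
        filter_upwards [hc_eq] with ω hω
        exact congrArg (· * _) hω.symm
      have hmul_ce := condExp_mul_of_stronglyMeasurable_left (μ := P) hcsm hmulint hWind_int
      calc ∫ ω in X ⁻¹' s ∩ W ⁻¹' u, (Z ⁻¹' B).indicator (fun _ => (1:ℝ)) ω ∂P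
          = ∫ ω in X ⁻¹' s, (W ⁻¹' u).indicator ((Z ⁻¹' B).indicator (fun _ => (1:ℝ))) ω ∂P := by
            rw [setIntegral_indicator hWu]
        _ = ∫ ω in X ⁻¹' s, (Z ⁻¹' B ∩ W ⁻¹' u).indicator (fun _ => (1:ℝ)) ω ∂P := by
            refine integral_congr_ae (Filter.Eventually.of_forall fun ω => ?_)
            by_cases h1 : ω ∈ W ⁻¹' u <;> by_cases h2 : ω ∈ Z ⁻¹' B <;>
              simp [Set.indicator_apply, h1, h2]
        _ = ∫ ω in X ⁻¹' s, (P[(Z ⁻¹' B ∩ W ⁻¹' u).indicator (fun _ => (1:ℝ))|MeasurableSpace.comap X inferInstance]) ω ∂P :=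
            (setIntegral_condExp hmX hZWind_int hsmX).symm
        _ = ∫ ω in X ⁻¹' s, (fun ω => c B (X ω) *
              (P[(W ⁻¹' u).indicator (fun _ => (1:ℝ))|MeasurableSpace.comap X inferInstance]) ω) ω ∂P :=
            integral_congr_ae (ae_restrict_of_ae hae1)
        _ = ∫ ω in X ⁻¹' s, (P[(fun ω => c B (X ω)) * (W ⁻¹' u).indicator (fun _ => (1:ℝ))|MeasurableSpace.comap X inferInstance]) ω ∂P :=
            (integral_congr_ae (ae_restrict_of_ae hmul_ce)).symm
        _ = ∫ ω in X ⁻¹' s, ((fun ω => c B (X ω)) * (W ⁻¹' u).indicator (fun _ => (1:ℝ))) ω ∂P :=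
            setIntegral_condExp hmX hmulint hsmX
        _ = ∫ ω in X ⁻¹' s, (W ⁻¹' u).indicator (fun ω => c B (X ω)) ω ∂P := by
            refine integral_congr_ae (Filter.Eventually.of_forall fun ω => ?_)
            by_cases h1 : ω ∈ W ⁻¹' u <;> simp [Set.indicator_apply, h1]
        _ = ∫ ω in X ⁻¹' s ∩ W ⁻¹' u, c B (X ω) ∂P := setIntegral_indicator hWu
    -- measure-level identity
    have hν : Measure.map XW (P.restrict (Z ⁻¹' B))
        = Measure.map XW (P.withDensity (fun ω => ENNReal.ofReal (c B (X ω)))) := by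
      have hwm : Measurable fun ω => ENNReal.ofReal (c B (X ω)) := hcBX.ennreal_ofReal
      haveI hfin1 : IsFiniteMeasure (Measure.map XW (P.restrict (Z ⁻¹' B))) := by
        constructor
        rw [Measure.map_apply hXW MeasurableSet.univ]
        exact measure_lt_top _ _
      have hrect : ∀ t ∈ Set.image2 (· ×ˢ ·) { s : Set (Fin k → ℝ) | MeasurableSet s }
          { u : Set (ℝ × ℝ × ℝ) | MeasurableSet u },
          Measure.map XW (P.restrict (Z ⁻¹' B)) t
            = Measure.map XW (P.withDensity (fun ω => ENNReal.ofReal (c B (X ω)))) t := by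
        rintro _ ⟨s, hs0, u, hu0, rfl⟩
        have hs : MeasurableSet s := hs0
        have hu : MeasurableSet u := hu0
        have hXs : MeasurableSet (X ⁻¹' s) := hX hs
        have hWu : MeasurableSet (W ⁻¹' u) := hW hu
        have hpre : XW ⁻¹' (s ×ˢ u) = X ⁻¹' s ∩ W ⁻¹' u := rfl
        rw [Measure.map_apply hXW (hs.prod hu), Measure.map_apply hXW (hs.prod hu), hpre,
          Measure.restrict_apply (hXs.inter hWu), withDensity_apply _ (hXs.inter hWu)]
        have hR : ∫⁻ ω in X ⁻¹' s ∩ W ⁻¹' u, ENNReal.ofReal (c B (X ω)) ∂P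
            = ENNReal.ofReal (∫ ω in X ⁻¹' s ∩ W ⁻¹' u, c B (X ω) ∂P) :=
          (ofReal_integral_eq_lintegral_ofReal hcf_int.integrableOn
            (ae_restrict_of_ae (Filter.Eventually.of_forall hcBnn))).symm
        have hL : P ((X ⁻¹' s ∩ W ⁻¹' u) ∩ Z ⁻¹' B)
            = ENNReal.ofReal (∫ ω in X ⁻¹' s ∩ W ⁻¹' u, (Z ⁻¹' B).indicator (fun _ => (1:ℝ)) ω ∂P) := by
          rw [setIntegral_indicator hZB, setIntegral_const, smul_eq_mul, mul_one,
            ofReal_measureReal]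
        rw [hL, hKEY u hu s hs, hR]
      refine ext_of_generate_finite _ generateFrom_prod.symm isPiSystem_prod hrect ?_
      have := hrect (Set.univ ×ˢ Set.univ)
        ⟨Set.univ, (MeasurableSet.univ : MeasurableSet (Set.univ : Set (Fin k → ℝ))), Set.univ,
          (MeasurableSet.univ : MeasurableSet (Set.univ : Set (ℝ × ℝ × ℝ))), rfl⟩
      rwa [Set.univ_prod_univ] at this
    -- conclude
    have h1 : ∫ ω in Z ⁻¹' B, f (XW ω) ∂P
        = ∫ p, f p ∂(Measure.map XW (P.restrict (Z ⁻¹' B))) :=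
      (integral_map hXW.aemeasurable hf.aestronglyMeasurable).symm
    rw [h1, hν, integral_map hXW.aemeasurable hf.aestronglyMeasurable]
    have h2 : (fun ω => ENNReal.ofReal (c B (X ω)))
        = fun ω => ((Real.toNNReal (c B (X ω)) : ℝ≥0) : ℝ≥0∞) := rfl
    rw [h2, integral_withDensity_eq_integral_smul hcBX.real_toNNReal (fun ω => f (XW ω))]
    refine integral_congr_ae (Filter.Eventually.of_forall fun ω => ?_)
    have h3 : (Real.toNNReal (c B (X ω)) : ℝ) = c B (X ω) := Real.coe_toNNReal _ (hcBnn ω)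
    show (c B (X ω)).toNNReal • f (XW ω) = f (XW ω) * c B (X ω)
    rw [NNReal.smul_def, h3, smul_eq_mul, mul_comm]
  -- the key vanishing integral
  have hF2 : ∀ C : Set (((Fin k → ℝ) × ℝ) × ℝ), MeasurableSet C →
      ∫ ω in XZV ⁻¹' C, R ω ∂P = 0 := by
    have h_eq : (inferInstance : MeasurableSpace (((Fin k → ℝ) × ℝ) × ℝ))
        = MeasurableSpace.generateFrom (Set.image2 (· ×ˢ ·)
          (Set.image2 (· ×ˢ ·) { s : Set (Fin k → ℝ) | MeasurableSet s }
            { t : Set ℝ | MeasurableSet t })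
          { t : Set ℝ | MeasurableSet t }) :=
      (generateFrom_eq_prod generateFrom_prod MeasurableSpace.generateFrom_measurableSet
        (isCountablySpanning_measurableSet.prod isCountablySpanning_measurableSet)
        isCountablySpanning_measurableSet).symm
    have h_pi := (isPiSystem_prod (α := Fin k → ℝ) (β := ℝ)).prod
      (MeasurableSpace.isPiSystem_measurableSet (α := ℝ))
    intro C hC
    refine MeasurableSpace.induction_on_inter (C := fun t _ => ∫ ω in XZV ⁻¹' t, R ω ∂P = 0) h_eq h_pi ?_ ?_ ?_ ?_ C hC
    · simp
    · intro t ht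
      obtain ⟨_, ⟨B₁, hB₁0, B₂, hB₂0, rfl⟩, B₃, hB₃0, rfl⟩ := ht
      have hB₁ : MeasurableSet B₁ := hB₁0
      have hB₂ : MeasurableSet B₂ := hB₂0
      have hB₃ : MeasurableSet B₃ := hB₃0
      have hpre : XZV ⁻¹' ((B₁ ×ˢ B₂) ×ˢ B₃) = (X ⁻¹' B₁ ∩ V ⁻¹' B₃) ∩ Z ⁻¹' B₂ := by
        ext ω
        simp only [Set.mem_preimage, Set.mem_prod, Set.mem_inter_iff, hXZVdef, hXZdef]
        tauto
      have hEm : MeasurableSet (X ⁻¹' B₁ ∩ V ⁻¹' B₃) := (hX hB₁).inter (hV hB₃)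
      set f : (Fin k → ℝ) × (ℝ × ℝ × ℝ) → ℝ := fun q =>
        (B₁.indicator (fun _ => (1:ℝ)) q.1) * (B₃.indicator (fun _ => (1:ℝ)) q.2.2.2)
          * (q.2.2.1 - q.2.1 - d (q.1, q.2.2.2)) with hfdef
      have hfm : Measurable f := by
        refine Measurable.mul (Measurable.mul ?_ ?_) ?_
        · exact (measurable_const.indicator hB₁).comp measurable_fst
        · exact (measurable_const.indicator hB₃).comp
            (measurable_snd.comp (measurable_snd.comp measurable_snd))
        · exact ((measurable_fst.comp (measurable_snd.comp measurable_snd)).sub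
            (measurable_fst.comp measurable_snd)).sub
            (hd.comp (measurable_fst.prodMk
              (measurable_snd.comp (measurable_snd.comp measurable_snd))))
      have hfXW : ∀ ω, f (XW ω) = (X ⁻¹' B₁ ∩ V ⁻¹' B₃).indicator R ω := by
        intro ω
        by_cases h1 : X ω ∈ B₁ <;> by_cases h2 : V ω ∈ B₃ <;>
          simp [hfdef, Set.indicator_apply, h1, h2, hRdef, hDdef, hXVdef, hWdef, hXWdef]
      rw [hpre, Set.inter_comm, ← setIntegral_indicator hEm]
      rw [show ∫ ω in Z ⁻¹' B₂, (X ⁻¹' B₁ ∩ V ⁻¹' B₃).indicator R ω ∂P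
          = ∫ ω in Z ⁻¹' B₂, f (XW ω) ∂P from
        integral_congr_ae (Filter.Eventually.of_forall fun ω => (hfXW ω).symm)]
      rw [crux B₂ hB₂ f hfm]
      set φ : Ω → ℝ := fun ω =>
        (X ⁻¹' B₁ ∩ V ⁻¹' B₃).indicator (fun _ => (1:ℝ)) ω * c B₂ (X ω) with hφdef
      have hstep : ∀ ω, f (XW ω) * c B₂ (X ω) = φ ω * R ω := by
        intro ω
        rw [hfXW ω, hφdef]
        by_cases h : ω ∈ X ⁻¹' B₁ ∩ V ⁻¹' B₃ <;> simp [Set.indicator_apply, h] <;> ring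
      rw [integral_congr_ae (Filter.Eventually.of_forall hstep)]
      have hEmXV : MeasurableSet[MeasurableSpace.comap XV inferInstance]
          (X ⁻¹' B₁ ∩ V ⁻¹' B₃) := (hXmXV hB₁).inter (hVmXV hB₃)
      have hφsm : StronglyMeasurable[MeasurableSpace.comap XV inferInstance] φ :=
        (stronglyMeasurable_const.indicator hEmXV).mul
          (((hc_meas B₂ hB₂).comp hXmXV).stronglyMeasurable)
      have hφbd : ∀ ω, ‖φ ω‖ ≤ 1 := by
        intro ω
        rw [hφdef]
        show ‖(X ⁻¹' B₁ ∩ V ⁻¹' B₃).indicator (fun _ => (1:ℝ)) ω * c B₂ (X ω)‖ ≤ 1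
        by_cases h : ω ∈ X ⁻¹' B₁ ∩ V ⁻¹' B₃
        · rw [Set.indicator_of_mem h, one_mul, Real.norm_eq_abs,
            abs_of_nonneg (hc01 B₂ (X ω)).1]
          exact (hc01 B₂ (X ω)).2
        · simp [Set.indicator_apply, h]
      have hφRint : Integrable (fun ω => φ ω * R ω) P :=
        hRint.bdd_mul (hφsm.mono hmXV).aestronglyMeasurable (Filter.Eventually.of_forall hφbd)
      have hmul_ce := condExp_mul_of_stronglyMeasurable_left (μ := P) hφsm hφRint hRint
      calc ∫ ω, φ ω * R ω ∂P
          = ∫ ω, (P[φ * R|MeasurableSpace.comap XV inferInstance]) ω ∂P :=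
            (integral_condExp hmXV).symm
        _ = ∫ ω, (φ * P[R|MeasurableSpace.comap XV inferInstance]) ω ∂P :=
            integral_congr_ae hmul_ce
        _ = 0 := by
            have : (φ * P[R|MeasurableSpace.comap XV inferInstance]) =ᵐ[P] 0 := by
              filter_upwards [hRcond] with ω hω
              simp [hω]
            rw [integral_congr_ae this]
            simp
    · intro t htm hQ
      rw [Set.preimage_compl]
      have h := integral_add_compl (hXZV htm) hRint
      rw [hQ, zero_add] at h
      rw [h, hint0]
    · intro g hdisj hgm hQ
      rw [Set.preimage_iUnion, integral_iUnion (fun i => hXZV (hgm i))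
        (fun i j hij => Disjoint.preimage XZV (hdisj hij)) hRint.integrableOn]
      simp [hQ]
  -- A as an indicator
  set Cstar : Set (((Fin k → ℝ) × ℝ) × ℝ) := {q | q.2 < pi q.1} with hCstardef
  have hCstar : MeasurableSet Cstar := measurableSet_lt measurable_snd (hpi.comp measurable_fst)
  have hAind : ∀ ω, A ω = (XZV ⁻¹' Cstar).indicator (fun _ => (1:ℝ)) ω := by
    intro ω
    rw [hA]
    by_cases h : pi (X ω, Z ω) > V ω <;>
      simp [Set.indicator_apply, Set.mem_preimage, hCstardef, h, hXZVdef, hXZdef]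
  have hAm : Measurable A := by
    rw [hA]
    exact Measurable.ite (measurableSet_lt hV (hpi.comp hXZ)) measurable_const measurable_const
  have hAbd : ∀ ω, ‖A ω‖ ≤ 1 := by
    intro ω; rw [hA]; by_cases h : pi (X ω, Z ω) > V ω <;> simp [h]
  have hDA_int : Integrable (fun ω => D ω * A ω) P := by
    have := hDint.bdd_mul (f := A) hAm.aestronglyMeasurable (Filter.Eventually.of_forall hAbd)
    exact this.congr (Filter.Eventually.of_forall fun ω => mul_comm _ _)
  have hRA0 : ∫ ω, R ω * A ω ∂P = 0 := by
    have h1 : (fun ω => R ω * A ω) = (XZV ⁻¹' Cstar).indicator R := by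
      funext ω
      rw [hAind ω]
      by_cases h : ω ∈ XZV ⁻¹' Cstar <;> simp [Set.indicator_apply, h]
    rw [h1, integral_indicator (hXZV hCstar)]
    exact hF2 _ hCstar
  have hUA_DA : ∫ ω, (Y1 ω - Y0 ω) * A ω ∂P = ∫ ω, D ω * A ω ∂P := by
    have hRA_int : Integrable (fun ω => R ω * A ω) P := by
      refine (hint.sub hDA_int).congr (Filter.Eventually.of_forall fun ω => ?_)
      simp [hRdef]; ring
    have h1 : (fun ω => (Y1 ω - Y0 ω) * A ω) = fun ω => R ω * A ω + D ω * A ω := by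
      funext ω; simp [hRdef]; ring
    rw [h1, integral_add hRA_int hDA_int, hRA0, zero_add]
  -- independence of (X,Z) and V, with V uniform
  have hprod : Measure.map XZV P
      = (Measure.map XZ P).prod (volume.restrict (Set.Icc (0:ℝ) 1)) := by
    have hu' : ∀ᵐ ω ∂P, condDistrib V X P (X ω) = volume.restrict (Set.Icc (0:ℝ) 1) :=
      ae_of_ae_map hX.aemeasurable hUnif
    have hVconst : ∀ B₃ : Set ℝ, MeasurableSet B₃ →
        P[(V ⁻¹' B₃).indicator (fun _ => (1:ℝ))|MeasurableSpace.comap X inferInstance]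
          =ᵐ[P] fun _ => (volume.restrict (Set.Icc (0:ℝ) 1) B₃).toReal := by
      intro B₃ hB₃
      refine (condDistrib_ae_eq_condExp (μ := P) hX hV hB₃).symm.trans ?_
      filter_upwards [hu'] with ω hω
      simp only [hω, measureReal_def]
    have hrect : ∀ B₃, MeasurableSet B₃ → ∀ s₁ : Set (Fin k → ℝ), MeasurableSet s₁ →
        ∀ s₂ : Set ℝ, MeasurableSet s₂ →
        P (X ⁻¹' s₁ ∩ Z ⁻¹' s₂ ∩ V ⁻¹' B₃)
          = volume.restrict (Set.Icc (0:ℝ) 1) B₃ * P (X ⁻¹' s₁ ∩ Z ⁻¹' s₂) := by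
      intro B₃ hB₃ s₁ hs₁ s₂ hs₂
      have hVW : V ⁻¹' B₃ = W ⁻¹' (Set.univ ×ˢ Set.univ ×ˢ B₃) := by
        ext ω; simp [hWdef]
      have hCImul := (condIndepFun_iff_condExp_inter_preimage_eq_mul (μ := P) hZ hW).1 hCI
        s₂ (Set.univ ×ˢ Set.univ ×ˢ B₃) hs₂
        (MeasurableSet.univ.prod (MeasurableSet.univ.prod hB₃))
      rw [← hVW] at hCImul
      have hZs : MeasurableSet (Z ⁻¹' s₂) := hZ hs₂
      have hVB : MeasurableSet (V ⁻¹' B₃) := hV hB₃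
      have hXs : MeasurableSet (X ⁻¹' s₁) := hX hs₁
      have hs1mX : MeasurableSet[MeasurableSpace.comap X inferInstance] (X ⁻¹' s₁) :=
        ⟨s₁, hs₁, rfl⟩
      have hZVint : Integrable ((Z ⁻¹' s₂ ∩ V ⁻¹' B₃).indicator (fun _ => (1:ℝ))) P :=
        (integrable_const 1).indicator (hZs.inter hVB)
      have hZint : Integrable ((Z ⁻¹' s₂).indicator (fun _ => (1:ℝ))) P :=
        (integrable_const 1).indicator hZs
      set κ : ℝ := (volume.restrict (Set.Icc (0:ℝ) 1) B₃).toReal with hκdef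
      have hreal : (P (X ⁻¹' s₁ ∩ Z ⁻¹' s₂ ∩ V ⁻¹' B₃)).toReal
          = κ * (P (X ⁻¹' s₁ ∩ Z ⁻¹' s₂)).toReal := by
        have h0 : X ⁻¹' s₁ ∩ Z ⁻¹' s₂ ∩ V ⁻¹' B₃ = X ⁻¹' s₁ ∩ (Z ⁻¹' s₂ ∩ V ⁻¹' B₃) :=
          Set.inter_assoc _ _ _
        calc (P (X ⁻¹' s₁ ∩ Z ⁻¹' s₂ ∩ V ⁻¹' B₃)).toReal
            = ∫ ω in X ⁻¹' s₁, (Z ⁻¹' s₂ ∩ V ⁻¹' B₃).indicator (fun _ => (1:ℝ)) ω ∂P := by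
              rw [setIntegral_indicator (hZs.inter hVB), setIntegral_const, smul_eq_mul,
                mul_one, h0, measureReal_def]
          _ = ∫ ω in X ⁻¹' s₁,
                (P[(Z ⁻¹' s₂ ∩ V ⁻¹' B₃).indicator (fun _ => (1:ℝ))|MeasurableSpace.comap X inferInstance]) ω ∂P :=
              (setIntegral_condExp hmX hZVint hs1mX).symm
          _ = ∫ ω in X ⁻¹' s₁,
                (P[(Z ⁻¹' s₂).indicator (fun _ => (1:ℝ))|MeasurableSpace.comap X inferInstance]) ω * κ ∂P := by
              refine integral_congr_ae (ae_restrict_of_ae ?_)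
              filter_upwards [hCImul, hVconst B₃ hB₃] with ω h1 h2
              rw [h1, h2]
          _ = (∫ ω in X ⁻¹' s₁,
                (P[(Z ⁻¹' s₂).indicator (fun _ => (1:ℝ))|MeasurableSpace.comap X inferInstance]) ω ∂P) * κ := by
              rw [integral_mul_const]
          _ = (∫ ω in X ⁻¹' s₁, (Z ⁻¹' s₂).indicator (fun _ => (1:ℝ)) ω ∂P) * κ := by
              rw [setIntegral_condExp hmX hZint hs1mX]
          _ = κ * (P (X ⁻¹' s₁ ∩ Z ⁻¹' s₂)).toReal := by
              rw [setIntegral_indicator hZs, setIntegral_const, smul_eq_mul, mul_one, measureReal_def, mul_comm]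
      have hne1 : P (X ⁻¹' s₁ ∩ Z ⁻¹' s₂ ∩ V ⁻¹' B₃) ≠ ⊤ := measure_ne_top _ _
      have hne2 : volume.restrict (Set.Icc (0:ℝ) 1) B₃ * P (X ⁻¹' s₁ ∩ Z ⁻¹' s₂) ≠ ⊤ := by
        haveI : IsProbabilityMeasure (volume.restrict (Set.Icc (0:ℝ) 1)) := by
          constructor
          rw [Measure.restrict_apply MeasurableSet.univ, Set.univ_inter, Real.volume_Icc]
          norm_num
        exact ENNReal.mul_ne_top (measure_ne_top _ _) (measure_ne_top _ _)
      refine (ENNReal.toReal_eq_toReal_iff' hne1 hne2).mp ?_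
      rw [ENNReal.toReal_mul]
      exact hreal
    have hext : ∀ B₃ : Set ℝ, MeasurableSet B₃ →
        Measure.map XZ (P.restrict (V ⁻¹' B₃))
          = (volume.restrict (Set.Icc (0:ℝ) 1) B₃) • Measure.map XZ P := by
      intro B₃ hB₃
      haveI hfin1 : IsFiniteMeasure (Measure.map XZ (P.restrict (V ⁻¹' B₃))) := by
        constructor
        rw [Measure.map_apply hXZ MeasurableSet.univ]
        exact measure_lt_top _ _
      have hrect' : ∀ t ∈ Set.image2 (· ×ˢ ·) { s : Set (Fin k → ℝ) | MeasurableSet s }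
          { u : Set ℝ | MeasurableSet u },
          Measure.map XZ (P.restrict (V ⁻¹' B₃)) t
            = ((volume.restrict (Set.Icc (0:ℝ) 1) B₃) • Measure.map XZ P) t := by
        rintro _ ⟨s₁, hs₁0, s₂, hs₂0, rfl⟩
        have hs₁ : MeasurableSet s₁ := hs₁0
        have hs₂ : MeasurableSet s₂ := hs₂0
        have hpre : XZ ⁻¹' (s₁ ×ˢ s₂) = X ⁻¹' s₁ ∩ Z ⁻¹' s₂ := rfl
        rw [Measure.map_apply hXZ (hs₁.prod hs₂), Measure.smul_apply,
          Measure.map_apply hXZ (hs₁.prod hs₂), hpre,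
          Measure.restrict_apply ((hX hs₁).inter (hZ hs₂)), smul_eq_mul]
        exact hrect B₃ hB₃ s₁ hs₁ s₂ hs₂
      refine ext_of_generate_finite _ generateFrom_prod.symm isPiSystem_prod hrect' ?_
      have := hrect' (Set.univ ×ˢ Set.univ)
        ⟨Set.univ, (MeasurableSet.univ : MeasurableSet (Set.univ : Set (Fin k → ℝ))), Set.univ,
          (MeasurableSet.univ : MeasurableSet (Set.univ : Set ℝ)), rfl⟩
      rwa [Set.univ_prod_univ] at this
    have hmapV : Measure.map V P = volume.restrict (Set.Icc (0:ℝ) 1) := by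
      ext t ht
      have h := congrArg (fun μ : Measure ((Fin k → ℝ) × ℝ) => μ Set.univ) (hext t ht)
      simp only [Measure.map_apply hXZ MeasurableSet.univ, Set.preimage_univ,
        Measure.restrict_apply MeasurableSet.univ, Set.univ_inter, Measure.smul_apply,
        smul_eq_mul, measure_univ, mul_one] at h
      rw [Measure.map_apply hV ht, h]
    have hIndep : IndepFun XZ V P := by
      rw [indepFun_iff_measure_inter_preimage_eq_mul]
      intro s t hs ht
      have h := congrArg (fun μ : Measure ((Fin k → ℝ) × ℝ) => μ s) (hext t ht)
      simp only [Measure.map_apply hXZ hs, Measure.restrict_apply (hXZ hs),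
        Measure.smul_apply, smul_eq_mul] at h
      rw [h, ← hmapV, Measure.map_apply hV ht, mul_comm]
    have := (indepFun_iff_map_prod_eq_prod_map_map hXZ.aemeasurable hV.aemeasurable).1 hIndep
    rw [hmapV] at this
    exact this
  -- computation of the integral of D * A
  have hDA : ∫ ω, D ω * A ω ∂P
      = ∫ ω, ((α1 - α0 - ∑ s ∈ Finset.Icc 1 S, (ζ1 s - ζ0 s) / ((s : ℝ) + 1))
              * pi (X ω, Z ω)
            + (∑ i, (β1 i - β0 i
                - ∑ s ∈ Finset.Icc 1 S, (ξ1 s i - ξ0 s i) / ((s : ℝ) + 1)) * X ω i)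
              * pi (X ω, Z ω)
            + ∑ s ∈ Finset.Icc 1 S,
                ((ζ1 s - ζ0 s) + ∑ i, (ξ1 s i - ξ0 s i) * X ω i)
                  * (pi (X ω, Z ω)) ^ (s + 1) / ((s : ℝ) + 1)) ∂P := by
    set Φ : ((Fin k → ℝ) × ℝ) × ℝ → ℝ := fun r =>
      d (r.1.1, r.2) * (if pi r.1 > r.2 then (1:ℝ) else 0) with hΦdef
    have hΦm : Measurable Φ := by
      refine Measurable.mul (hd.comp ((measurable_fst.comp measurable_fst).prodMk
        measurable_snd)) ?_
      exact Measurable.ite (measurableSet_lt measurable_snd (hpi.comp measurable_fst))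
        measurable_const measurable_const
    have hΦXZV : ∀ ω, Φ (XZV ω) = D ω * A ω := by
      intro ω
      simp only [hΦdef, hDdef, hA, hXZVdef, hXVdef, hXZdef]
    have hΦint : Integrable Φ (Measure.map XZV P) := by
      rw [integrable_map_measure hΦm.aestronglyMeasurable hXZV.aemeasurable]
      exact hDA_int.congr (Filter.Eventually.of_forall fun ω => (hΦXZV ω).symm)
    have e1 : ∫ r, Φ r ∂(Measure.map XZV P) = ∫ ω, D ω * A ω ∂P := by
      rw [integral_map hXZV.aemeasurable hΦm.aestronglyMeasurable]
      exact integral_congr_ae (Filter.Eventually.of_forall hΦXZV)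
    -- the explicit target function of (x, z)
    set rfun : (Fin k → ℝ) × ℝ → ℝ := fun q =>
      (α1 - α0 - ∑ s ∈ Finset.Icc 1 S, (ζ1 s - ζ0 s) / ((s : ℝ) + 1)) * pi q
        + (∑ i, (β1 i - β0 i
            - ∑ s ∈ Finset.Icc 1 S, (ξ1 s i - ξ0 s i) / ((s : ℝ) + 1)) * q.1 i) * pi q
        + ∑ s ∈ Finset.Icc 1 S,
            ((ζ1 s - ζ0 s) + ∑ i, (ξ1 s i - ξ0 s i) * q.1 i)
              * (pi q) ^ (s + 1) / ((s : ℝ) + 1) with hrfundef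
    have hrfunm : Measurable rfun := by
      refine Measurable.add (Measurable.add ?_ ?_) ?_
      · exact measurable_const.mul hpi
      · exact (Finset.measurable_sum _ fun i _ =>
          measurable_const.mul ((measurable_pi_apply i).comp measurable_fst)).mul hpi
      · exact Finset.measurable_sum _ fun s _ =>
          ((measurable_const.add (Finset.measurable_sum _ fun i _ =>
            measurable_const.mul ((measurable_pi_apply i).comp measurable_fst))).mul
            (hpi.pow_const _)).div_const _
    have hinner : ∀ q : (Fin k → ℝ) × ℝ,
        ∫ v, Φ (q, v) ∂(volume.restrict (Set.Icc (0:ℝ) 1)) = rfun q := by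
      intro q
      have hp0 : 0 ≤ pi q := (hpi01 q).1
      have hp1 : pi q ≤ 1 := (hpi01 q).2
      have hstep1 : ∀ v : ℝ, Φ (q, v)
          = Set.indicator (Set.Iio (pi q)) (fun v => d (q.1, v)) v := by
        intro v
        by_cases h : v < pi q <;> simp [hΦdef, Set.indicator_apply, h]
      rw [integral_congr_ae (Filter.Eventually.of_forall hstep1),
        integral_indicator measurableSet_Iio, Measure.restrict_restrict measurableSet_Iio]
      have hset : Set.Iio (pi q) ∩ Set.Icc (0:ℝ) 1 = Set.Ico 0 (pi q) := by
        ext v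
        simp only [Set.mem_inter_iff, Set.mem_Iio, Set.mem_Icc, Set.mem_Ico]
        constructor
        · rintro ⟨h1, h2, h3⟩; exact ⟨h2, h1⟩
        · rintro ⟨h1, h2⟩; exact ⟨h2, h1, le_trans (le_of_lt h2) hp1⟩
      rw [hset, integral_Ico_eq_integral_Ioo, ← integral_Ioc_eq_integral_Ioo,
        ← intervalIntegral.integral_of_le hp0]
      have := roy_aux_integral (α1 - α0 + ∑ i, (β1 i - β0 i) * q.1 i)
        (fun s => (ζ1 s - ζ0 s) + ∑ i, (ξ1 s i - ξ0 s i) * q.1 i) S (pi q)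
      rw [show (∫ v in (0:ℝ)..(pi q), d (q.1, v))
          = ∫ v in (0:ℝ)..(pi q), ((α1 - α0 + ∑ i, (β1 i - β0 i) * q.1 i)
            + ∑ s ∈ Finset.Icc 1 S, ((ζ1 s - ζ0 s) + ∑ i, (ξ1 s i - ξ0 s i) * q.1 i)
              * (v ^ s - 1/((s:ℝ)+1))) from rfl, this]
      rw [hrfundef]
      exact roy_alg k S q.1 (pi q) (α1 - α0) (fun i => β1 i - β0 i)
        (fun s => ζ1 s - ζ0 s) (fun s i => ξ1 s i - ξ0 s i)
    have hΦint' : Integrable Φ ((Measure.map XZ P).prod (volume.restrict (Set.Icc (0:ℝ) 1))) := by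
      rw [← hprod]; exact hΦint
    calc ∫ ω, D ω * A ω ∂P = ∫ r, Φ r ∂(Measure.map XZV P) := e1.symm
      _ = ∫ r, Φ r ∂((Measure.map XZ P).prod (volume.restrict (Set.Icc (0:ℝ) 1))) := by
          rw [hprod]
      _ = ∫ q, (∫ v, Φ (q, v) ∂(volume.restrict (Set.Icc (0:ℝ) 1))) ∂(Measure.map XZ P) :=
          integral_prod _ hΦint'
      _ = ∫ q, rfun q ∂(Measure.map XZ P) :=
          integral_congr_ae (Filter.Eventually.of_forall hinner)
      _ = ∫ ω, rfun (XZ ω) ∂P := integral_map hXZ.aemeasurable hrfunm.aestronglyMeasurable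
      _ = _ := by rfl
  have part1 : ∫ ω, (Y1 ω - Y0 ω) * A ω ∂P
      = ∫ ω, ((α1 - α0 - ∑ s ∈ Finset.Icc 1 S, (ζ1 s - ζ0 s) / ((s : ℝ) + 1))
              * pi (X ω, Z ω)
            + (∑ i, (β1 i - β0 i
                - ∑ s ∈ Finset.Icc 1 S, (ξ1 s i - ξ0 s i) / ((s : ℝ) + 1)) * X ω i)
              * pi (X ω, Z ω)
            + ∑ s ∈ Finset.Icc 1 S,
                ((ζ1 s - ζ0 s) + ∑ i, (ξ1 s i - ξ0 s i) * X ω i)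
                  * (pi (X ω, Z ω)) ^ (s + 1) / ((s : ℝ) + 1)) ∂P := hUA_DA.trans hDA
  refine ⟨part1, fun hpos => ?_⟩
  -- part 2
  have hsA : {ω | A ω = 1} = XZV ⁻¹' Cstar := by
    ext ω
    rw [Set.mem_setOf_eq, hAind ω]
    by_cases h : ω ∈ XZV ⁻¹' Cstar <;> simp [Set.indicator_apply, h]
  have hsAm : MeasurableSet {ω | A ω = 1} := by rw [hsA]; exact hXZV hCstar
  have hUA : ∫ ω in {ω | A ω = 1}, (Y1 ω - Y0 ω) ∂P = ∫ ω, (Y1 ω - Y0 ω) * A ω ∂P := by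
    rw [← integral_indicator hsAm]
    congr 1
    funext ω
    rw [hAind ω, hsA]
    by_cases h : ω ∈ XZV ⁻¹' Cstar <;> simp [Set.indicator_apply, h]
  rw [ProbabilityTheory.cond, integral_smul_measure, ENNReal.toReal_inv, hUA, part1,
    smul_eq_mul]
end
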